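/- arXiv:1110.6696 — 7 statements merged into one kernel-verified Lean document; each statement's English description precedes it below -/
import Mathlib

section
/- For every r ≥ 1 there exists a constant C = C(r) > 0 with the following property: for every positive integer N, every real x with |x| ≤ N² + N, and every real h ≥ N², one has A(x + ih, r) ≤ C · h^{1/(2r) − 1} (and the same bound for A(x − ih, r)); consequently, for every m > 0 there is a constant C' = C'(r, m) > 0 such that for all ω > 0 and h ≥ N², ∫_{−ω}^{N²+N} A(x + ih, r)^m dx ≤ C' · (N² + ω) · h^{−m(1 − 1/(2r))}. -/
open MeasureTheory

/-- `A z r = (∑_{k=0}^∞ 1/|z - k²|^r)^{1/r}`. -/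
noncomputable def A (z : ℂ) (r : ℝ) : ℝ :=
  (∑' k : ℕ, 1 / ‖z - (k : ℂ) ^ 2‖ ^ r) ^ (1 / r)

lemma abs_im_ge (x h : ℝ) (n : ℕ) (hh : 0 ≤ h) :
    h ≤ ‖(x : ℂ) + h * Complex.I - (n : ℂ) ^ 2‖ := by
  have him : ((x : ℂ) + h * Complex.I - (n : ℂ) ^ 2).im = h := by
    simp [pow_two]
  calc h = |h| := (abs_of_nonneg hh).symm
    _ = |((x : ℂ) + h * Complex.I - (n : ℂ) ^ 2).im| := by rw [him]
    _ ≤ _ := Complex.abs_im_le_norm _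

lemma abs_re_ge (x h : ℝ) (n : ℕ) :
    (n : ℝ) ^ 2 - x ≤ ‖(x : ℂ) + h * Complex.I - (n : ℂ) ^ 2‖ := by
  have hre : ((x : ℂ) + h * Complex.I - (n : ℂ) ^ 2).re = x - (n : ℝ) ^ 2 := by
    simp [pow_two]
  calc (n : ℝ) ^ 2 - x ≤ |x - (n : ℝ) ^ 2| := by
        rw [abs_sub_comm]; exact le_abs_self _
    _ = |((x : ℂ) + h * Complex.I - (n : ℂ) ^ 2).re| := by rw [hre]
    _ ≤ _ := Complex.abs_re_le_norm _

lemma tsum_tail_inv_sq (K : ℕ) (hK : 1 ≤ K) :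
    ∑' k : ℕ, 1 / ((k + K : ℕ) : ℝ) ^ 2 ≤ 2 / (K : ℝ) := by
  apply Real.tsum_le_of_sum_range_le (fun n => by positivity)
  intro n
  have h1 : ∑ i ∈ Finset.range n, 1 / ((i + K : ℕ) : ℝ) ^ 2
      = ∑ j ∈ Finset.Ico K (K + n), 1 / ((j : ℕ) : ℝ) ^ 2 := by
    rw [Finset.sum_Ico_eq_sum_range]
    simp only [Nat.add_sub_cancel_left]
    exact Finset.sum_congr rfl fun i _ => by rw [Nat.add_comm]
  rw [h1]
  have h2 : Finset.Ico K (K + n) ⊆ Finset.Ioo (K - 1) (K + n) := by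
    intro j hj
    simp only [Finset.mem_Ico] at hj
    simp only [Finset.mem_Ioo]
    exact ⟨Nat.lt_of_lt_of_le (Nat.sub_lt hK one_pos) hj.1, hj.2⟩
  have h3 : ∑ j ∈ Finset.Ioo (K - 1) (K + n), 1 / ((j : ℕ) : ℝ) ^ 2
      ≤ 2 / (((K - 1 : ℕ) : ℝ) + 1) := by
    simpa only [one_div] using sum_Ioo_inv_sq_le (α := ℝ) (K - 1) (K + n)
  have h4 : (((K - 1 : ℕ) : ℝ) + 1) = (K : ℝ) := by
    rw [Nat.cast_sub hK, Nat.cast_one]; ring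
  calc ∑ j ∈ Finset.Ico K (K + n), 1 / ((j : ℕ) : ℝ) ^ 2
      ≤ ∑ j ∈ Finset.Ioo (K - 1) (K + n), 1 / ((j : ℕ) : ℝ) ^ 2 :=
        Finset.sum_le_sum_of_subset_of_nonneg h2 (fun j _ _ => by positivity)
    _ ≤ 2 / (((K - 1 : ℕ) : ℝ) + 1) := h3
    _ = 2 / (K : ℝ) := by rw [h4]

lemma key_sum (r x h : ℝ) (hr : 1 ≤ r) (hh : 1 ≤ h) (hx : x ≤ 2 * h) :
    (∑' k : ℕ, 1 / ‖(x : ℂ) + h * Complex.I - (k : ℂ) ^ 2‖ ^ r)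
      ≤ (3 + 2 ^ r) * h ^ ((1 : ℝ) / 2 - r) := by
  have h0 : (0 : ℝ) < h := lt_of_lt_of_le one_pos hh
  have hr0 : (0 : ℝ) ≤ r := le_trans zero_le_one hr
  set f : ℕ → ℝ := fun k => 1 / ‖(x : ℂ) + h * Complex.I - (k : ℂ) ^ 2‖ ^ r with hf
  have s1 : (1 : ℝ) ≤ Real.sqrt h := Real.one_le_sqrt.mpr hh
  have s0 : (0 : ℝ) < Real.sqrt h := lt_of_lt_of_le one_pos s1
  set K : ℕ := ⌈2 * Real.sqrt h⌉₊ with hKdef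
  have hK1 : 2 * Real.sqrt h ≤ (K : ℝ) := Nat.le_ceil _
  have hK2 : (K : ℝ) ≤ 3 * Real.sqrt h := by
    have := Nat.ceil_lt_add_one (by positivity : (0:ℝ) ≤ 2 * Real.sqrt h)
    have h2 : (K : ℝ) < 2 * Real.sqrt h + 1 := this
    linarith
  have hK0 : (1 : ℕ) ≤ K := by
    have : (1 : ℝ) ≤ (K : ℝ) := by nlinarith
    exact_mod_cast this
  have hKpos : (0 : ℝ) < K := by positivity
  -- lower bound on abs: h
  have habs : ∀ n : ℕ, h ≤ ‖(x : ℂ) + h * Complex.I - (n : ℂ) ^ 2‖ :=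
    fun n => abs_im_ge x h n h0.le
  -- tail estimate
  set c : ℝ := 2 ^ r * (((K : ℝ) ^ 2) ^ ((1 : ℝ) - r)) with hc
  have hcpos : 0 < c := by positivity
  have hKsq : 4 * h ≤ (K : ℝ) ^ 2 := by
    have : (2 * Real.sqrt h) ^ 2 ≤ (K : ℝ) ^ 2 := by
      apply pow_le_pow_left₀ (by positivity) hK1
    calc 4 * h = (2 * Real.sqrt h) ^ 2 := by
          rw [mul_pow]; rw [Real.sq_sqrt h0.le]; ring
      _ ≤ _ := this
  have tail_bound : ∀ k : ℕ, f (k + K) ≤ c * (1 / ((k + K : ℕ) : ℝ) ^ 2) := by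
    intro k
    set n : ℕ := k + K with hn
    have hnK : (K : ℝ) ≤ (n : ℝ) := by exact_mod_cast Nat.le_add_left K k
    have hn1 : (1 : ℝ) ≤ (n : ℝ) := le_trans (by exact_mod_cast hK0) hnK
    have hnsq : 4 * h ≤ (n : ℝ) ^ 2 := le_trans hKsq (by nlinarith)
    have habs2 : (n : ℝ) ^ 2 / 2 ≤ ‖(x : ℂ) + h * Complex.I - (n : ℂ) ^ 2‖ := by
      have := abs_re_ge x h n
      nlinarith
    have hnp : (0 : ℝ) < (n : ℝ) ^ 2 / 2 := by nlinarith
    have hrpow : ((n : ℝ) ^ 2 / 2) ^ r ≤ ‖(x : ℂ) + h * Complex.I - (n : ℂ) ^ 2‖ ^ r :=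
      Real.rpow_le_rpow hnp.le habs2 hr0
    have step1 : f n ≤ 1 / ((n : ℝ) ^ 2 / 2) ^ r := by
      apply one_div_le_one_div_of_le (Real.rpow_pos_of_pos hnp r) hrpow
    have hdiv : ((n : ℝ) ^ 2 / 2) ^ r = ((n : ℝ) ^ 2) ^ r / 2 ^ r :=
      Real.div_rpow (by positivity) (by norm_num) r
    have hsplit : ((n : ℝ) ^ 2) ^ r = ((n : ℝ) ^ 2) ^ (1:ℝ) * ((n : ℝ) ^ 2) ^ (r - 1) := by
      rw [← Real.rpow_add (by positivity)]
      norm_num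
    have hmono : ((K : ℝ) ^ 2) ^ (r - 1) ≤ ((n : ℝ) ^ 2) ^ (r - 1) :=
      Real.rpow_le_rpow (by positivity) (by nlinarith) (by linarith)
    have step2 : (n : ℝ) ^ 2 * ((K : ℝ) ^ 2) ^ (r - 1) ≤ ((n : ℝ) ^ 2) ^ r := by
      rw [hsplit, Real.rpow_one]
      exact mul_le_mul_of_nonneg_left hmono (by positivity)
    have hKr : (0 : ℝ) < ((K : ℝ) ^ 2) ^ (r - 1) := Real.rpow_pos_of_pos (by positivity) _
    have step3 : 1 / ((n : ℝ) ^ 2 / 2) ^ r ≤ 2 ^ r / ((n : ℝ) ^ 2 * ((K : ℝ) ^ 2) ^ (r - 1)) := by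
      rw [hdiv, one_div_div]
      gcongr
    have hfin : 2 ^ r / ((n : ℝ) ^ 2 * ((K : ℝ) ^ 2) ^ (r - 1)) = c * (1 / (n : ℝ) ^ 2) := by
      rw [hc]
      have hinv : ((K : ℝ) ^ 2) ^ ((1:ℝ) - r) = (((K : ℝ) ^ 2) ^ (r - 1))⁻¹ := by
        rw [show (1:ℝ) - r = -(r-1) by ring, Real.rpow_neg (by positivity)]
      rw [hinv]
      field_simp
    calc f n ≤ 1 / ((n : ℝ) ^ 2 / 2) ^ r := step1
      _ ≤ 2 ^ r / ((n : ℝ) ^ 2 * ((K : ℝ) ^ 2) ^ (r - 1)) := step3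
      _ = c * (1 / ((n : ℕ) : ℝ) ^ 2) := hfin
  -- summability
  have hsum_sq : Summable (fun k : ℕ => c * (1 / ((k + K : ℕ) : ℝ) ^ 2)) := by
    apply Summable.mul_left
    have : Summable (fun n : ℕ => 1 / ((n : ℕ) : ℝ) ^ 2) := by
      simpa using Real.summable_one_div_nat_pow.mpr one_lt_two
    exact (summable_nat_add_iff (f := fun n : ℕ => 1 / ((n : ℕ) : ℝ) ^ 2) K).mpr this
  have hfnonneg : ∀ k : ℕ, 0 ≤ f k := fun k => by positivity
  have hsum_tail : Summable (fun k : ℕ => f (k + K)) :=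
    Summable.of_nonneg_of_le (fun k => hfnonneg _) tail_bound hsum_sq
  have hsumf : Summable f := (summable_nat_add_iff (f := f) K).mp hsum_tail
  -- split
  have hsplit := Summable.sum_add_tsum_nat_add K hsumf
  -- head bound
  have hterm : ∀ k : ℕ, f k ≤ h ^ (-r) := by
    intro k
    have h1 : h ^ r ≤ ‖(x : ℂ) + h * Complex.I - (k : ℂ) ^ 2‖ ^ r :=
      Real.rpow_le_rpow h0.le (habs k) hr0
    have : f k ≤ 1 / h ^ r := one_div_le_one_div_of_le (Real.rpow_pos_of_pos h0 r) h1
    rwa [one_div, ← Real.rpow_neg h0.le] at this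
  have head : ∑ k ∈ Finset.range K, f k ≤ 3 * h ^ ((1:ℝ)/2 - r) := by
    calc ∑ k ∈ Finset.range K, f k ≤ ∑ k ∈ Finset.range K, h ^ (-r) :=
          Finset.sum_le_sum fun k _ => hterm k
      _ = (K : ℝ) * h ^ (-r) := by rw [Finset.sum_const, Finset.card_range]; ring
      _ ≤ 3 * Real.sqrt h * h ^ (-r) :=
          mul_le_mul_of_nonneg_right hK2 (Real.rpow_nonneg h0.le _)
      _ = 3 * h ^ ((1:ℝ)/2 - r) := by
          rw [Real.sqrt_eq_rpow, mul_assoc, ← Real.rpow_add h0]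
          congr 1
  -- tail total
  have tail : (∑' k : ℕ, f (k + K)) ≤ 2 ^ r * h ^ ((1:ℝ)/2 - r) := by
    have t1 : (∑' k : ℕ, f (k + K)) ≤ ∑' k : ℕ, c * (1 / ((k + K : ℕ) : ℝ) ^ 2) :=
      Summable.tsum_le_tsum tail_bound hsum_tail hsum_sq
    have t2 : (∑' k : ℕ, c * (1 / ((k + K : ℕ) : ℝ) ^ 2)) = c * ∑' k : ℕ, 1 / ((k + K : ℕ) : ℝ) ^ 2 := by
      rw [tsum_mul_left]
    have t3 : c * (∑' k : ℕ, 1 / ((k + K : ℕ) : ℝ) ^ 2) ≤ c * (2 / K) :=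
      mul_le_mul_of_nonneg_left (tsum_tail_inv_sq K hK0) hcpos.le
    have c1 : ((K : ℝ) ^ 2) ^ ((1:ℝ) - r) ≤ h ^ ((1:ℝ) - r) := by
      calc ((K : ℝ) ^ 2) ^ ((1:ℝ) - r) ≤ (4 * h) ^ ((1:ℝ) - r) :=
            Real.rpow_le_rpow_of_nonpos (by positivity) hKsq (by linarith)
        _ = 4 ^ ((1:ℝ) - r) * h ^ ((1:ℝ) - r) := Real.mul_rpow (by norm_num) h0.le
        _ ≤ 1 * h ^ ((1:ℝ) - r) := by
            apply mul_le_mul_of_nonneg_right _ (Real.rpow_nonneg h0.le _)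
            exact Real.rpow_le_one_of_one_le_of_nonpos (by norm_num) (by linarith)
        _ = h ^ ((1:ℝ) - r) := one_mul _
    have c2 : 2 / (K : ℝ) ≤ h ^ (-(1:ℝ)/2) := by
      have : 2 / (K : ℝ) ≤ 2 / (2 * Real.sqrt h) :=
        div_le_div_of_nonneg_left (by norm_num) (by positivity) hK1
      calc 2 / (K : ℝ) ≤ 2 / (2 * Real.sqrt h) := this
        _ = (Real.sqrt h)⁻¹ := by field_simp
        _ = h ^ (-(1:ℝ)/2) := by
            rw [Real.sqrt_eq_rpow, ← Real.rpow_neg h0.le]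
            norm_num
    have c3 : c * (2 / K) ≤ 2 ^ r * h ^ ((1:ℝ)/2 - r) := by
      rw [hc, mul_assoc]
      apply mul_le_mul_of_nonneg_left _ (by positivity : (0:ℝ) ≤ 2 ^ r)
      calc ((K : ℝ) ^ 2) ^ ((1:ℝ) - r) * (2 / K) ≤ h ^ ((1:ℝ) - r) * h ^ (-(1:ℝ)/2) := by
            apply mul_le_mul c1 c2 (by positivity) (Real.rpow_nonneg h0.le _)
        _ = h ^ ((1:ℝ)/2 - r) := by
            rw [← Real.rpow_add h0]; norm_num; ring_nf
    calc (∑' k : ℕ, f (k + K)) ≤ c * (2 / K) := by rw [← t2] at t3; exact le_trans t1 t3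
      _ ≤ 2 ^ r * h ^ ((1:ℝ)/2 - r) := c3
  calc (∑' k : ℕ, f k) = (∑ k ∈ Finset.range K, f k) + ∑' k : ℕ, f (k + K) := hsplit.symm
    _ ≤ 3 * h ^ ((1:ℝ)/2 - r) + 2 ^ r * h ^ ((1:ℝ)/2 - r) := add_le_add head tail
    _ = (3 + 2 ^ r) * h ^ ((1:ℝ)/2 - r) := by ring

lemma A_nonneg (z : ℂ) (r : ℝ) : 0 ≤ A z r :=
  Real.rpow_nonneg (tsum_nonneg fun k => by positivity) _

lemma A_plus_le (r x h : ℝ) (hr : 1 ≤ r) (hh : 1 ≤ h) (hx : x ≤ 2 * h) :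
    A ((x : ℂ) + h * Complex.I) r ≤ (3 + 2 ^ r) * h ^ (1 / (2 * r) - 1) := by
  have h0 : (0 : ℝ) < h := lt_of_lt_of_le one_pos hh
  have hr0 : (0 : ℝ) < r := lt_of_lt_of_le one_pos hr
  have hS := key_sum r x h hr hh hx
  have hSnn : 0 ≤ ∑' k : ℕ, 1 / ‖(x : ℂ) + h * Complex.I - (k : ℂ) ^ 2‖ ^ r :=
    tsum_nonneg fun k => by positivity
  have hB : (1 : ℝ) ≤ 3 + 2 ^ r := by
    have : (0:ℝ) < 2 ^ r := by positivity
    linarith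
  rw [A]
  calc (∑' k : ℕ, 1 / ‖(x : ℂ) + h * Complex.I - (k : ℂ) ^ 2‖ ^ r) ^ (1/r)
      ≤ ((3 + 2 ^ r) * h ^ ((1:ℝ)/2 - r)) ^ (1/r) :=
        Real.rpow_le_rpow hSnn hS (by positivity)
    _ = (3 + 2 ^ r) ^ (1/r) * (h ^ ((1:ℝ)/2 - r)) ^ (1/r) :=
        Real.mul_rpow (by linarith) (Real.rpow_nonneg h0.le _)
    _ = (3 + 2 ^ r) ^ (1/r) * h ^ (1 / (2*r) - 1) := by
        rw [← Real.rpow_mul h0.le]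
        congr 1
        field_simp
    _ ≤ (3 + 2 ^ r) * h ^ (1 / (2*r) - 1) := by
        apply mul_le_mul_of_nonneg_right _ (Real.rpow_nonneg h0.le _)
        calc (3 + 2 ^ r) ^ (1/r) ≤ (3 + 2 ^ r) ^ (1:ℝ) :=
              Real.rpow_le_rpow_of_exponent_le hB (by rw [div_le_one hr0]; linarith)
          _ = 3 + 2 ^ r := Real.rpow_one _

lemma A_minus_eq (x h r : ℝ) :
    A ((x : ℂ) - h * Complex.I) r = A ((x : ℂ) + h * Complex.I) r := by
  unfold A
  congr 1
  apply tsum_congr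
  intro k
  have hconj : (x : ℂ) - h * Complex.I - (k : ℂ) ^ 2
      = (starRingEnd ℂ) ((x : ℂ) + h * Complex.I - (k : ℂ) ^ 2) := by
    simp [map_sub, map_add, map_mul, map_pow, Complex.conj_I, Complex.conj_ofReal]
    ring
  rw [hconj, Complex.norm_conj]

theorem stmt0 (r : ℝ) (hr : 1 ≤ r) :
    (∃ C : ℝ, 0 < C ∧ ∀ N : ℕ, 0 < N → ∀ x : ℝ, |x| ≤ (N : ℝ) ^ 2 + N →
      ∀ h : ℝ, (N : ℝ) ^ 2 ≤ h →
        A ((x : ℂ) + h * Complex.I) r ≤ C * h ^ (1 / (2 * r) - 1) ∧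
        A ((x : ℂ) - h * Complex.I) r ≤ C * h ^ (1 / (2 * r) - 1)) ∧
    (∀ m : ℝ, 0 < m → ∃ C' : ℝ, 0 < C' ∧ ∀ N : ℕ, 0 < N → ∀ ω : ℝ, 0 < ω →
      ∀ h : ℝ, (N : ℝ) ^ 2 ≤ h →
        (∫ x in (-ω)..((N : ℝ) ^ 2 + N), A ((x : ℂ) + h * Complex.I) r ^ m) ≤
          C' * ((N : ℝ) ^ 2 + ω) * h ^ (-(m * (1 - 1 / (2 * r))))) := by
  have hr0 : (0 : ℝ) < r := lt_of_lt_of_le one_pos hr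
  constructor
  · refine ⟨3 + 2 ^ r, by positivity, ?_⟩
    intro N hN x hx h hh
    have hN1 : (1 : ℝ) ≤ (N : ℝ) := by exact_mod_cast hN
    have h1 : (1 : ℝ) ≤ h := le_trans (by nlinarith) hh
    have hx2 : x ≤ 2 * h := by
      have hb : (N : ℝ) ^ 2 + N ≤ 2 * h := by nlinarith
      calc x ≤ |x| := le_abs_self x
        _ ≤ (N : ℝ) ^ 2 + N := hx
        _ ≤ 2 * h := hb
    exact ⟨A_plus_le r x h hr h1 hx2, by
      rw [A_minus_eq]; exact A_plus_le r x h hr h1 hx2⟩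
  · intro m hm
    refine ⟨2 * (3 + 2 ^ r) ^ m, by positivity, ?_⟩
    intro N hN ω hω h hh
    have hN1 : (1 : ℝ) ≤ (N : ℝ) := by exact_mod_cast hN
    have h1 : (1 : ℝ) ≤ h := le_trans (by nlinarith) hh
    have h0 : (0 : ℝ) < h := lt_of_lt_of_le one_pos h1
    set b : ℝ := (N : ℝ) ^ 2 + N with hb
    set e : ℝ := -(m * (1 - 1 / (2 * r))) with he
    have hab : -ω ≤ b := by nlinarith
    have hNω : (0 : ℝ) < (N : ℝ) ^ 2 + ω := by positivity
    have hepos : (0 : ℝ) < h ^ e := Real.rpow_pos_of_pos h0 e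
    have pointwise : ∀ x ∈ Set.Icc (-ω) b,
        A ((x : ℂ) + h * Complex.I) r ^ m ≤ (3 + 2 ^ r) ^ m * h ^ e := by
      intro x hxmem
      have hxle : x ≤ 2 * h := by
        have := hxmem.2
        rw [hb] at this
        nlinarith
      have hA := A_plus_le r x h hr h1 hxle
      have hpow : A ((x : ℂ) + h * Complex.I) r ^ m
          ≤ ((3 + 2 ^ r) * h ^ (1 / (2 * r) - 1)) ^ m :=
        Real.rpow_le_rpow (A_nonneg _ _) hA hm.le
      rw [Real.mul_rpow (by positivity) (Real.rpow_nonneg h0.le _),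
        ← Real.rpow_mul h0.le,
        show (1 / (2 * r) - 1) * m = e by rw [he]; ring] at hpow
      exact hpow
    by_cases hint : IntervalIntegrable
        (fun x : ℝ => A ((x : ℂ) + h * Complex.I) r ^ m) volume (-ω) b
    · have hmono := intervalIntegral.integral_mono_on hab hint
        intervalIntegrable_const pointwise
      rw [intervalIntegral.integral_const, smul_eq_mul] at hmono
      calc (∫ x in (-ω)..b, A ((x : ℂ) + h * Complex.I) r ^ m)
          ≤ (b - -ω) * ((3 + 2 ^ r) ^ m * h ^ e) := hmono
        _ ≤ (2 * ((N : ℝ) ^ 2 + ω)) * ((3 + 2 ^ r) ^ m * h ^ e) := by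
            apply mul_le_mul_of_nonneg_right _ (by positivity)
            rw [hb]; nlinarith
        _ = 2 * (3 + 2 ^ r) ^ m * ((N : ℝ) ^ 2 + ω) * h ^ e := by ring
    · rw [intervalIntegral.integral_undef hint]
      have hC : (0 : ℝ) < 2 * (3 + 2 ^ r) ^ m := by positivity
      exact le_of_lt (mul_pos (mul_pos hC hNω) hepos)
end

section
/- For every fixed r > 1, the integral ∫_{−∞}^{∞} A(−ω + iy, r)² dy tends to 0 as ω → ∞; moreover ∫_{−∞}^{∞} A(−ω + iy, 1)³ dy tends to 0 as ω → ∞. -/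
open MeasureTheory Filter

namespace Stmt2Aux

open Real ENNReal Topology

noncomputable def zz (ω y : ℝ) : ℂ := (-ω : ℝ) + (y : ℝ) * Complex.I

noncomputable def sig (ω : ℝ) (k : ℕ) (y : ℝ) : ℝ≥0∞ :=
  (ENNReal.ofReal (‖zz ω y - (k : ℂ) ^ 2‖))⁻¹

lemma kcast (k : ℕ) : ((k : ℂ)) ^ 2 = (((k : ℝ) ^ 2 : ℝ) : ℂ) := by
  push_cast
  ring

lemma zz_re (ω y : ℝ) (k : ℕ) : (zz ω y - (k : ℂ) ^ 2).re = -(ω + (k : ℝ) ^ 2) := by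
  rw [kcast]
  simp only [zz, Complex.sub_re, Complex.add_re, Complex.ofReal_re, Complex.mul_re,
    Complex.I_re, Complex.I_im, Complex.ofReal_im, mul_zero, mul_one, zero_mul, sub_zero,
    zero_sub, zero_mul]
  ring

lemma zz_im (ω y : ℝ) (k : ℕ) : (zz ω y - (k : ℂ) ^ 2).im = y := by
  rw [kcast]
  simp only [zz, Complex.sub_im, Complex.add_im, Complex.ofReal_im, Complex.mul_im,
    Complex.I_re, Complex.I_im, Complex.ofReal_re, mul_zero, mul_one, zero_mul, add_zero,
    zero_add, sub_zero]

lemma abs_lb {ω : ℝ} (hω : 0 < ω) (k : ℕ) (y : ℝ) :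
    ω + (k : ℝ) ^ 2 ≤ ‖zz ω y - (k : ℂ) ^ 2‖ := by
  have h1 : |(zz ω y - (k : ℂ) ^ 2).re| ≤ ‖zz ω y - (k : ℂ) ^ 2‖ :=
    Complex.abs_re_le_norm _
  rw [zz_re, abs_neg, abs_of_pos (by positivity)] at h1
  exact h1

lemma abs_pos' {ω : ℝ} (hω : 0 < ω) (k : ℕ) (y : ℝ) :
    0 < ‖zz ω y - (k : ℂ) ^ 2‖ :=
  lt_of_lt_of_le (by positivity) (abs_lb hω k y)

lemma sig_ne_zero {ω : ℝ} (hω : 0 < ω) (k : ℕ) (y : ℝ) : sig ω k y ≠ 0 := by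
  simp [sig, ENNReal.inv_ne_zero]

lemma sig_ne_top {ω : ℝ} (hω : 0 < ω) (k : ℕ) (y : ℝ) : sig ω k y ≠ ⊤ := by
  simp only [sig, ne_eq, ENNReal.inv_eq_top]
  exact (ENNReal.ofReal_pos.mpr (abs_pos' hω k y)).ne'

lemma sig_le {ω : ℝ} (hω : 0 < ω) (k : ℕ) (y : ℝ) :
    sig ω k y ≤ (ENNReal.ofReal (ω + (k : ℝ) ^ 2))⁻¹ :=
  ENNReal.inv_le_inv.mpr (ENNReal.ofReal_le_ofReal (abs_lb hω k y))

lemma sig_sq {ω : ℝ} (hω : 0 < ω) (k : ℕ) (y : ℝ) :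
    sig ω k y ^ (2 : ℝ) = ENNReal.ofReal (((ω + (k : ℝ) ^ 2) ^ 2 + y ^ 2)⁻¹) := by
  have habs : 0 < ‖zz ω y - (k : ℂ) ^ 2‖ := abs_pos' hω k y
  have hsq : ‖zz ω y - (k : ℂ) ^ 2‖ ^ (2 : ℕ) = (ω + (k : ℝ) ^ 2) ^ 2 + y ^ 2 := by
    rw [Complex.sq_norm, Complex.normSq_apply, zz_re, zz_im]
    ring
  have h2 : ‖zz ω y - (k : ℂ) ^ 2‖ ^ (2 : ℝ) = (ω + (k : ℝ) ^ 2) ^ 2 + y ^ 2 := by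
    rw [show (2 : ℝ) = ((2 : ℕ) : ℝ) by norm_num, Real.rpow_natCast]
    exact hsq
  rw [sig, ENNReal.inv_rpow, ENNReal.ofReal_rpow_of_pos habs, h2,
    ← ENNReal.ofReal_inv_of_pos (by positivity)]

lemma sig_meas (ω : ℝ) (k : ℕ) : Measurable (sig ω k) := by
  apply Measurable.inv
  apply ENNReal.measurable_ofReal.comp
  have hc : Continuous fun y : ℝ => zz ω y - (k : ℂ) ^ 2 := by
    unfold zz
    continuity
  exact (continuous_norm.comp hc).measurable

/-- ℓ^p monotonicity for ENNReal sums. -/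
lemma tsum_rpow_le {f : ℕ → ℝ≥0∞} {p q : ℝ} (hp : 0 < p) (hpq : p ≤ q) :
    ∑' k, f k ^ q ≤ (∑' k, f k ^ p) ^ (q / p) := by
  set T := ∑' k, f k ^ p with hT
  have hq : 0 < q := lt_of_lt_of_le hp hpq
  by_cases hTtop : T = ⊤
  · rw [hTtop, ENNReal.top_rpow_of_pos (by positivity)]
    exact le_top
  by_cases hT0 : T = 0
  · have hf : ∀ k, f k = 0 := by
      intro k
      have h1 : f k ^ p ≤ T := ENNReal.le_tsum k
      rw [hT0, le_zero_iff] at h1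
      rcases ENNReal.rpow_eq_zero_iff.mp h1 with ⟨h, _⟩ | ⟨h, hneg⟩
      · exact h
      · exact absurd hneg (not_lt.mpr hp.le)
    have : ∑' k, f k ^ q = 0 := by
      simp [hf, ENNReal.zero_rpow_of_pos hq]
    rw [this]
    exact zero_le
  have key : ∀ k, f k ^ q ≤ f k ^ p * T ^ ((q - p) / p) := by
    intro k
    have hle : f k ^ p ≤ T := ENNReal.le_tsum k
    have hfk_top : f k ≠ ⊤ := by
      intro h
      rw [h, ENNReal.top_rpow_of_pos hp] at hle
      exact hTtop (top_le_iff.mp hle)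
    by_cases hfk0 : f k = 0
    · simp [hfk0, ENNReal.zero_rpow_of_pos hq]
    · have h1 : f k ≤ T ^ (1 / p) := by
        have h2 := ENNReal.rpow_le_rpow hle (by positivity : (0:ℝ) ≤ 1 / p)
        rwa [← ENNReal.rpow_mul, mul_one_div, div_self hp.ne', ENNReal.rpow_one] at h2
      have h2 : f k ^ (q - p) ≤ T ^ ((q - p) / p) := by
        have h2' := ENNReal.rpow_le_rpow h1 (by linarith : (0:ℝ) ≤ q - p)
        have h2'' : (T ^ (1 / p)) ^ (q - p) = T ^ ((q - p) / p) := by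
          rw [← ENNReal.rpow_mul]
          congr 1
          ring
        rwa [h2''] at h2'
      have h3 : f k ^ q = f k ^ p * f k ^ (q - p) := by
        rw [← ENNReal.rpow_add _ _ hfk0 hfk_top]
        congr 1
        ring
      rw [h3]
      exact mul_le_mul_right h2 _
  calc ∑' k, f k ^ q ≤ ∑' k, f k ^ p * T ^ ((q - p) / p) := ENNReal.tsum_le_tsum key
    _ = T * T ^ ((q - p) / p) := ENNReal.tsum_mul_right
    _ = T ^ (1 + (q - p) / p) := by
        rw [ENNReal.rpow_add _ _ hT0 hTtop, ENNReal.rpow_one]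
    _ = T ^ (q / p) := by
        congr 1
        field_simp
        ring

/-- Hölder's inequality for ENNReal sums. -/
lemma tsum_holder (f g : ℕ → ℝ≥0∞) {p q : ℝ} (hpq : Real.HolderConjugate p q) :
    ∑' k, f k * g k ≤ (∑' k, f k ^ p) ^ (1 / p) * (∑' k, g k ^ q) ^ (1 / q) := by
  have h := ENNReal.lintegral_mul_le_Lp_mul_Lq Measure.count hpq
    (measurable_of_countable f).aemeasurable (measurable_of_countable g).aemeasurable
  simpa [lintegral_count] using h

/-- Integral of `(a² + y²)⁻¹` over `ℝ`. -/
lemma lintegral_inv_sq_add {a : ℝ} (ha : 0 < a) :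
    ∫⁻ y : ℝ, ENNReal.ofReal ((a ^ 2 + y ^ 2)⁻¹) = ENNReal.ofReal (π / a) := by
  have hfun : ∀ y : ℝ, (a ^ 2 + y ^ 2)⁻¹ = (a ^ 2)⁻¹ * (1 + (y / a) ^ 2)⁻¹ := by
    intro y
    rw [← mul_inv]
    congr 1
    field_simp
  have hint : Integrable (fun y : ℝ => (a ^ 2 + y ^ 2)⁻¹) := by
    have h2 : Integrable (fun y : ℝ => (1 + (y / a) ^ 2)⁻¹) :=
      integrable_inv_one_add_sq.comp_div ha.ne'
    have h3 := h2.const_mul ((a ^ 2)⁻¹)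
    refine h3.congr (Eventually.of_forall fun y => ?_)
    exact (hfun y).symm
  rw [← MeasureTheory.ofReal_integral_eq_lintegral_ofReal hint
    (Eventually.of_forall fun y => by positivity)]
  congr 1
  have : ∫ y : ℝ, (a ^ 2 + y ^ 2)⁻¹ = ∫ y : ℝ, (a ^ 2)⁻¹ * (1 + (y / a) ^ 2)⁻¹ := by
    congr 1
    funext y
    exact hfun y
  rw [this, MeasureTheory.integral_const_mul,
    MeasureTheory.Measure.integral_comp_div (fun t : ℝ => (1 + t ^ 2)⁻¹) a,
    integral_univ_inv_one_add_sq, abs_of_pos ha, smul_eq_mul]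
  field_simp

lemma summable_aux {c : ℝ} (hc : 1 / 2 < c) :
    Summable (fun k : ℕ => (1 + (k : ℝ) ^ 2) ^ (-c)) := by
  have hc0 : (0 : ℝ) < c := by linarith
  have hbase : Summable (fun k : ℕ => ((k : ℝ) + 1) ^ (-(2 * c))) := by
    have h1 : Summable (fun k : ℕ => ((k : ℝ)) ^ (-(2 * c))) :=
      Real.summable_nat_rpow.mpr (by linarith)
    have h2 := (summable_nat_add_iff 1).mpr h1
    refine h2.congr fun k => ?_
    push_cast
    ring_nf
  have hle : ∀ k : ℕ, (1 + (k : ℝ) ^ 2) ^ (-c) ≤ (2 : ℝ) ^ c * ((k : ℝ) + 1) ^ (-(2 * c)) := by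
    intro k
    have hk1 : (0 : ℝ) < (k : ℝ) + 1 := by positivity
    have hA : (0 : ℝ) < ((k : ℝ) + 1) ^ 2 / 2 := by positivity
    have hAle : ((k : ℝ) + 1) ^ 2 / 2 ≤ 1 + (k : ℝ) ^ 2 := by nlinarith [sq_nonneg ((k : ℝ) - 1)]
    have m1 : (((k : ℝ) + 1) ^ 2 / 2) ^ c ≤ (1 + (k : ℝ) ^ 2) ^ c :=
      Real.rpow_le_rpow hA.le hAle hc0.le
    have step1 : (1 + (k : ℝ) ^ 2) ^ (-c) ≤ (((k : ℝ) + 1) ^ 2 / 2) ^ (-c) := by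
      rw [Real.rpow_neg (by positivity), Real.rpow_neg hA.le]
      exact inv_anti₀ (Real.rpow_pos_of_pos hA c) m1
    have step2 : (((k : ℝ) + 1) ^ 2 / 2) ^ (-c) = (2 : ℝ) ^ c * ((k : ℝ) + 1) ^ (-(2 * c)) := by
      rw [Real.div_rpow (by positivity) (by norm_num : (0:ℝ) ≤ 2),
        ← Real.rpow_natCast ((k : ℝ) + 1) 2, ← Real.rpow_mul hk1.le,
        Real.rpow_neg (by norm_num : (0:ℝ) ≤ 2), div_inv_eq_mul, mul_comm]
      congr 1
      push_cast
      ring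
    exact step1.trans (le_of_eq step2)
  refine Summable.of_nonneg_of_le (fun k => Real.rpow_nonneg (by positivity) _) hle
    (hbase.mul_left _)

lemma rpow_neg_anti {x y : ℝ≥0∞} (h : x ≤ y) {c : ℝ} (hc : 0 ≤ c) : y ^ (-c) ≤ x ^ (-c) := by
  rw [ENNReal.rpow_neg, ENNReal.rpow_neg]
  exact ENNReal.inv_le_inv.mpr (ENNReal.rpow_le_rpow h hc)

lemma tsum_tendsto {c : ℝ} (hc : 1 / 2 < c) :
    Tendsto (fun ω : ℝ => ∑' k : ℕ, (ENNReal.ofReal (ω + (k : ℝ) ^ 2)) ^ (-c)) atTop (𝓝 0) := by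
  have hc0 : (0 : ℝ) < c := by linarith
  have key := MeasureTheory.tendsto_lintegral_filter_of_dominated_convergence
    (μ := Measure.count (α := ℕ)) (l := atTop (α := ℝ))
    (F := fun (ω : ℝ) (k : ℕ) => (ENNReal.ofReal (ω + (k : ℝ) ^ 2)) ^ (-c))
    (f := fun _ => (0 : ℝ≥0∞))
    (bound := fun k : ℕ => (ENNReal.ofReal (1 + (k : ℝ) ^ 2)) ^ (-c))
    (Eventually.of_forall fun ω => measurable_of_countable _)
    ((eventually_ge_atTop (1 : ℝ)).mono fun ω hω => ae_of_all _ fun k =>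
      rpow_neg_anti (ENNReal.ofReal_le_ofReal (by linarith)) hc0.le)
    (by
      rw [lintegral_count]
      have heq : ∀ k : ℕ, (ENNReal.ofReal (1 + (k : ℝ) ^ 2)) ^ (-c)
          = ENNReal.ofReal ((1 + (k : ℝ) ^ 2) ^ (-c)) := fun k =>
        ENNReal.ofReal_rpow_of_pos (by positivity)
      rw [tsum_congr heq, ← ENNReal.ofReal_tsum_of_nonneg
        (fun k => Real.rpow_nonneg (by positivity) _) (summable_aux hc)]
      exact ENNReal.ofReal_ne_top)
    (ae_of_all _ fun k => by
      have h1 : Tendsto (fun ω : ℝ => ω + (k : ℝ) ^ 2) atTop atTop :=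
        tendsto_atTop_add_const_right _ _ tendsto_id
      have h2 : Tendsto (fun ω : ℝ => ENNReal.ofReal (ω + (k : ℝ) ^ 2)) atTop (𝓝 ⊤) :=
        ENNReal.tendsto_ofReal_atTop.comp h1
      have h3 := ((ENNReal.continuous_rpow_const (y := -c)).tendsto ⊤).comp h2
      rwa [ENNReal.top_rpow_of_neg (by linarith)] at h3)
  simpa [lintegral_count] using key

lemma sig_rpow_meas (ω : ℝ) (k : ℕ) (c : ℝ) : Measurable fun y => sig ω k y ^ c :=
  (ENNReal.continuous_rpow_const.measurable).comp (sig_meas ω k)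

lemma core {s p q α : ℝ} (hs : 0 < s) (hp : 1 < p) (hq : Real.HolderConjugate p q)
    (hα : 0 < α) (hβ : 1 / 2 < α * q) (hm : 2 ≤ s * p) (hγ : 1 / 2 < s * p - 1 - α * p) :
    Tendsto (fun ω : ℝ => ∫⁻ y : ℝ, (∑' k : ℕ, sig ω k y ^ s) ^ p) atTop (𝓝 0) := by
  have hp0 : (0:ℝ) < p := by linarith
  have hq1 : 1 < q := hq.symm.lt
  have hq0 : (0:ℝ) < q := by linarith
  set W := fun ω : ℝ => ∑' k : ℕ, (ENNReal.ofReal (ω + (k:ℝ)^2)) ^ (-(α * q)) with hW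
  set D := fun ω : ℝ => ∑' k : ℕ, (ENNReal.ofReal (ω + (k:ℝ)^2)) ^ (-(s * p - 1 - α * p))
    with hD
  have hWto : Tendsto W atTop (𝓝 0) := tsum_tendsto hβ
  have hDto : Tendsto D atTop (𝓝 0) := tsum_tendsto hγ
  have hBto : Tendsto (fun ω => W ω ^ (p/q) * (ENNReal.ofReal π * D ω)) atTop (𝓝 0) := by
    have h1 : Tendsto (fun ω => W ω ^ (p/q)) atTop (𝓝 0) := by
      have h1' := ((ENNReal.continuous_rpow_const (y := p/q)).tendsto 0).comp hWto
      have h0 : ((0 : ℝ≥0∞)) ^ (p/q) = 0 := ENNReal.zero_rpow_of_pos (by positivity)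
      rw [Function.comp_def] at h1'
      rwa [h0] at h1'
    have h2 : Tendsto (fun ω => ENNReal.ofReal π * D ω) atTop (𝓝 0) := by
      have h2' := ENNReal.Tendsto.const_mul (a := ENNReal.ofReal π) hDto
        (Or.inr ENNReal.ofReal_ne_top)
      simpa using h2'
    have h3 := ENNReal.Tendsto.mul h1 (Or.inr (by simp)) h2 (Or.inr (by simp))
    simpa using h3
  refine tendsto_of_tendsto_of_tendsto_of_le_of_le' tendsto_const_nhds hBto
    (Eventually.of_forall fun ω => zero_le) ?_
  filter_upwards [eventually_ge_atTop (1:ℝ)] with ω hω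
  have hω0 : (0:ℝ) < ω := by linarith
  have ha : ∀ k : ℕ, (1:ℝ) ≤ ω + (k:ℝ)^2 := fun k => by
    have := sq_nonneg (k:ℝ)
    linarith
  set aE := fun k : ℕ => ENNReal.ofReal (ω + (k:ℝ)^2) with haE
  have haE1 : ∀ k, (1:ℝ≥0∞) ≤ aE k := fun k => by
    rw [haE]
    exact ENNReal.one_le_ofReal.mpr (ha k)
  have haE0 : ∀ k, aE k ≠ 0 := fun k => (lt_of_lt_of_le zero_lt_one (haE1 k)).ne'
  have haEtop : ∀ k, aE k ≠ ⊤ := fun k => ENNReal.ofReal_ne_top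
  have haEp0 : ∀ (k) (c : ℝ), aE k ^ c ≠ 0 := fun k c => by
    simp [ENNReal.rpow_eq_zero_iff, haE0 k, haEtop k]
  have haEptop : ∀ (k) (c : ℝ), aE k ^ c ≠ ⊤ := fun k c => by
    simp [ENNReal.rpow_eq_top_iff, haE0 k, haEtop k]
  -- pointwise Hölder
  have hpt : ∀ y : ℝ, (∑' k, sig ω k y ^ s) ^ p ≤
      W ω ^ (p/q) * ∑' k, aE k ^ (α*p) * sig ω k y ^ (s*p) := by
    intro y
    have hsplit : ∀ k, sig ω k y ^ s = (aE k ^ (-α)) * (aE k ^ α * sig ω k y ^ s) := by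
      intro k
      rw [← mul_assoc, ENNReal.rpow_neg, ENNReal.inv_mul_cancel (haEp0 k α) (haEptop k α),
        one_mul]
    calc (∑' k, sig ω k y ^ s) ^ p
        = (∑' k, (aE k ^ (-α)) * (aE k ^ α * sig ω k y ^ s)) ^ p := by
          rw [tsum_congr hsplit]
      _ ≤ ((∑' k, (aE k ^ (-α)) ^ q) ^ (1/q)
            * (∑' k, (aE k ^ α * sig ω k y ^ s) ^ p) ^ (1/p)) ^ p :=
          ENNReal.rpow_le_rpow (tsum_holder _ _ hq.symm) hp0.le
      _ = (∑' k, (aE k ^ (-α)) ^ q) ^ (p/q) * ∑' k, (aE k ^ α * sig ω k y ^ s) ^ p := by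
          rw [ENNReal.mul_rpow_of_nonneg _ _ hp0.le, ← ENNReal.rpow_mul, ← ENNReal.rpow_mul,
            show (1/q) * p = p/q by ring, show (1/p) * p = 1 by field_simp, ENNReal.rpow_one]
      _ = W ω ^ (p/q) * ∑' k, aE k ^ (α*p) * sig ω k y ^ (s*p) := by
          congr 1
          · congr 1
            rw [hW]
            refine tsum_congr fun k => ?_
            rw [← ENNReal.rpow_mul]
            congr 1
            ring
          · refine tsum_congr fun k => ?_
            rw [ENNReal.mul_rpow_of_nonneg _ _ hp0.le, ← ENNReal.rpow_mul, ← ENNReal.rpow_mul,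
              mul_comm s p]
  -- integral bound per k
  have hint : ∀ k, (∫⁻ y, sig ω k y ^ (s*p)) ≤ ENNReal.ofReal π * aE k ^ (1 - s*p) := by
    intro k
    have hstep : ∀ y, sig ω k y ^ (s*p) ≤ aE k ^ (2 - s*p) * sig ω k y ^ (2:ℝ) := by
      intro y
      have h1 : sig ω k y ^ (s*p) = sig ω k y ^ (s*p - 2) * sig ω k y ^ (2:ℝ) := by
        rw [← ENNReal.rpow_add _ _ (sig_ne_zero hω0 k y) (sig_ne_top hω0 k y)]
        congr 1
        ring
      have h2 : sig ω k y ^ (s*p - 2) ≤ ((aE k)⁻¹) ^ (s*p-2) :=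
        ENNReal.rpow_le_rpow (sig_le hω0 k y) (by linarith)
      have h3 : ((aE k)⁻¹) ^ (s*p-2) = aE k ^ (2 - s*p) := by
        rw [ENNReal.inv_rpow, ← ENNReal.rpow_neg]
        congr 1
        ring
      rw [h1]
      exact mul_le_mul_left (h2.trans_eq h3) _
    calc (∫⁻ y, sig ω k y ^ (s*p))
        ≤ ∫⁻ y, aE k ^ (2-s*p) * sig ω k y ^ (2:ℝ) := lintegral_mono hstep
      _ = aE k ^ (2-s*p) * ∫⁻ y, sig ω k y ^ (2:ℝ) :=
          lintegral_const_mul _ (sig_rpow_meas ω k 2)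
      _ = aE k ^ (2-s*p) * ENNReal.ofReal (π / (ω + (k:ℝ)^2)) := by
          rw [show (∫⁻ y, sig ω k y ^ (2:ℝ)) = ∫⁻ y, ENNReal.ofReal (((ω + (k:ℝ)^2)^2 + y^2)⁻¹)
              from lintegral_congr fun y => sig_sq hω0 k y,
            lintegral_inv_sq_add (by positivity : (0:ℝ) < ω + (k:ℝ)^2)]
      _ = ENNReal.ofReal π * aE k ^ (1 - s*p) := by
          rw [div_eq_mul_inv, ENNReal.ofReal_mul Real.pi_pos.le,
            ENNReal.ofReal_inv_of_pos (by positivity : (0:ℝ) < ω + (k:ℝ)^2)]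
          simp only [haE]
          rw [show (ENNReal.ofReal (ω+(k:ℝ)^2))⁻¹ = ENNReal.ofReal (ω+(k:ℝ)^2) ^ (-1:ℝ) from
            (ENNReal.rpow_neg_one _).symm, mul_left_comm]
          congr 1
          rw [← ENNReal.rpow_add _ _ (by simpa [haE] using haE0 k) ENNReal.ofReal_ne_top]
          congr 1
          ring
  have hmeasv : ∀ k : ℕ, Measurable fun y => aE k ^ (α*p) * sig ω k y ^ (s*p) :=
    fun k => (sig_rpow_meas ω k (s*p)).const_mul _
  calc (∫⁻ y, (∑' k, sig ω k y ^ s) ^ p)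
      ≤ ∫⁻ y, W ω ^ (p/q) * ∑' k, aE k ^ (α*p) * sig ω k y ^ (s*p) := lintegral_mono hpt
    _ = W ω ^ (p/q) * ∫⁻ y, ∑' k, aE k ^ (α*p) * sig ω k y ^ (s*p) :=
        lintegral_const_mul _ (Measurable.ennreal_tsum hmeasv)
    _ = W ω ^ (p/q) * ∑' k, ∫⁻ y, aE k ^ (α*p) * sig ω k y ^ (s*p) := by
        rw [lintegral_tsum fun k => (hmeasv k).aemeasurable]
    _ = W ω ^ (p/q) * ∑' k, aE k ^ (α*p) * ∫⁻ y, sig ω k y ^ (s*p) := by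
        congr 1
        exact tsum_congr fun k => lintegral_const_mul _ (sig_rpow_meas ω k (s*p))
    _ ≤ W ω ^ (p/q) * ∑' k, aE k ^ (α*p) * (ENNReal.ofReal π * aE k ^ (1 - s*p)) :=
        mul_le_mul_right (ENNReal.tsum_le_tsum fun k => mul_le_mul_right (hint k) _) _
    _ = W ω ^ (p/q) * (ENNReal.ofReal π * D ω) := by
        congr 1
        rw [hD, ← ENNReal.tsum_mul_left]
        refine tsum_congr fun k => ?_
        simp only [haE]
        rw [mul_left_comm]
        congr 1
        rw [← ENNReal.rpow_add _ _ (by simpa [haE] using haE0 k) ENNReal.ofReal_ne_top]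
        congr 1
        ring

lemma glue {r e : ℝ} (hr : 1 ≤ r) (he : 0 < e)
    (K : ℝ → ℝ≥0∞) (hK : Tendsto K atTop (𝓝 0))
    (hbound : ∀ᶠ ω : ℝ in atTop, (∫⁻ y : ℝ, (∑' k : ℕ, sig ω k y ^ r) ^ e) ≤ K ω) :
    Tendsto (fun ω : ℝ => ∫ y : ℝ,
        (∑' k : ℕ, 1 / ‖zz ω y - (k : ℂ) ^ 2‖ ^ r) ^ e) atTop (𝓝 0) := by
  have hKfin : ∀ᶠ ω : ℝ in atTop, K ω < 1 := hK.eventually_lt_const zero_lt_one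
  have hKto : Tendsto (fun ω => (K ω).toReal) atTop (𝓝 0) := by
    have h := (ENNReal.tendsto_toReal (by simp : (0:ℝ≥0∞) ≠ ⊤)).comp hK
    simpa [Function.comp_def] using h
  refine squeeze_zero' ?_ ?_ hKto
  · exact Eventually.of_forall fun ω =>
      integral_nonneg fun y => Real.rpow_nonneg (tsum_nonneg fun k => by positivity) e
  filter_upwards [eventually_ge_atTop (1:ℝ), hbound, hKfin] with ω hω1 hb hfin
  have hω0 : (0:ℝ) < ω := by linarith
  have hsumm : ∀ y : ℝ, Summable fun k : ℕ => 1 / ‖zz ω y - (k:ℂ)^2‖ ^ r := by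
    intro y
    have hcmp : Summable fun k : ℕ => (1 + (k:ℝ)^2)⁻¹ :=
      (summable_aux (by norm_num : (1:ℝ)/2 < 1)).congr fun k => by
        rw [Real.rpow_neg_one]
    refine Summable.of_nonneg_of_le (fun k => by positivity) (fun k => ?_) hcmp
    have ht : 0 < ‖zz ω y - (k:ℂ)^2‖ := abs_pos' hω0 k y
    have ht1 : (1:ℝ) + (k:ℝ)^2 ≤ ‖zz ω y - (k:ℂ)^2‖ := by
      have := abs_lb hω0 k y
      linarith
    have htr : (1:ℝ) + (k:ℝ)^2 ≤ ‖zz ω y - (k:ℂ)^2‖ ^ r := by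
      calc (1:ℝ) + (k:ℝ)^2 ≤ ‖zz ω y - (k:ℂ)^2‖ := ht1
        _ = ‖zz ω y - (k:ℂ)^2‖ ^ (1:ℝ) := (Real.rpow_one _).symm
        _ ≤ ‖zz ω y - (k:ℂ)^2‖ ^ r :=
            Real.rpow_le_rpow_of_exponent_le (by nlinarith [sq_nonneg (k:ℝ)]) hr
    rw [one_div]
    exact inv_anti₀ (by positivity) htr
  have hsum_eq : ∀ y : ℝ, (∑' k : ℕ, sig ω k y ^ r)
      = ENNReal.ofReal (∑' k : ℕ, 1 / ‖zz ω y - (k:ℂ)^2‖ ^ r) := by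
    intro y
    rw [ENNReal.ofReal_tsum_of_nonneg (fun k => by positivity) (hsumm y)]
    refine tsum_congr fun k => ?_
    have ht : 0 < ‖zz ω y - (k:ℂ)^2‖ := abs_pos' hω0 k y
    rw [sig, ENNReal.inv_rpow, ENNReal.ofReal_rpow_of_pos ht, one_div,
      ENNReal.ofReal_inv_of_pos (Real.rpow_pos_of_pos ht r)]
  have hpteq : ∀ y : ℝ, (∑' k : ℕ, 1 / ‖zz ω y - (k:ℂ)^2‖ ^ r) ^ e
      = ((∑' k : ℕ, sig ω k y ^ r) ^ e).toReal := by
    intro y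
    rw [hsum_eq y, ← ENNReal.toReal_rpow,
      ENNReal.toReal_ofReal (tsum_nonneg fun k => by positivity)]
  have hFmeas : Measurable fun y => (∑' k : ℕ, sig ω k y ^ r) ^ e :=
    (ENNReal.continuous_rpow_const.measurable).comp
      (Measurable.ennreal_tsum fun k => sig_rpow_meas ω k r)
  have hFfin : ∀ y : ℝ, (∑' k : ℕ, sig ω k y ^ r) ^ e < ⊤ := by
    intro y
    refine ENNReal.rpow_lt_top_of_nonneg he.le ?_
    rw [hsum_eq y]
    exact ENNReal.ofReal_ne_top
  calc (∫ y : ℝ, (∑' k : ℕ, 1 / ‖zz ω y - (k:ℂ)^2‖ ^ r) ^ e)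
      = ∫ y : ℝ, ((∑' k : ℕ, sig ω k y ^ r) ^ e).toReal :=
        integral_congr_ae (Eventually.of_forall hpteq)
    _ = (∫⁻ y : ℝ, (∑' k : ℕ, sig ω k y ^ r) ^ e).toReal :=
        integral_toReal hFmeas.aemeasurable (ae_of_all _ hFfin)
    _ ≤ (K ω).toReal := ENNReal.toReal_mono (hfin.trans ENNReal.one_lt_top).ne hb

end Stmt2Aux

open Stmt2Aux in
theorem stmt2' :
    (∀ r : ℝ, 1 < r →
      Tendsto (fun ω : ℝ => ∫ y : ℝ, A ((-ω : ℝ) + (y : ℝ) * Complex.I) r ^ 2)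
        atTop (nhds 0)) ∧
    Tendsto (fun ω : ℝ => ∫ y : ℝ, A ((-ω : ℝ) + (y : ℝ) * Complex.I) 1 ^ 3)
      atTop (nhds 0) := by
  constructor
  · intro r hr
    have hr0 : (0:ℝ) < r := by linarith
    obtain ⟨r₀, hr₀def⟩ : ∃ t : ℝ, t = min r (3/2 : ℝ) := ⟨_, rfl⟩
    have hr₀1 : 1 < r₀ := by
      rw [hr₀def]
      exact lt_min hr (by norm_num)
    have hr₀lt2 : r₀ < 2 := by
      rw [hr₀def]
      exact lt_of_le_of_lt (min_le_right _ _) (by norm_num)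
    have hr₀le : r₀ ≤ r := by
      rw [hr₀def]
      exact min_le_left _ _
    have hr₀0 : (0:ℝ) < r₀ := by linarith
    obtain ⟨p, hpdef⟩ : ∃ t : ℝ, t = 2 / r₀ := ⟨_, rfl⟩
    have hp1 : 1 < p := by
      rw [hpdef, lt_div_iff₀ hr₀0]
      linarith
    have hp2 : p < 2 := by
      rw [hpdef, div_lt_iff₀ hr₀0]
      linarith
    have hp0 : p ≠ 0 := by positivity
    have hpm1 : (0:ℝ) < p - 1 := by linarith
    obtain ⟨q, hqdef⟩ : ∃ t : ℝ, t = p / (p - 1) := ⟨_, rfl⟩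
    have hq : Real.HolderConjugate p q := (Real.holderConjugate_iff_eq_conjExponent hp1).mpr hqdef
    have hrp2 : r₀ * p = 2 := by
      rw [hpdef]
      field_simp
    have hcore := core (s := r₀) (p := p) (q := q) (α := 1/4) hr₀0 hp1 hq (by norm_num)
      (by
        have h4 : p - 1 ≠ 0 := ne_of_gt hpm1
        have hsw : (1:ℝ)/4 * (p/(p-1)) = p / (4*(p-1)) := by
          field_simp
        rw [hqdef, hsw, lt_div_iff₀ (by linarith : (0:ℝ) < 4*(p-1))]
        linarith)
      (by rw [hrp2])
      (by
        rw [hrp2]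
        linarith)
    have hbound : ∀ᶠ ω : ℝ in atTop, (∫⁻ y : ℝ, (∑' k : ℕ, sig ω k y ^ r) ^ (2/r)) ≤
        ∫⁻ y : ℝ, (∑' k : ℕ, sig ω k y ^ r₀) ^ p := by
      refine Eventually.of_forall fun ω => lintegral_mono fun y => ?_
      have h1 : (∑' k, sig ω k y ^ r) ≤ (∑' k, sig ω k y ^ r₀) ^ (r / r₀) :=
        tsum_rpow_le hr₀0 hr₀le
      have h2 := ENNReal.rpow_le_rpow h1 (by positivity : (0:ℝ) ≤ 2/r)
      rwa [← ENNReal.rpow_mul,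
        show (r/r₀) * (2/r) = p by rw [hpdef]; field_simp] at h2
    have hglue := glue (le_of_lt hr) (by positivity : (0:ℝ) < 2/r)
      (fun ω => ∫⁻ y : ℝ, (∑' k : ℕ, sig ω k y ^ r₀) ^ p) hcore hbound
    have hA : ∀ ω y : ℝ, A ((-ω : ℝ) + (y : ℝ) * Complex.I) r ^ 2
        = (∑' k : ℕ, 1 / ‖zz ω y - (k:ℂ)^2‖ ^ r) ^ ((2:ℝ)/r) := by
      intro ω y
      have hX : (0:ℝ) ≤ ∑' k : ℕ, 1 / ‖zz ω y - (k:ℂ)^2‖ ^ r :=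
        tsum_nonneg fun k => by positivity
      show ((∑' k : ℕ, 1 / ‖zz ω y - (k:ℂ)^2‖ ^ r) ^ ((1:ℝ)/r)) ^ (2:ℕ) = _
      rw [← Real.rpow_natCast (_ ^ ((1:ℝ)/r)) 2, ← Real.rpow_mul hX]
      congr 1
      push_cast
      ring
    have hgoal : (fun ω : ℝ => ∫ y : ℝ, A ((-ω : ℝ) + (y : ℝ) * Complex.I) r ^ 2)
        = fun ω : ℝ => ∫ y : ℝ,
          (∑' k : ℕ, 1 / ‖zz ω y - (k:ℂ)^2‖ ^ r) ^ ((2:ℝ)/r) := by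
      funext ω
      exact integral_congr_ae (Eventually.of_forall fun y => hA ω y)
    rw [hgoal]
    exact hglue
  · have hq32 : Real.HolderConjugate 3 (3/2) := (Real.holderConjugate_iff_eq_conjExponent (by norm_num)).mpr (by norm_num)
    have hcore := core (s := 1) (p := 3) (q := 3/2) (α := 5/12) one_pos (by norm_num) hq32
      (by norm_num) (by norm_num) (by norm_num) (by norm_num)
    have hglue := glue le_rfl (by norm_num : (0:ℝ) < 3)
      (fun ω => ∫⁻ y : ℝ, (∑' k : ℕ, sig ω k y ^ (1:ℝ)) ^ (3:ℝ)) hcore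
      (Eventually.of_forall fun ω => le_rfl)
    have hA : ∀ ω y : ℝ, A ((-ω : ℝ) + (y : ℝ) * Complex.I) 1 ^ 3
        = (∑' k : ℕ, 1 / ‖zz ω y - (k:ℂ)^2‖ ^ (1:ℝ)) ^ ((3:ℝ)) := by
      intro ω y
      have hX : (0:ℝ) ≤ ∑' k : ℕ, 1 / ‖zz ω y - (k:ℂ)^2‖ ^ (1:ℝ) :=
        tsum_nonneg fun k => by positivity
      show ((∑' k : ℕ, 1 / ‖zz ω y - (k:ℂ)^2‖ ^ (1:ℝ)) ^ ((1:ℝ)/1)) ^ (3:ℕ) = _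
      rw [← Real.rpow_natCast (_ ^ ((1:ℝ)/1)) 3, ← Real.rpow_mul hX]
      norm_num
    have hgoal : (fun ω : ℝ => ∫ y : ℝ, A ((-ω : ℝ) + (y : ℝ) * Complex.I) 1 ^ 3)
        = fun ω : ℝ => ∫ y : ℝ,
          (∑' k : ℕ, 1 / ‖zz ω y - (k:ℂ)^2‖ ^ (1:ℝ)) ^ ((3:ℝ)) := by
      funext ω
      exact integral_congr_ae (Eventually.of_forall fun y => hA ω y)
    rw [hgoal]
    exact hglue

theorem stmt2 :
    (∀ r : ℝ, 1 < r →
      Tendsto (fun ω : ℝ => ∫ y : ℝ, A ((-ω : ℝ) + (y : ℝ) * Complex.I) r ^ 2)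
        atTop (nhds 0)) ∧
    Tendsto (fun ω : ℝ => ∫ y : ℝ, A ((-ω : ℝ) + (y : ℝ) * Complex.I) 1 ^ 3)
      atTop (nhds 0) := stmt2'
end

section
/- There exist constants c, C > 0 such that for every integer N ≥ 2 and every y ∈ ℝ, writing λ = N² + N + iy: (i) if |y| ≤ N then c · (log N)/N ≤ A(λ, 1) ≤ C · (log N)/N; (ii) if N ≤ |y| ≤ N² then c · (1/N) · log(1 + N²/|y|) ≤ A(λ, 1) ≤ C · (1/N) · log(1 + N²/|y|); (iii) if |y| ≥ N² then c/√|y| ≤ A(λ, 1) ≤ C/√|y|. -/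
/-- The point `λ = N² + N + iy`. -/
noncomputable def lam (N : ℕ) (y : ℝ) : ℂ :=
  (((N : ℝ) ^ 2 + N : ℝ) : ℂ) + (y : ℝ) * Complex.I


open Finset


noncomputable def dd (N k : ℕ) : ℝ := |((N:ℝ)^2 + N) - (k:ℝ)^2|

lemma dd_tail_ge (N j : ℕ) : (j:ℝ)^2 + (N:ℝ)*((j:ℝ)+1) ≤ dd N (j + (N+1)) := by
  have hc : ((j + (N+1):ℕ):ℝ) = (j:ℝ) + N + 1 := by push_cast; ring
  have hj0 : (0:ℝ) ≤ j := Nat.cast_nonneg j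
  have hN0 : (0:ℝ) ≤ N := Nat.cast_nonneg N
  rw [dd, hc, abs_of_nonpos (by nlinarith)]
  nlinarith

lemma dd_ge_N {N : ℕ} (hN : 1 ≤ N) (k : ℕ) : (N:ℝ) ≤ dd N k := by
  have hN0 : (1:ℝ) ≤ N := Nat.one_le_cast.mpr hN
  rcases le_or_gt k N with h | h
  · have hkN : (k:ℝ) ≤ N := Nat.cast_le.mpr h
    have hk0 : (0:ℝ) ≤ k := Nat.cast_nonneg k
    rw [dd, abs_of_nonneg (by nlinarith)]
    nlinarith
  · obtain ⟨j, rfl⟩ : ∃ j, k = j + (N+1) := ⟨k - (N+1), by omega⟩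
    have := dd_tail_ge N j
    have hj0 : (0:ℝ) ≤ j := Nat.cast_nonneg j
    nlinarith

lemma tsum_tail_tele {q : ℕ → ℝ} (m : ℕ) (hm : 1 ≤ m) (h0 : ∀ j, 0 ≤ q j)
    (h : ∀ j, q j ≤ 1/((((j:ℝ)+m))*((j:ℝ)+m+1))) : ∑' j, q j ≤ 1/m := by
  apply Real.tsum_le_of_sum_range_le h0
  intro n
  have hmR : (1:ℝ) ≤ m := Nat.one_le_cast.mpr hm
  have tele : ∑ j ∈ Finset.range n, (1/((j:ℝ)+m) - 1/((j:ℝ)+m+1))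
      = 1/((0:ℝ)+m) - 1/((n:ℝ)+m) := by
    have h := Finset.sum_range_sub' (f := fun i : ℕ => 1/((i:ℝ)+m)) n
    have h2 : ∑ j ∈ Finset.range n, (1/((j:ℝ)+m) - 1/((j:ℝ)+m+1))
        = ∑ i ∈ Finset.range n, (1/((i:ℝ)+m) - 1/(((i+1:ℕ):ℝ)+m)) := by
      apply Finset.sum_congr rfl
      intro j _
      push_cast
      ring_nf
    rw [h2, h]
    norm_num
  calc ∑ j ∈ Finset.range n, q j
      ≤ ∑ j ∈ Finset.range n, (1/((j:ℝ)+m) - 1/((j:ℝ)+m+1)) := by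
        apply Finset.sum_le_sum
        intro j _
        have hj0 : (0:ℝ) ≤ j := Nat.cast_nonneg j
        have e : 1/((j:ℝ)+m) - 1/((j:ℝ)+m+1) = 1/((((j:ℝ)+m))*((j:ℝ)+m+1)) := by
          field_simp
          ring
        rw [e]
        exact h j
    _ = 1/((0:ℝ)+m) - 1/((n:ℝ)+m) := tele
    _ ≤ 1/m := by
        have hn0 : (0:ℝ) ≤ n := Nat.cast_nonneg n
        have : 0 < (n:ℝ)+m := by linarith
        have : 0 ≤ 1/((n:ℝ)+m) := by positivity
        simp only [zero_add]
        linarith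

lemma dd_head_lb {N j : ℕ} (hj : j ≤ N) : (N:ℝ)*((j:ℝ)+1) ≤ dd N (N - j) := by
  have hc : ((N - j:ℕ):ℝ) = (N:ℝ) - j := by
    push_cast [hj]; ring
  have hjN : (j:ℝ) ≤ N := Nat.cast_le.mpr hj
  have hj0 : (0:ℝ) ≤ j := Nat.cast_nonneg j
  rw [dd, hc, abs_of_nonneg (by nlinarith)]
  nlinarith

lemma dd_head_ub {N j : ℕ} (hj : j ≤ N) : dd N (N - j) ≤ 2*(N:ℝ)*((j:ℝ)+1) := by
  have hc : ((N - j:ℕ):ℝ) = (N:ℝ) - j := by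
    push_cast [hj]; ring
  have hjN : (j:ℝ) ≤ N := Nat.cast_le.mpr hj
  have hj0 : (0:ℝ) ≤ j := Nat.cast_nonneg j
  rw [dd, hc, abs_of_nonneg (by nlinarith)]
  nlinarith

lemma dd_small {N k : ℕ} {a : ℝ} (h1 : (N:ℝ)^2 + N ≤ 2*a) (h2 : (k:ℝ)^2 ≤ a)
    (ha : 0 ≤ a) : dd N k ≤ 2*a := by
  have hk0 : (0:ℝ) ≤ k := Nat.cast_nonneg k
  have hN0 : (0:ℝ) ≤ N := Nat.cast_nonneg N
  rw [dd]
  rw [abs_le]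
  constructor <;> nlinarith

lemma log_ratio_le {x : ℝ} (hx : 0 < x) : Real.log (x+1) - Real.log x ≤ 1/x := by
  rw [← Real.log_div (by positivity) (ne_of_gt hx)]
  have h1 : (x+1)/x = 1 + 1/x := by field_simp
  have h2 := Real.log_le_sub_one_of_pos (show (0:ℝ) < (x+1)/x by positivity)
  rw [h1] at h2 ⊢
  linarith

lemma le_log_ratio {x : ℝ} (hx : 0 < x) : 1/(x+1) ≤ Real.log (x+1) - Real.log x := by
  have h := Real.log_le_sub_one_of_pos (show (0:ℝ) < x/(x+1) by positivity)
  rw [Real.log_div (ne_of_gt hx) (by positivity)] at h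
  have h2 : x/(x+1) - 1 = -(1/(x+1)) := by field_simp; ring
  rw [h2] at h
  linarith

lemma sum_log_tele (n : ℕ) (b : ℝ) :
    ∑ j ∈ Finset.range n, (Real.log ((j:ℝ)+1+b) - Real.log ((j:ℝ)+b))
      = Real.log ((n:ℝ)+b) - Real.log b := by
  have h := Finset.sum_range_sub (f := fun i : ℕ => Real.log ((i:ℝ)+b)) n
  have h2 : ∑ j ∈ Finset.range n, (Real.log ((j:ℝ)+1+b) - Real.log ((j:ℝ)+b))
      = ∑ i ∈ Finset.range n, (Real.log (((i+1:ℕ):ℝ)+b) - Real.log ((i:ℝ)+b)) := by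
    apply Finset.sum_congr rfl
    intro j _
    push_cast
    ring_nf
  rw [h2, h]
  norm_num

lemma harmonic_like_upper (n : ℕ) {b : ℝ} (hb : 0 < b) :
    ∑ j ∈ Finset.range n, 1/((j:ℝ)+1+b) ≤ Real.log ((n:ℝ)+b) - Real.log b := by
  rw [← sum_log_tele n b]
  apply Finset.sum_le_sum
  intro j _
  have h := le_log_ratio (x := (j:ℝ)+b) (by positivity)
  have e1 : (j:ℝ)+1+b = ((j:ℝ)+b)+1 := by ring
  rw [e1]
  linarith

lemma harmonic_like_lower (n : ℕ) {b : ℝ} (hb : 0 < b) :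
    Real.log ((n:ℝ)+b) - Real.log b ≤ ∑ j ∈ Finset.range n, 1/((j:ℝ)+b) := by
  rw [← sum_log_tele n b]
  apply Finset.sum_le_sum
  intro j _
  have h := log_ratio_le (x := (j:ℝ)+b) (by positivity)
  have e1 : (j:ℝ)+1+b = ((j:ℝ)+b)+1 := by ring
  rw [e1]
  linarith


noncomputable def ff (N : ℕ) (a : ℝ) (k : ℕ) : ℝ := 1/(dd N k + a)
noncomputable def gg (N : ℕ) (a : ℝ) (j : ℕ) : ℝ := 1/((j:ℝ)^2 + (N:ℝ)*((j:ℝ)+1) + a)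
noncomputable def HH (N : ℕ) (a : ℝ) : ℝ := ∑ j ∈ range (N+1), 1/((N:ℝ)*((j:ℝ)+1) + a)

section
variable {N : ℕ} {a : ℝ} (hN : 2 ≤ N) (ha : 0 ≤ a)
include hN ha

lemma ff_pos (k : ℕ) : 0 < ff N a k := by
  have h1 : (2:ℝ) ≤ N := by exact_mod_cast Nat.cast_le.mpr hN
  have := dd_ge_N (by omega : 1 ≤ N) k
  rw [ff]
  have : 0 < dd N k + a := by linarith
  positivity

lemma gg_pos (j : ℕ) : 0 < gg N a j := by
  have h1 : (2:ℝ) ≤ N := by exact_mod_cast Nat.cast_le.mpr hN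
  have hj0 : (0:ℝ) ≤ j := Nat.cast_nonneg j
  rw [gg]
  have : 0 < (j:ℝ)^2 + (N:ℝ)*((j:ℝ)+1) + a := by nlinarith
  positivity

lemma gg_le_inv_sq (j : ℕ) : gg N a j ≤ 1/((j:ℝ)+1)^2 := by
  have h1 : (2:ℝ) ≤ N := by exact_mod_cast Nat.cast_le.mpr hN
  have hj0 : (0:ℝ) ≤ j := Nat.cast_nonneg j
  rw [gg]
  apply one_div_le_one_div_of_le (by positivity)
  nlinarith

lemma summable_gg : Summable (gg N a) := by
  have base : Summable (fun j : ℕ => 1/((j:ℝ)+1)^2) := by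
    have h := (summable_nat_add_iff (f := fun n : ℕ => 1/(n:ℝ)^2) 1).mpr
      (Real.summable_one_div_nat_pow.mpr one_lt_two)
    refine h.congr fun j => ?_
    push_cast
    ring
  apply Summable.of_nonneg_of_le (fun j => (gg_pos hN ha j).le) (gg_le_inv_sq hN ha) base

lemma ff_tail_le_gg (j : ℕ) : ff N a (j + (N+1)) ≤ gg N a j := by
  rw [ff, gg]
  have hj0 : (0:ℝ) ≤ j := Nat.cast_nonneg j
  have h1 : (2:ℝ) ≤ N := by exact_mod_cast Nat.cast_le.mpr hN
  apply one_div_le_one_div_of_le (by positivity)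
  have := dd_tail_ge N j
  linarith

lemma summable_ff : Summable (ff N a) := by
  apply (summable_nat_add_iff (N+1)).mp
  apply Summable.of_nonneg_of_le (fun j => (ff_pos hN ha _).le) (ff_tail_le_gg hN ha)
    (summable_gg hN ha)

lemma head_le_HH : ∑ k ∈ range (N+1), ff N a k ≤ HH N a := by
  rw [← Finset.sum_range_reflect (fun k => ff N a k) (N+1), HH]
  apply Finset.sum_le_sum
  intro j hj
  have hj' : j ≤ N := by have := Finset.mem_range.mp hj; omega
  have e : N + 1 - 1 - j = N - j := by omega
  rw [e, ff]
  apply one_div_le_one_div_of_le (by positivity)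
  have hlb : (N:ℝ)*((j:ℝ)+1) ≤ dd N (N - j) := by
    have hc : ((N - j:ℕ):ℝ) = (N:ℝ) - j := by push_cast [hj']; ring
    have hjN : (j:ℝ) ≤ N := Nat.cast_le.mpr hj'
    have hj0 : (0:ℝ) ≤ j := Nat.cast_nonneg j
    have h1 : (2:ℝ) ≤ N := by exact_mod_cast Nat.cast_le.mpr hN
    rw [dd, hc, abs_of_nonneg (by nlinarith)]
    nlinarith
  linarith

lemma T_le_HH_add_G : ∑' k, ff N a k ≤ HH N a + ∑' j, gg N a j := by
  rw [← Summable.sum_add_tsum_nat_add (N+1) (summable_ff hN ha)]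
  have h1 : ∑' j, ff N a (j + (N+1)) ≤ ∑' j, gg N a j := by
    apply Summable.tsum_le_tsum (ff_tail_le_gg hN ha)
    · exact ((summable_nat_add_iff (N+1)).mpr (summable_ff hN ha))
    · exact summable_gg hN ha
  have h2 := head_le_HH hN ha
  linarith

lemma gg_head_le (j : ℕ) : gg N a j ≤ 1/((N:ℝ)*((j:ℝ)+1) + a) := by
  rw [gg]
  have hj0 : (0:ℝ) ≤ j := Nat.cast_nonneg j
  have h1 : (2:ℝ) ≤ N := by exact_mod_cast Nat.cast_le.mpr hN
  apply one_div_le_one_div_of_le (by positivity)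
  nlinarith

lemma gg_tail_tele (m : ℕ) (hm : 1 ≤ m) :
    ∑' j, gg N a (j + m) ≤ 1/(m:ℝ) := by
  have h1 : (2:ℝ) ≤ N := by exact_mod_cast Nat.cast_le.mpr hN
  have hm1 : (1:ℝ) ≤ m := Nat.one_le_cast.mpr hm
  have key : ∀ j : ℕ, gg N a (j + m) ≤ 1/((((j:ℝ)+m))*((j:ℝ)+m+1)) := by
    intro j
    rw [gg]
    have hj0 : (0:ℝ) ≤ j := Nat.cast_nonneg j
    have hc : ((j + m:ℕ):ℝ) = (j:ℝ) + m := by push_cast; ring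
    rw [hc]
    apply one_div_le_one_div_of_le (by positivity)
    nlinarith
  exact tsum_tail_tele m hm (fun j => (gg_pos hN ha _).le) key

lemma G_le_HH_add : ∑' j, gg N a j ≤ HH N a + 1/((N:ℝ)+1) := by
  rw [← Summable.sum_add_tsum_nat_add (N+1) (summable_gg hN ha)]
  have h1 : ∑ j ∈ range (N+1), gg N a j ≤ HH N a := by
    rw [HH]
    exact Finset.sum_le_sum (fun j _ => gg_head_le hN ha j)
  have h2 : ∑' j, gg N a (j + (N+1)) ≤ 1/((N:ℝ)+1) := by
    have := gg_tail_tele hN ha (N+1) (by omega)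
    simpa using this
  linarith

lemma T_le_total : ∑' k, ff N a k ≤ 2 * HH N a + 1/((N:ℝ)+1) := by
  have := T_le_HH_add_G hN ha
  have := G_le_HH_add hN ha
  linarith

lemma head_lower :
    ∑ j ∈ range (N+1), 1/(2*(N:ℝ)*((j:ℝ)+1)+a) ≤ ∑' k, ff N a k := by
  have h1 : ∑ k ∈ range (N+1), ff N a k ≤ ∑' k, ff N a k :=
    Summable.sum_le_tsum _ (fun k _ => (ff_pos hN ha k).le) (summable_ff hN ha)
  have h2 : ∑ j ∈ range (N+1), 1/(2*(N:ℝ)*((j:ℝ)+1)+a) ≤ ∑ k ∈ range (N+1), ff N a k := by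
    rw [← Finset.sum_range_reflect (fun k => ff N a k) (N+1)]
    apply Finset.sum_le_sum
    intro j hj
    have hj' : j ≤ N := by have := Finset.mem_range.mp hj; omega
    have e : N + 1 - 1 - j = N - j := by omega
    rw [e, ff]
    apply one_div_le_one_div_of_le
    · have hdd := dd_ge_N (by omega : 1 ≤ N) (N - j)
      have h1 : (2:ℝ) ≤ N := by exact_mod_cast Nat.cast_le.mpr hN
      linarith
    · have hub : dd N (N - j) ≤ 2*(N:ℝ)*((j:ℝ)+1) := by
        have hc : ((N - j:ℕ):ℝ) = (N:ℝ) - j := by push_cast [hj']; ring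
        have hjN : (j:ℝ) ≤ N := Nat.cast_le.mpr hj'
        have hj0 : (0:ℝ) ≤ j := Nat.cast_nonneg j
        have h1 : (2:ℝ) ≤ N := by exact_mod_cast Nat.cast_le.mpr hN
        rw [dd, hc, abs_of_nonneg (by nlinarith)]
        nlinarith
      linarith
  linarith

end




lemma lam_sub_sq (N k : ℕ) (y : ℝ) :
    lam N y - (k:ℂ)^2 = Complex.ofReal (((N:ℝ)^2 + N) - (k:ℝ)^2) + (y:ℝ) * Complex.I := by
  rw [lam]
  push_cast
  ring

lemma re_ofReal_add_mul_I (x y : ℝ) : (Complex.ofReal x + (y:ℝ)*Complex.I).re = x := by simp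

lemma im_ofReal_add_mul_I (x y : ℝ) : (Complex.ofReal x + (y:ℝ)*Complex.I).im = y := by simp

lemma lam_re (N k : ℕ) (y : ℝ) : (lam N y - (k:ℂ)^2).re = ((N:ℝ)^2 + N) - (k:ℝ)^2 := by
  rw [lam_sub_sq, re_ofReal_add_mul_I]

lemma lam_im (N k : ℕ) (y : ℝ) : (lam N y - (k:ℂ)^2).im = y := by
  rw [lam_sub_sq, im_ofReal_add_mul_I]

lemma abs_lam_le (N k : ℕ) (y : ℝ) :
    ‖lam N y - (k:ℂ)^2‖ ≤ dd N k + |y| := by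
  have h := Complex.norm_le_abs_re_add_abs_im (lam N y - (k:ℂ)^2)
  rwa [lam_re, lam_im, ← dd] at h

lemma dd_le_abs_lam (N k : ℕ) (y : ℝ) :
    dd N k ≤ ‖lam N y - (k:ℂ)^2‖ := by
  have h := Complex.abs_re_le_norm (lam N y - (k:ℂ)^2)
  rwa [lam_re, ← dd] at h

lemma absy_le_abs_lam (N k : ℕ) (y : ℝ) :
    |y| ≤ ‖lam N y - (k:ℂ)^2‖ := by
  have h := Complex.abs_im_le_norm (lam N y - (k:ℂ)^2)
  rwa [lam_im] at h

lemma A_one_eq (N : ℕ) (y : ℝ) :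
    A (lam N y) 1 = ∑' k : ℕ, 1 / ‖lam N y - (k:ℂ)^2‖ := by
  rw [A]
  norm_num [Real.rpow_one]


lemma abs_lam_pos {N : ℕ} (hN : 2 ≤ N) (y : ℝ) (k : ℕ) :
    0 < ‖lam N y - (k:ℂ)^2‖ := by
  have h1 := dd_le_abs_lam N k y
  have h2 := dd_ge_N (by omega : 1 ≤ N) k
  have h3 : (2:ℝ) ≤ N := by exact_mod_cast Nat.cast_le.mpr hN
  linarith

lemma ff_le_inv_abs {N : ℕ} (hN : 2 ≤ N) (y : ℝ) (k : ℕ) :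
    ff N |y| k ≤ 1 / ‖lam N y - (k:ℂ)^2‖ := by
  rw [ff]
  exact one_div_le_one_div_of_le (abs_lam_pos hN y k) (abs_lam_le N k y)

lemma inv_abs_le_ff {N : ℕ} (hN : 2 ≤ N) (y : ℝ) (k : ℕ) :
    1 / ‖lam N y - (k:ℂ)^2‖ ≤ 2 * ff N |y| k := by
  have h1 : dd N k + |y| ≤ 2 * ‖lam N y - (k:ℂ)^2‖ := by
    have := dd_le_abs_lam N k y
    have := absy_le_abs_lam N k y
    linarith
  have h2 : 0 < dd N k + |y| := by
    have := dd_ge_N (by omega : 1 ≤ N) k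
    have h3 : (2:ℝ) ≤ N := by exact_mod_cast Nat.cast_le.mpr hN
    have := abs_nonneg y
    linarith
  rw [ff, mul_one_div, div_le_div_iff₀ (abs_lam_pos hN y k) h2]
  linarith

lemma summable_inv_abs {N : ℕ} (hN : 2 ≤ N) (y : ℝ) :
    Summable (fun k : ℕ => 1 / ‖lam N y - (k:ℂ)^2‖) := by
  apply Summable.of_nonneg_of_le (fun k => by positivity) (inv_abs_le_ff hN y)
  exact (summable_ff hN (abs_nonneg y)).mul_left 2

lemma T_le_A_one {N : ℕ} (hN : 2 ≤ N) (y : ℝ) :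
    ∑' k, ff N |y| k ≤ A (lam N y) 1 := by
  rw [A_one_eq]
  exact Summable.tsum_le_tsum (ff_le_inv_abs hN y) (summable_ff hN (abs_nonneg y))
    (summable_inv_abs hN y)

lemma A_one_le_2T {N : ℕ} (hN : 2 ≤ N) (y : ℝ) :
    A (lam N y) 1 ≤ 2 * ∑' k, ff N |y| k := by
  rw [A_one_eq]
  calc ∑' (k:ℕ), 1 / ‖lam N y - (k:ℂ)^2‖
      ≤ ∑' (k:ℕ), 2 * ff N |y| k := Summable.tsum_le_tsum (inv_abs_le_ff hN y)
        (summable_inv_abs hN y) ((summable_ff hN (abs_nonneg y)).mul_left 2)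
    _ = 2 * ∑' k, ff N |y| k := tsum_mul_left

section regime3
variable {N : ℕ} {a : ℝ} (hN : 2 ≤ N) (ha0 : 0 ≤ a) (hya : (N:ℝ)^2 ≤ a)
include hN ha0 hya

lemma regime3_lower : 1/(3 * Real.sqrt a) ≤ ∑' k, ff N a k := by
  have hNR : (2:ℝ) ≤ N := by exact_mod_cast Nat.cast_le.mpr hN
  have ha4 : (4:ℝ) ≤ a := by nlinarith
  have hapos : (0:ℝ) < a := by linarith
  set s := Real.sqrt a with hs_def
  have hs0 : 0 ≤ s := Real.sqrt_nonneg a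
  have hs2 : s^2 = a := Real.sq_sqrt ha0
  have hsge2 : (2:ℝ) ≤ s := by nlinarith
  set m := Nat.floor s with hm_def
  have hmle : (m:ℝ) ≤ s := Nat.floor_le hs0
  have hmgt : s < (m:ℝ) + 1 := Nat.lt_floor_add_one s
  clear_value m
  clear_value s
  have key : ∀ k ∈ range (m+1), 1/(3*a) ≤ ff N a k := by
    intro k hk
    have hk' : k ≤ m := by have := Finset.mem_range.mp hk; omega
    have hkR : (k:ℝ) ≤ s := le_trans (Nat.cast_le.mpr hk') hmle
    have hk0 : (0:ℝ) ≤ k := Nat.cast_nonneg k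
    have hdd : dd N k ≤ 2*a := by
      apply dd_small _ _ ha0
      · nlinarith
      · nlinarith
    rw [ff]
    apply one_div_le_one_div_of_le
    · have := dd_ge_N (by omega : 1 ≤ N) k; linarith
    · linarith
  have h1 : ∑ k ∈ range (m+1), (1/(3*a)) ≤ ∑ k ∈ range (m+1), ff N a k :=
    Finset.sum_le_sum key
  have h2 : ∑ k ∈ range (m+1), ff N a k ≤ ∑' k, ff N a k :=
    Summable.sum_le_tsum _ (fun k _ => (ff_pos hN ha0 k).le) (summable_ff hN ha0)
  have h3 : ∑ k ∈ range (m+1), (1/(3*a)) = ((m:ℝ)+1) * (1/(3*a)) := by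
    rw [Finset.sum_const, Finset.card_range]
    push_cast
    ring
  have h4 : 1/(3*s) ≤ ((m:ℝ)+1) * (1/(3*a)) := by
    have e : s * (1/(3*a)) = 1/(3*s) := by
      rw [← hs2]; field_simp
    rw [← e]
    apply mul_le_mul_of_nonneg_right hmgt.le (by positivity)
  rw [h3] at h1
  linarith

lemma regime3_upper : ∑' k, ff N a k ≤ 5 / Real.sqrt a := by
  have hNR : (2:ℝ) ≤ N := by exact_mod_cast Nat.cast_le.mpr hN
  have ha4 : (4:ℝ) ≤ a := by nlinarith
  have hapos : (0:ℝ) < a := by linarith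
  set s := Real.sqrt a with hs_def
  have hs0 : 0 ≤ s := Real.sqrt_nonneg a
  have hs2 : s^2 = a := Real.sq_sqrt ha0
  have hsge2 : (2:ℝ) ≤ s := by nlinarith
  have hNs : (N:ℝ) ≤ s := by nlinarith
  set m := Nat.floor s with hm_def
  have hmle : (m:ℝ) ≤ s := Nat.floor_le hs0
  have hmgt : s < (m:ℝ) + 1 := Nat.lt_floor_add_one s
  have hm2 : 2 ≤ m := Nat.le_floor (by exact_mod_cast hsge2)
  clear_value m
  clear_value s
  -- HH bound
  have hHH : HH N a ≤ 2/s := by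
    have h1 : HH N a ≤ ∑ j ∈ range (N+1), (1/a) := by
      rw [HH]
      apply Finset.sum_le_sum
      intro j _
      apply one_div_le_one_div_of_le hapos
      have hj0 : (0:ℝ) ≤ j := Nat.cast_nonneg j
      nlinarith
    have h2 : ∑ j ∈ range (N+1), (1/a) = ((N:ℝ)+1) * (1/a) := by
      rw [Finset.sum_const, Finset.card_range]; push_cast; ring
    have h3 : ((N:ℝ)+1) * (1/a) ≤ (2*s) * (1/a) := by
      apply mul_le_mul_of_nonneg_right (by linarith) (by positivity)
    have h4 : (2*s) * (1/a) = 2/s := by rw [← hs2]; field_simp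
    rw [h2] at h1
    rw [h4] at h3
    linarith
  -- G bound
  have hG : ∑' j, gg N a j ≤ 3/s := by
    rw [← Summable.sum_add_tsum_nat_add m (summable_gg hN ha0)]
    have h1 : ∑ j ∈ range m, gg N a j ≤ ∑ j ∈ range m, (1/a) := by
      apply Finset.sum_le_sum
      intro j _
      rw [gg]
      apply one_div_le_one_div_of_le hapos
      have hj0 : (0:ℝ) ≤ j := Nat.cast_nonneg j
      nlinarith
    have h2 : ∑ j ∈ range m, (1/a) = (m:ℝ) * (1/a) := by
      rw [Finset.sum_const, Finset.card_range]; push_cast; ring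
    have h3 : (m:ℝ) * (1/a) ≤ 1/s := by
      have e : s * (1/a) = 1/s := by rw [← hs2]; field_simp
      rw [← e]
      apply mul_le_mul_of_nonneg_right hmle (by positivity)
    have h4 : ∑' j, gg N a (j + m) ≤ 1/(m:ℝ) := gg_tail_tele hN ha0 m (by omega)
    have h5 : 1/(m:ℝ) ≤ 2/s := by
      rw [div_le_div_iff₀ (by exact_mod_cast (by omega : 0 < m) : (0:ℝ) < m) (by linarith)]
      linarith
    rw [h2] at h1
    have e1 : ∑ j ∈ range m, gg N a j + ∑' (j:ℕ), gg N a (j + m) ≤ 1/s + 2/s :=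
      add_le_add (le_trans h1 h3) (le_trans h4 h5)
    have e2 : 1/s + 2/s = 3/s := by
      rw [← add_div]; norm_num
    linarith
  have := T_le_HH_add_G hN ha0
  calc ∑' k, ff N a k ≤ HH N a + ∑' j, gg N a j := this
    _ ≤ 2/s + 3/s := add_le_add hHH hG
    _ = 5/s := by rw [← add_div]; norm_num

end regime3


section regime1
variable {N : ℕ} {a : ℝ} (hN : 2 ≤ N) (ha0 : 0 ≤ a)

lemma harmonic_ub (hN : 2 ≤ N) :
    ∑ j ∈ range (N+1), 1/((j:ℝ)+1) ≤ 1 + Real.log ((N:ℝ)+1) := by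
  rw [Finset.sum_range_succ' (fun j : ℕ => 1/((j:ℝ)+1)) N]
  have h1 : ∑ i ∈ range N, 1/(((i+1:ℕ):ℝ)+1) = ∑ i ∈ range N, 1/((i:ℝ)+1+1) := by
    apply Finset.sum_congr rfl
    intro i _
    push_cast
    ring_nf
  rw [h1]
  have h2 := harmonic_like_upper N (b := 1) one_pos
  have h3 : Real.log 1 = 0 := Real.log_one
  norm_num at h2 ⊢
  linarith

lemma harmonic_lb : Real.log ((N:ℝ)+2) ≤ ∑ j ∈ range (N+1), 1/((j:ℝ)+1) := by
  have h := harmonic_like_lower (N+1) (b := 1) one_pos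
  have h3 : Real.log 1 = 0 := Real.log_one
  push_cast at h
  have e : (N:ℝ) + 1 + 1 = (N:ℝ) + 2 := by ring
  rw [e] at h
  linarith

include hN ha0 in
lemma regime1_HH (hya : a ≤ N) : HH N a ≤ (1 + Real.log ((N:ℝ)+1))/N := by
  have hNR : (2:ℝ) ≤ N := by exact_mod_cast Nat.cast_le.mpr hN
  have h1 : HH N a ≤ ∑ j ∈ range (N+1), (1/(N:ℝ))*(1/((j:ℝ)+1)) := by
    rw [HH]
    apply Finset.sum_le_sum
    intro j _
    have hj0 : (0:ℝ) ≤ j := Nat.cast_nonneg j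
    rw [one_div_mul_one_div]
    apply one_div_le_one_div_of_le (by nlinarith)
    nlinarith
  rw [← Finset.mul_sum] at h1
  have h2 := harmonic_ub hN
  have h3 : (1/(N:ℝ)) * (∑ j ∈ range (N+1), 1/((j:ℝ)+1))
      ≤ (1/(N:ℝ)) * (1 + Real.log ((N:ℝ)+1)) :=
    mul_le_mul_of_nonneg_left h2 (by positivity)
  have e : (1/(N:ℝ)) * (1 + Real.log ((N:ℝ)+1)) = (1 + Real.log ((N:ℝ)+1))/N := by
    ring
  rw [e] at h3
  linarith

include hN ha0 in
lemma regime1_upper (hya : a ≤ N) :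
    ∑' k, ff N a k ≤ (3 + 2*Real.log ((N:ℝ)+1))/N := by
  have hNR : (2:ℝ) ≤ N := by exact_mod_cast Nat.cast_le.mpr hN
  have h1 := T_le_total hN ha0
  have h2 := regime1_HH hN ha0 hya
  have h3 : 1/((N:ℝ)+1) ≤ 1/(N:ℝ) := by
    apply one_div_le_one_div_of_le (by linarith) (by linarith)
  have e : 2 * ((1 + Real.log ((N:ℝ)+1))/N) + 1/(N:ℝ)
      = (3 + 2*Real.log ((N:ℝ)+1))/N := by
    field_simp
    ring
  calc ∑' k, ff N a k ≤ 2 * HH N a + 1/((N:ℝ)+1) := h1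
    _ ≤ 2 * ((1 + Real.log ((N:ℝ)+1))/N) + 1/(N:ℝ) := by
        have := mul_le_mul_of_nonneg_left h2 (by norm_num : (0:ℝ) ≤ 2)
        linarith
    _ = (3 + 2*Real.log ((N:ℝ)+1))/N := e

include hN ha0 in
lemma regime1_lower (hya : a ≤ N) :
    Real.log (N:ℝ) / (4*(N:ℝ)) ≤ ∑' k, ff N a k := by
  have hNR : (2:ℝ) ≤ N := by exact_mod_cast Nat.cast_le.mpr hN
  have h1 := head_lower hN ha0
  have h2 : ∑ j ∈ range (N+1), (1/(4*(N:ℝ)))*(1/((j:ℝ)+1))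
      ≤ ∑ j ∈ range (N+1), 1/(2*(N:ℝ)*((j:ℝ)+1)+a) := by
    apply Finset.sum_le_sum
    intro j _
    have hj0 : (0:ℝ) ≤ j := Nat.cast_nonneg j
    rw [one_div_mul_one_div]
    apply one_div_le_one_div_of_le (by nlinarith)
    nlinarith
  rw [← Finset.mul_sum] at h2
  have h3 := harmonic_lb (N := N)
  have h4 : Real.log (N:ℝ) ≤ Real.log ((N:ℝ)+2) :=
    Real.log_le_log (by linarith) (by linarith)
  have h5 : (1/(4*(N:ℝ))) * Real.log (N:ℝ)
      ≤ (1/(4*(N:ℝ))) * (∑ j ∈ range (N+1), 1/((j:ℝ)+1)) :=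
    mul_le_mul_of_nonneg_left (by linarith) (by positivity)
  have e : (1/(4*(N:ℝ))) * Real.log (N:ℝ) = Real.log (N:ℝ)/(4*(N:ℝ)) := by ring
  rw [e] at h5
  linarith

end regime1

section regime2
variable {N : ℕ} {a : ℝ} (hN : 2 ≤ N) (hya1 : (N:ℝ) ≤ a) (hya2 : a ≤ (N:ℝ)^2)
include hN hya1 hya2

lemma regime2_upper :
    ∑' k, ff N a k ≤ (1 + 4 * Real.log (1 + (N:ℝ)^2/a))/N := by
  have hNR : (2:ℝ) ≤ N := by exact_mod_cast Nat.cast_le.mpr hN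
  have hNpos : (0:ℝ) < N := by linarith
  have hapos : (0:ℝ) < a := by linarith
  have ha0 : (0:ℝ) ≤ a := hapos.le
  set x := (N:ℝ)^2/a with hx_def
  have hx1 : (1:ℝ) ≤ x := by
    rw [hx_def, le_div_iff₀ hapos]; linarith
  have h1x : (0:ℝ) < 1 + x := by linarith
  set b := a/(N:ℝ) with hb_def
  have hb1 : (1:ℝ) ≤ b := by rw [hb_def, le_div_iff₀ hNpos]; linarith
  have hbpos : (0:ℝ) < b := by linarith
  -- HH bound
  have hHH : HH N a ≤ 2 * Real.log (1+x) / N := by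
    have h1 : HH N a = ∑ j ∈ range (N+1), (1/(N:ℝ))*(1/((j:ℝ)+1+b)) := by
      rw [HH]
      apply Finset.sum_congr rfl
      intro j _
      have hj0 : (0:ℝ) ≤ j := Nat.cast_nonneg j
      rw [one_div_mul_one_div, hb_def]
      congr 1
      field_simp
    have h2 : ∑ j ∈ range (N+1), 1/((j:ℝ)+1+b)
        ≤ Real.log (((N+1:ℕ):ℝ)+b) - Real.log b :=
      harmonic_like_upper (N+1) hbpos
    have key : ((N:ℝ)+1+b)/b ≤ (1+x)^2 := by
      rw [div_le_iff₀ hbpos]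
      have e1 : x * b = (N:ℝ) := by
        rw [hx_def, hb_def]; field_simp
      have e2 : x^2 * b = (N:ℝ)^3/a := by
        rw [hx_def, hb_def]; field_simp
      have e3 : (N:ℝ) ≤ (N:ℝ)^3/a := by
        rw [le_div_iff₀ hapos]; nlinarith
      nlinarith [e1, e2, e3]
    have h3 : Real.log (((N+1:ℕ):ℝ)+b) - Real.log b ≤ 2 * Real.log (1+x) := by
      have hc : ((N+1:ℕ):ℝ) = (N:ℝ)+1 := by push_cast; ring
      rw [hc, ← Real.log_div (by linarith) (ne_of_gt hbpos)]
      have h4 : Real.log (((N:ℝ)+1+b)/b) ≤ Real.log ((1+x)^2) :=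
        Real.log_le_log (by positivity) key
      rw [Real.log_pow] at h4
      push_cast at h4
      linarith
    rw [h1, ← Finset.mul_sum]
    calc (1/(N:ℝ)) * ∑ j ∈ range (N+1), 1/((j:ℝ)+1+b)
        ≤ (1/(N:ℝ)) * (2 * Real.log (1+x)) := by
          apply mul_le_mul_of_nonneg_left _ (by positivity)
          linarith
      _ = 2 * Real.log (1+x) / N := by ring
  have h1 := T_le_total hN ha0
  have h3 : 1/((N:ℝ)+1) ≤ 1/(N:ℝ) := one_div_le_one_div_of_le hNpos (by linarith)
  calc ∑' k, ff N a k ≤ 2 * HH N a + 1/((N:ℝ)+1) := h1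
    _ ≤ 2 * (2 * Real.log (1+x) / N) + 1/(N:ℝ) := by
        have := mul_le_mul_of_nonneg_left hHH (by norm_num : (0:ℝ) ≤ 2)
        linarith
    _ = (1 + 4 * Real.log (1+x))/N := by field_simp; ring

lemma regime2_lower :
    1/4 * (1/(N:ℝ)) * Real.log (1 + (N:ℝ)^2/a) ≤ ∑' k, ff N a k := by
  have hNR : (2:ℝ) ≤ N := by exact_mod_cast Nat.cast_le.mpr hN
  have hNpos : (0:ℝ) < N := by linarith
  have hapos : (0:ℝ) < a := by linarith
  have ha0 : (0:ℝ) ≤ a := hapos.le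
  set x := (N:ℝ)^2/a with hx_def
  have h1x : (0:ℝ) < 1 + x := by
    have : 0 ≤ x := by positivity
    linarith
  set b := a/(2*(N:ℝ)) with hb_def
  have hb : (1/2:ℝ) ≤ b := by
    rw [hb_def, le_div_iff₀ (by linarith)]; linarith
  have hbpos : (0:ℝ) < b := by linarith
  have h1 := head_lower hN ha0
  have h2 : ∑ j ∈ range (N+1), 1/(2*(N:ℝ)*((j:ℝ)+1)+a)
      = ∑ j ∈ range (N+1), (1/(2*(N:ℝ)))*(1/((j:ℝ)+(1+b))) := by
    apply Finset.sum_congr rfl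
    intro j _
    have hj0 : (0:ℝ) ≤ j := Nat.cast_nonneg j
    rw [one_div_mul_one_div, hb_def]
    congr 1
    field_simp
    ring
  have h3 : Real.log (((N+1:ℕ):ℝ)+(1+b)) - Real.log (1+b)
      ≤ ∑ j ∈ range (N+1), 1/((j:ℝ)+(1+b)) :=
    harmonic_like_lower (N+1) (by linarith)
  have key : 1 + x ≤ (((N:ℝ)+2+b)/(1+b))^2 := by
    have e1 : 1 + x = (a + (N:ℝ)^2)/a := by
      rw [hx_def]; field_simp
    have e2 : a = 2*(N:ℝ)*b := by
      rw [hb_def]; field_simp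
    rw [e1, div_pow, div_le_div_iff₀ hapos (by positivity)]
    rw [e2]
    have t1 : 4*(N:ℝ)*b^2 ≤ 3*(N:ℝ)^2*b^2 := by nlinarith
    have t2 : (N:ℝ)^2 ≤ 2*(N:ℝ)^3*b := by nlinarith
    nlinarith [t1, t2, sq_nonneg b, mul_pos hNpos hbpos]
  have h4 : Real.log (1+x) ≤ 2*(Real.log (((N:ℝ)+2+b)) - Real.log (1+b)) := by
    have h5 : Real.log (1+x) ≤ Real.log ((((N:ℝ)+2+b)/(1+b))^2) :=
      Real.log_le_log h1x key
    rw [Real.log_pow, Real.log_div (by linarith) (by positivity)] at h5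
    push_cast at h5
    linarith
  have hc : ((N+1:ℕ):ℝ)+(1+b) = (N:ℝ)+2+b := by push_cast; ring
  rw [hc] at h3
  rw [h2, ← Finset.mul_sum] at h1
  have h6 : (1/(2*(N:ℝ))) * ((1/2) * Real.log (1+x))
      ≤ (1/(2*(N:ℝ))) * (∑ j ∈ range (N+1), 1/((j:ℝ)+(1+b))) := by
    apply mul_le_mul_of_nonneg_left _ (by positivity)
    linarith
  have e : (1/(2*(N:ℝ))) * ((1/2) * Real.log (1+x))
      = 1/4 * (1/(N:ℝ)) * Real.log (1+x) := by ring
  rw [e] at h6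
  linarith

end regime2

theorem stmt3 :
    ∃ c C : ℝ, 0 < c ∧ 0 < C ∧ ∀ N : ℕ, 2 ≤ N → ∀ y : ℝ,
      (|y| ≤ (N : ℝ) →
        c * Real.log N / N ≤ A (lam N y) 1 ∧ A (lam N y) 1 ≤ C * Real.log N / N) ∧
      ((N : ℝ) ≤ |y| ∧ |y| ≤ (N : ℝ) ^ 2 →
        c * (1 / N) * Real.log (1 + (N : ℝ) ^ 2 / |y|) ≤ A (lam N y) 1 ∧
        A (lam N y) 1 ≤ C * (1 / N) * Real.log (1 + (N : ℝ) ^ 2 / |y|)) ∧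
      ((N : ℝ) ^ 2 ≤ |y| →
        c / Real.sqrt |y| ≤ A (lam N y) 1 ∧ A (lam N y) 1 ≤ C / Real.sqrt |y|) := by
  refine ⟨1/4, 20, by norm_num, by norm_num, ?_⟩
  intro N hN y
  have hNR : (2:ℝ) ≤ N := by exact_mod_cast Nat.cast_le.mpr hN
  have hNpos : (0:ℝ) < N := by linarith
  have ha0 : (0:ℝ) ≤ |y| := abs_nonneg y
  have hTA := T_le_A_one hN y
  have hAT := A_one_le_2T hN y
  refine ⟨?_, ?_, ?_⟩
  · -- regime (i)
    intro hy
    constructor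
    · have h1 := regime1_lower hN ha0 hy
      have e : 1/4 * Real.log (N:ℝ) / N = Real.log (N:ℝ) / (4*(N:ℝ)) := by ring
      rw [e]
      linarith
    · have h1 := regime1_upper hN ha0 hy
      have hlog1 : Real.log ((N:ℝ)+1) ≤ 2 * Real.log (N:ℝ) := by
        have h2 : Real.log ((N:ℝ)+1) ≤ Real.log ((N:ℝ)^2) :=
          Real.log_le_log (by linarith) (by nlinarith)
        rw [Real.log_pow] at h2
        push_cast at h2
        linarith
      have hlog2 : (1/2:ℝ) ≤ Real.log (N:ℝ) := by
        have h2 : Real.log 2 ≤ Real.log (N:ℝ) := Real.log_le_log two_pos hNR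
        have h3 := Real.log_two_gt_d9
        linarith
      have hnum : 6 + 4*Real.log ((N:ℝ)+1) ≤ 20 * Real.log (N:ℝ) := by linarith
      have h4 : A (lam N y) 1 ≤ (6 + 4*Real.log ((N:ℝ)+1))/N := by
        have h5 : 2 * ((3 + 2*Real.log ((N:ℝ)+1))/N) = (6 + 4*Real.log ((N:ℝ)+1))/N := by
          ring
        have h6 := mul_le_mul_of_nonneg_left h1 (by norm_num : (0:ℝ) ≤ 2)
        rw [h5] at h6
        linarith
      have h7 : (6 + 4*Real.log ((N:ℝ)+1))/N ≤ 20 * Real.log (N:ℝ) / N := by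
        rw [div_le_div_iff₀ hNpos hNpos]
        nlinarith [mul_nonneg (sub_nonneg.mpr hnum) hNpos.le]
      linarith
  · -- regime (ii)
    rintro ⟨hy1, hy2⟩
    constructor
    · have h1 := regime2_lower hN hy1 hy2
      linarith
    · have h1 := regime2_upper hN hy1 hy2
      set L := Real.log (1 + (N:ℝ)^2/|y|) with hL_def
      have hapos : (0:ℝ) < |y| := by linarith
      have hx1 : (1:ℝ) ≤ (N:ℝ)^2/|y| := by
        rw [le_div_iff₀ hapos]; linarith
      have hL2 : (1/2:ℝ) ≤ L := by
        have h2 : Real.log 2 ≤ L := by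
          rw [hL_def]
          exact Real.log_le_log two_pos (by linarith)
        have h3 := Real.log_two_gt_d9
        linarith
      have h4 : A (lam N y) 1 ≤ (2 + 8*L)/N := by
        have h5 : 2 * ((1 + 4*L)/N) = (2 + 8*L)/N := by ring
        have h6 := mul_le_mul_of_nonneg_left h1 (by norm_num : (0:ℝ) ≤ 2)
        rw [h5] at h6
        linarith
      have h7 : (2 + 8*L)/N ≤ 20 * (1/(N:ℝ)) * L := by
        have e : 20 * (1/(N:ℝ)) * L = (20*L)/N := by ring
        rw [e, div_le_div_iff₀ hNpos hNpos]
        have hnum : 2 + 8*L ≤ 20*L := by linarith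
        nlinarith [mul_nonneg (sub_nonneg.mpr hnum) hNpos.le]
      linarith
  · -- regime (iii)
    intro hy
    have hapos : (0:ℝ) < |y| := by nlinarith
    have hs : (0:ℝ) < Real.sqrt |y| := Real.sqrt_pos.mpr hapos
    constructor
    · have h1 := regime3_lower hN ha0 hy
      have h2 : 1/4 / Real.sqrt |y| ≤ 1/(3*Real.sqrt |y|) := by
        have e : (1:ℝ)/4 / Real.sqrt |y| = 1/(4*Real.sqrt |y|) := by ring
        rw [e]
        apply one_div_le_one_div_of_le (by positivity) (by linarith)
      linarith
    · have h1 := regime3_upper hN ha0 hy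
      have h4 : A (lam N y) 1 ≤ 10/Real.sqrt |y| := by
        have h5 : 2 * (5/Real.sqrt |y|) = 10/Real.sqrt |y| := by ring
        have h6 := mul_le_mul_of_nonneg_left h1 (by norm_num : (0:ℝ) ≤ 2)
        rw [h5] at h6
        linarith
      have h7 : 10/Real.sqrt |y| ≤ 20/Real.sqrt |y| := by
        rw [div_le_div_iff₀ hs hs]
        nlinarith
      linarith
end

section
/- For every r > 1 there exist constants c = c(r) > 0 and C = C(r) > 0 such that for every integer N ≥ 2 and every y ∈ ℝ, writing λ = N² + N + iy: (i) if |y| ≤ N then c/N ≤ A(λ, r) ≤ C/N; (ii) if N ≤ |y| ≤ N² then c · N^{−1/r} · |y|^{−1 + 1/r} ≤ A(λ, r) ≤ C · N^{−1/r} · |y|^{−1 + 1/r}; (iii) if |y| ≥ N² then c · |y|^{−1 + 1/(2r)} ≤ A(λ, r) ≤ C · |y|^{−1 + 1/(2r)}. -/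
open Finset

-- Bernoulli for nonpositive exponents
lemma bern {p x : ℝ} (hp : p ≤ 0) (hx : -1 < x) : 1 + p * x ≤ (1 + x) ^ p := by
  have h0 : (0:ℝ) < 1 + x := by linarith
  have h1 : Real.log (1 + x) ≤ x := by
    have := Real.log_le_sub_one_of_pos h0; linarith
  have h2 : p * x ≤ p * Real.log (1 + x) := mul_le_mul_of_nonpos_left h1 hp
  have h3 := Real.add_one_le_exp (Real.log (1 + x) * p)
  rw [Real.rpow_def_of_pos h0]
  nlinarith

lemma step {s : ℝ} (hs : 1 < s) {a : ℝ} (ha : 1 ≤ a) :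
    (s - 1) * (a + 1) ^ (-s) ≤ a ^ (1 - s) - (a + 1) ^ (1 - s) := by
  have hb : (0:ℝ) < a + 1 := by linarith
  have ha0 : (0:ℝ) < a := by linarith
  have hx : (-1:ℝ) < -(1/(a+1)) := by
    have : 1/(a+1) < 1 := by rw [div_lt_one hb]; linarith
    linarith
  have hB := bern (p := 1 - s) (x := -(1/(a+1))) (by linarith) hx
  have e1 : 1 + -(1/(a+1)) = a / (a+1) := by field_simp; ring
  rw [e1, Real.div_rpow ha0.le hb.le] at hB
  have hbp : (0:ℝ) < (a+1) ^ (1 - s) := Real.rpow_pos_of_pos hb _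
  have h2 : (1 + (1 - s) * -(1 / (a + 1))) * (a + 1) ^ (1 - s) ≤ a ^ (1 - s) :=
    (le_div_iff₀ hbp).mp hB
  have e2 : (a + 1) ^ (1 - s) * (a+1)⁻¹ = (a + 1) ^ (-s) := by
    rw [← Real.rpow_neg_one (a+1), ← Real.rpow_add hb]
    ring_nf
  have expand : (1 + (1 - s) * -(1 / (a + 1))) * (a + 1) ^ (1 - s)
      = (a+1)^(1-s) + (s-1) * ((a + 1) ^ (1 - s) * (a+1)⁻¹) := by ring
  rw [expand, e2] at h2
  linarith


lemma tailBound {s : ℝ} (hs : 1 < s) {K : ℕ} (hK : 1 ≤ K) :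
    ∑' m : ℕ, ((K : ℝ) + 1 + m) ^ (-s) ≤ (K : ℝ) ^ (1 - s) / (s - 1) := by
  have hs1 : (0:ℝ) < s - 1 := by linarith
  have hK1 : (1:ℝ) ≤ (K:ℝ) := by exact_mod_cast hK
  apply Real.tsum_le_of_sum_range_le
  · intro n; positivity
  · intro n
    have key : ∀ m ∈ range n, ((K:ℝ) + 1 + m) ^ (-s)
        ≤ ((((K:ℝ) + m) ^ (1-s)) - (((K:ℝ) + (m+1)) ^ (1-s))) / (s-1) := by
      intro m _
      have ha : (1:ℝ) ≤ (K:ℝ) + m := by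
        have : (0:ℝ) ≤ (m:ℝ) := Nat.cast_nonneg m
        linarith
      have h := step hs ha
      rw [le_div_iff₀ hs1]
      have e1 : ((K:ℝ) + m) + 1 = (K:ℝ) + 1 + m := by ring
      have e2 : (K:ℝ) + ((m:ℝ)+1) = (K:ℝ) + 1 + m := by ring
      rw [e1] at h
      rw [e2]
      linarith
    calc ∑ m ∈ range n, ((K:ℝ)+1+m)^(-s)
        ≤ ∑ m ∈ range n, ((((K:ℝ)+m)^(1-s)) - (((K:ℝ)+(m+1))^(1-s)))/(s-1) :=
          Finset.sum_le_sum key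
      _ = (∑ m ∈ range n, ((fun j : ℕ => ((K:ℝ)+j)^(1-s)) m - (fun j : ℕ => ((K:ℝ)+j)^(1-s)) (m+1)))/(s-1) := by
          rw [← Finset.sum_div]
          congr 1
          apply Finset.sum_congr rfl
          intro m _
          push_cast
          ring_nf
      _ = (((K:ℝ)+(0:ℕ))^(1-s) - ((K:ℝ)+n)^(1-s))/(s-1) := by
          rw [Finset.sum_range_sub' (fun j : ℕ => ((K:ℝ)+j)^(1-s)) n]
      _ ≤ (K:ℝ)^(1-s)/(s-1) := by
          have h0 : (0:ℝ) ≤ ((K:ℝ)+n)^(1-s) := Real.rpow_nonneg (by positivity) _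
          have : ((K:ℝ)+(0:ℕ))^(1-s) - ((K:ℝ)+n)^(1-s) ≤ (K:ℝ)^(1-s) := by
            push_cast; simp only [add_zero]; linarith
          exact div_le_div_of_nonneg_right this hs1.le |>.trans (le_refl _)
      
lemma summable_shift (s : ℝ) (hs : 1 < s) (K : ℕ) :
    Summable (fun m : ℕ => ((K : ℝ) + 1 + m) ^ (-s)) := by
  have h : Summable (fun n : ℕ => (n : ℝ) ^ (-s)) := Real.summable_nat_rpow.2 (by linarith)
  have h2 := (summable_nat_add_iff (K + 1)).2 h
  apply h2.congr
  intro m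
  push_cast
  ring_nf


noncomputable def fterm (N : ℕ) (y r : ℝ) (k : ℕ) : ℝ :=
  ((((N:ℝ)^2 + N) - (k:ℝ)^2)^2 + y^2) ^ (-(r/2))

noncomputable def gterm (N : ℕ) (y r : ℝ) (j : ℕ) : ℝ :=
  (((N:ℝ)*((j:ℝ)+1))^2 + y^2) ^ (-(r/2))

lemma uNe {N k : ℕ} (hN : 1 ≤ N) : (((N:ℝ)^2 + N) - (k:ℝ)^2) ≠ 0 := by
  rcases le_or_gt k N with h | h
  · have hk : (k:ℝ) ≤ N := by exact_mod_cast h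
    have hN' : (1:ℝ) ≤ N := by exact_mod_cast hN
    have hk0 : (0:ℝ) ≤ k := Nat.cast_nonneg k
    nlinarith
  · have hk : (N:ℝ) + 1 ≤ k := by exact_mod_cast h
    have h0 : (0:ℝ) ≤ N := Nat.cast_nonneg N
    nlinarith

lemma base_pos {N k : ℕ} (hN : 1 ≤ N) (y : ℝ) :
    0 < (((N:ℝ)^2 + N) - (k:ℝ)^2)^2 + y^2 := by
  have h := uNe (N := N) (k := k) hN
  positivity

lemma fterm_pos {N k : ℕ} (hN : 1 ≤ N) (y r : ℝ) : 0 < fterm N y r k :=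
  Real.rpow_pos_of_pos (base_pos hN y) _

lemma A_eq (N : ℕ) (hN : 1 ≤ N) (y r : ℝ) :
    A (lam N y) r = (∑' k : ℕ, fterm N y r k) ^ (1/r) := by
  unfold A
  congr 1
  apply tsum_congr
  intro k
  have h1 : lam N y - (k:ℂ)^2
      = Complex.ofReal (((N:ℝ)^2 + N) - (k:ℝ)^2) + Complex.ofReal y * Complex.I := by
    unfold lam; push_cast; ring
  rw [h1, Complex.norm_add_mul_I]
  have hb := base_pos (N := N) (k := k) hN y
  rw [Real.sqrt_eq_rpow, ← Real.rpow_mul hb.le, one_div, ← Real.rpow_neg hb.le]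
  unfold fterm
  congr 1
  ring

lemma sq_rpow {u : ℝ} (hu : 0 ≤ u) (p : ℝ) : (u^2) ^ p = u ^ (2*p) := by
  rw [← Real.rpow_natCast u 2, ← Real.rpow_mul hu]
  norm_num

lemma rbase_antitone {y r t u : ℝ} (hr : 0 < r) (h0 : 0 < u^2 + y^2) (h : u^2 ≤ t^2) :
    (t^2 + y^2) ^ (-(r/2)) ≤ (u^2 + y^2) ^ (-(r/2)) :=
  Real.rpow_le_rpow_of_nonpos h0 (by linarith) (by linarith)

lemma gg_le_t {y r t : ℝ} (hr : 0 < r) (ht : 0 < t) :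
    (t^2 + y^2) ^ (-(r/2)) ≤ t ^ (-r) := by
  have h1 : (t^2 + y^2) ^ (-(r/2)) ≤ (t^2) ^ (-(r/2)) := by
    apply Real.rpow_le_rpow_of_nonpos (by positivity) (by nlinarith [sq_nonneg y]) (by linarith)
  calc (t^2 + y^2) ^ (-(r/2)) ≤ (t^2) ^ (-(r/2)) := h1
    _ = t ^ (-r) := by rw [sq_rpow ht.le]; congr 1; ring

lemma gg_le_y {y r t : ℝ} (hr : 0 < r) (hy : y ≠ 0) :
    (t^2 + y^2) ^ (-(r/2)) ≤ |y| ^ (-r) := by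
  have hy2 : 0 < y^2 := by positivity
  have h1 : (t^2 + y^2) ^ (-(r/2)) ≤ (y^2) ^ (-(r/2)) := by
    apply Real.rpow_le_rpow_of_nonpos (by positivity) (by nlinarith [sq_nonneg t]) (by linarith)
  calc (t^2 + y^2) ^ (-(r/2)) ≤ (y^2) ^ (-(r/2)) := h1
    _ = |y| ^ (-r) := by
        rw [← sq_abs, sq_rpow (abs_nonneg y)]; congr 1; ring

lemma fterm_far {r : ℝ} (hr : 0 < r) {N k : ℕ} (hN : 1 ≤ N) (hk : 2*N+1 ≤ k) (y : ℝ) :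
    fterm N y r k ≤ (2:ℝ)^r * (k:ℝ)^(-(2*r)) := by
  have hkR : (2*(N:ℝ)+1) ≤ k := by exact_mod_cast hk
  have hN0 : (1:ℝ) ≤ (N:ℝ) := by exact_mod_cast hN
  have hk0 : (0:ℝ) < (k:ℝ) := by linarith
  have hksq : (2*(N:ℝ)+1)^2 ≤ (k:ℝ)^2 := by
    apply pow_le_pow_left₀ (by positivity) hkR 2
  have e1 : (k:ℝ)^2/2 ≤ (k:ℝ)^2 - ((N:ℝ)^2 + N) := by nlinarith
  have hd : ((k:ℝ)^2/2)^2 ≤ (((N:ℝ)^2 + N) - (k:ℝ)^2)^2 := by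
    rw [show (((N:ℝ)^2+N) - (k:ℝ)^2)^2 = ((k:ℝ)^2 - ((N:ℝ)^2+N))^2 by ring]
    exact pow_le_pow_left₀ (by positivity) e1 2
  have h1 : fterm N y r k ≤ (((k:ℝ)^2/2)^2 + y^2) ^ (-(r/2)) := by
    unfold fterm
    exact rbase_antitone hr (by positivity) hd
  have h2 : (((k:ℝ)^2/2)^2 + y^2) ^ (-(r/2)) ≤ ((k:ℝ)^2/2) ^ (-r) :=
    gg_le_t hr (by positivity)
  have h3 : ((k:ℝ)^2/2) ^ (-r) = (2:ℝ)^r * (k:ℝ)^(-(2*r)) := by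
    rw [Real.div_rpow (by positivity) (by norm_num), sq_rpow hk0.le,
      Real.rpow_neg (by norm_num : (0:ℝ) ≤ 2), div_eq_mul_inv, inv_inv, mul_comm]
    congr 1
    ring
  calc fterm N y r k ≤ _ := h1
    _ ≤ _ := h2
    _ = _ := h3

set_option maxHeartbeats 1000000 in
lemma fterm_summable {r : ℝ} (hr : 1 < r) {N : ℕ} (hN : 1 ≤ N) (y : ℝ) :
    Summable (fterm N y r) := by
  have hsum : Summable (fun k : ℕ => (2:ℝ)^r * (((k + (2*N+1) : ℕ)) : ℝ) ^ (-(2*r))) := by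
    apply Summable.mul_left
    exact (summable_nat_add_iff (2*N+1)).2 (Real.summable_nat_rpow.2 (by linarith))
  have key : Summable (fun k : ℕ => fterm N y r (k + (2*N+1))) := by
    apply Summable.of_nonneg_of_le (fun k => (fterm_pos hN y r).le)
      (fun k => fterm_far (by linarith) hN (by omega) y) hsum
  exact (summable_nat_add_iff (2*N+1)).1 key

lemma gterm_le {r : ℝ} (hr : 0 < r) {N : ℕ} (hN : 1 ≤ N) (y : ℝ) (j : ℕ) :
    gterm N y r j ≤ (N:ℝ)^(-r) * ((j:ℝ)+1)^(-r) := by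
  have hN0 : (0:ℝ) < (N:ℝ) := by exact_mod_cast hN
  have hj : (0:ℝ) < (j:ℝ)+1 := by positivity
  have h1 : gterm N y r j ≤ ((N:ℝ)*((j:ℝ)+1)) ^ (-r) := gg_le_t hr (by positivity)
  rwa [Real.mul_rpow hN0.le hj.le] at h1

lemma gterm_summable {r : ℝ} (hr : 1 < r) {N : ℕ} (hN : 1 ≤ N) (y : ℝ) :
    Summable (gterm N y r) := by
  have hsum : Summable (fun j : ℕ => (N:ℝ)^(-r) * ((j:ℝ)+1)^(-r)) := by
    apply Summable.mul_left
    have h := (summable_nat_add_iff 1).2 (Real.summable_nat_rpow.2 (by linarith : -r < -1))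
    apply h.congr; intro m; push_cast; ring_nf
  apply Summable.of_nonneg_of_le (fun j => ?_) (fun j => gterm_le (by linarith) hN y j) hsum
  · unfold gterm; positivity

lemma gterm_pos {N : ℕ} (hN : 1 ≤ N) (y r : ℝ) (j : ℕ) : 0 < gterm N y r j := by
  have hN0 : (0:ℝ) < N := by exact_mod_cast hN
  have : (0:ℝ) < ((N:ℝ)*((j:ℝ)+1))^2 + y^2 := by positivity
  exact Real.rpow_pos_of_pos this _

lemma fterm_le_gterm_left {r : ℝ} (hr : 0 < r) {N k : ℕ} (hN : 1 ≤ N) (hk : k ≤ N) (y : ℝ) :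
    fterm N y r k ≤ gterm N y r (N - k) := by
  have hN0 : (1:ℝ) ≤ N := by exact_mod_cast hN
  have hkR : (k:ℝ) ≤ N := by exact_mod_cast hk
  have hk0 : (0:ℝ) ≤ k := Nat.cast_nonneg k
  have hc : ((N - k : ℕ) : ℝ) = (N:ℝ) - k := by
    rw [Nat.cast_sub hk]
  unfold fterm gterm
  rw [hc]
  have hupos : 0 < (N:ℝ) * ((N:ℝ) - k + 1) := by nlinarith
  apply rbase_antitone hr (add_pos_of_pos_of_nonneg (pow_pos hupos 2) (sq_nonneg y))
  have hu : 0 ≤ (N:ℝ) * ((N:ℝ) - k + 1) := hupos.le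
  have hle : (N:ℝ) * ((N:ℝ) - k + 1) ≤ ((N:ℝ)^2 + N) - (k:ℝ)^2 := by nlinarith
  exact pow_le_pow_left₀ hu hle 2

lemma fterm_le_gterm_right {r : ℝ} (hr : 0 < r) {N : ℕ} (hN : 1 ≤ N) (j : ℕ) (y : ℝ) :
    fterm N y r (j + (N + 1)) ≤ gterm N y r j := by
  have hN0 : (1:ℝ) ≤ N := by exact_mod_cast hN
  have hj0 : (0:ℝ) ≤ j := Nat.cast_nonneg j
  unfold fterm gterm
  apply rbase_antitone hr (by positivity)
  have hc : ((j + (N+1) : ℕ) : ℝ) = (j:ℝ) + N + 1 := by push_cast; ring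
  rw [hc]
  have hu : 0 ≤ (N:ℝ) * ((j:ℝ) + 1) := by nlinarith
  have hle : (N:ℝ) * ((j:ℝ) + 1) ≤ ((j:ℝ) + N + 1)^2 - ((N:ℝ)^2 + N) := by nlinarith
  rw [show (((N:ℝ)^2 + N) - ((j:ℝ) + N + 1)^2)^2 = (((j:ℝ) + N + 1)^2 - ((N:ℝ)^2 + N))^2 by ring]
  exact pow_le_pow_left₀ hu hle 2

lemma S_le_two_T1 {r : ℝ} (hr : 1 < r) {N : ℕ} (hN : 1 ≤ N) (y : ℝ) :
    ∑' k, fterm N y r k ≤ 2 * ∑' j, gterm N y r j := by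
  have hf := fterm_summable hr hN y
  have hg := gterm_summable hr hN y
  rw [← Summable.sum_add_tsum_nat_add (N+1) hf]
  have part1 : ∑ k ∈ range (N+1), fterm N y r k ≤ ∑' j, gterm N y r j := by
    have h1 : ∑ k ∈ range (N+1), fterm N y r k ≤ ∑ k ∈ range (N+1), gterm N y r (N - k) := by
      apply Finset.sum_le_sum
      intro k hk
      have hk' := Finset.mem_range.mp hk
      exact fterm_le_gterm_left (by linarith) hN (by omega) y
    have h2 : ∑ k ∈ range (N+1), gterm N y r (N - k) = ∑ j ∈ range (N+1), gterm N y r j := by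
      have h := Finset.sum_range_reflect (fun j => gterm N y r j) (N+1)
      simpa using h
    calc ∑ k ∈ range (N+1), fterm N y r k ≤ _ := h1
      _ = _ := h2
      _ ≤ ∑' j, gterm N y r j := Summable.sum_le_tsum _ (fun j _ => (gterm_pos hN y r j).le) hg
  have part2 : ∑' j, fterm N y r (j + (N+1)) ≤ ∑' j, gterm N y r j :=
    Summable.tsum_le_tsum (fun j => fterm_le_gterm_right (by linarith) hN j y)
      ((summable_nat_add_iff (N+1)).2 hf) hg
  linarith

lemma zsum_summable {s : ℝ} (hs : 1 < s) : Summable (fun j : ℕ => ((j:ℝ)+1) ^ (-s)) := by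
  have h := (summable_nat_add_iff 1).2 (Real.summable_nat_rpow.2 (by linarith : -s < -1))
  apply h.congr; intro m; push_cast; ring_nf

lemma zsumBound {s : ℝ} (hs : 1 < s) :
    ∑' j : ℕ, ((j:ℝ)+1) ^ (-s) ≤ 1 + 1/(s-1) := by
  have hsum := zsum_summable hs
  rw [← Summable.sum_add_tsum_nat_add 1 hsum]
  have h1 : ∑ j ∈ range 1, ((j:ℝ)+1) ^ (-s) = 1 := by
    simp [Real.one_rpow]
  have h2 : ∑' j : ℕ, (((j + 1 : ℕ):ℝ)+1) ^ (-s) ≤ 1/(s-1) := by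
    have e : ∀ j : ℕ, (((j + 1 : ℕ):ℝ)+1) ^ (-s) = (((1:ℕ):ℝ) + 1 + j) ^ (-s) := by
      intro j; push_cast; ring_nf
    rw [tsum_congr e]
    calc ∑' j : ℕ, (((1:ℕ):ℝ) + 1 + j) ^ (-s) ≤ ((1:ℕ):ℝ)^(1-s)/(s-1) := tailBound hs le_rfl
      _ = 1/(s-1) := by norm_num
  rw [h1]
  linarith

lemma up_i {r : ℝ} (hr : 1 < r) {N : ℕ} (hN : 1 ≤ N) (y : ℝ) :
    ∑' k, fterm N y r k ≤ (2*(1+1/(r-1))) * (N:ℝ)^(-r) := by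
  have h1 := S_le_two_T1 hr hN y
  have h2 : ∑' j, gterm N y r j ≤ (N:ℝ)^(-r) * (1+1/(r-1)) := by
    calc ∑' j, gterm N y r j ≤ ∑' j : ℕ, (N:ℝ)^(-r) * ((j:ℝ)+1)^(-r) :=
        Summable.tsum_le_tsum (gterm_le (by linarith) hN y) (gterm_summable hr hN y)
          ((zsum_summable hr).mul_left _)
      _ = (N:ℝ)^(-r) * ∑' j : ℕ, ((j:ℝ)+1)^(-r) := tsum_mul_left
      _ ≤ (N:ℝ)^(-r) * (1+1/(r-1)) :=
        mul_le_mul_of_nonneg_left (zsumBound hr) (Real.rpow_nonneg (Nat.cast_nonneg N) _)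
  nlinarith [Real.rpow_nonneg (Nat.cast_nonneg N) (-r)]

lemma low_i {r : ℝ} (hr : 1 < r) {N : ℕ} (hN : 1 ≤ N) {y : ℝ} (hy : |y| ≤ N) :
    (2:ℝ)^(-(r/2)) * (N:ℝ)^(-r) ≤ ∑' k, fterm N y r k := by
  have hN0 : (0:ℝ) < N := by exact_mod_cast hN
  have hterm : (2:ℝ)^(-(r/2)) * (N:ℝ)^(-r) ≤ fterm N y r N := by
    unfold fterm
    have hy2 : y^2 ≤ (N:ℝ)^2 := by
      rw [← sq_abs y]
      exact pow_le_pow_left₀ (abs_nonneg y) hy 2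
    have hb : (((N:ℝ)^2 + N) - (N:ℝ)^2)^2 + y^2 ≤ 2*((N:ℝ)^2)^1 := by nlinarith
    have hb' : (((N:ℝ)^2 + N) - (N:ℝ)^2)^2 + y^2 ≤ 2*(N:ℝ)^2 := by nlinarith
    have h2 : (2*(N:ℝ)^2) ^ (-(r/2)) ≤ ((((N:ℝ)^2 + N) - (N:ℝ)^2)^2 + y^2) ^ (-(r/2)) :=
      Real.rpow_le_rpow_of_nonpos (base_pos hN y) hb' (by linarith)
    have h3 : (2:ℝ)^(-(r/2)) * (N:ℝ)^(-r) = (2*(N:ℝ)^2) ^ (-(r/2)) := by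
      rw [Real.mul_rpow (by norm_num) (by positivity), sq_rpow hN0.le]
      congr 2
      ring
    rw [h3]
    exact h2
  calc (2:ℝ)^(-(r/2)) * (N:ℝ)^(-r) ≤ fterm N y r N := hterm
    _ ≤ ∑' k, fterm N y r k :=
      Summable.le_tsum (fterm_summable hr hN y) N (fun k _ => (fterm_pos hN y r).le)

lemma T1_bound_ii {r : ℝ} (hr : 1 < r) {N : ℕ} (hN : 1 ≤ N) {y : ℝ} (hy : (N:ℝ) ≤ |y|) :
    ∑' j, gterm N y r j ≤ (1 + 2^(r-1)/(r-1)) * ((N:ℝ)⁻¹ * |y| ^ (1-r)) := by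
  set a := |y| with ha_def
  have hN0 : (0:ℝ) < N := by exact_mod_cast hN
  have ha : (0:ℝ) < a := lt_of_lt_of_le hN0 hy
  have hy0 : y ≠ 0 := abs_pos.mp ha
  set P : ℕ := Nat.floor (a / N) with hP_def
  have hP1 : 1 ≤ P := by
    apply Nat.le_floor
    rw [Nat.cast_one, le_div_iff₀ hN0]
    linarith
  have hP1R : (1:ℝ) ≤ P := by exact_mod_cast hP1
  have hPle : (P:ℝ) ≤ a / N := Nat.floor_le (by positivity)
  have hPge : a / N < (P:ℝ) + 1 := Nat.lt_floor_add_one _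
  have hg := gterm_summable hr hN y
  rw [← Summable.sum_add_tsum_nat_add P hg]
  have part1 : ∑ j ∈ range P, gterm N y r j ≤ (P:ℝ) * a^(-r) := by
    calc ∑ j ∈ range P, gterm N y r j ≤ ∑ _j ∈ range P, a^(-r) := by
          apply Finset.sum_le_sum
          intro j _
          exact gg_le_y (by linarith) hy0
      _ = (P:ℝ) * a^(-r) := by rw [Finset.sum_const, card_range, nsmul_eq_mul]
  have part2 : ∑' j, gterm N y r (j + P) ≤ (N:ℝ)^(-r) * ((P:ℝ)^(1-r)/(r-1)) := by
    have hb : ∀ j : ℕ, gterm N y r (j + P) ≤ (N:ℝ)^(-r) * (((P:ℕ):ℝ)+1+j)^(-r) := by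
      intro j
      calc gterm N y r (j+P) ≤ (N:ℝ)^(-r) * (((j+P:ℕ):ℝ)+1)^(-r) := gterm_le (by linarith) hN y _
        _ = (N:ℝ)^(-r) * (((P:ℕ):ℝ)+1+j)^(-r) := by push_cast; ring_nf
    calc ∑' j, gterm N y r (j + P) ≤ ∑' j : ℕ, (N:ℝ)^(-r) * (((P:ℕ):ℝ)+1+j)^(-r) :=
          Summable.tsum_le_tsum hb ((summable_nat_add_iff P).2 hg)
            ((summable_shift r hr P).mul_left _)
      _ = (N:ℝ)^(-r) * ∑' j : ℕ, (((P:ℕ):ℝ)+1+j)^(-r) := tsum_mul_left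
      _ ≤ (N:ℝ)^(-r) * ((P:ℝ)^(1-r)/(r-1)) :=
          mul_le_mul_of_nonneg_left (tailBound hr hP1) (Real.rpow_nonneg hN0.le _)
  have e0 : a^(1-r) = a * a^(-r) := by
    rw [show (1:ℝ)-r = 1 + (-r) by ring, Real.rpow_add ha, Real.rpow_one]
  have e1 : (P:ℝ) * a^(-r) ≤ (N:ℝ)⁻¹ * a^(1-r) := by
    calc (P:ℝ)*a^(-r) ≤ (a/N) * a^(-r) :=
          mul_le_mul_of_nonneg_right hPle (Real.rpow_nonneg ha.le _)
      _ = (N:ℝ)⁻¹ * (a * a^(-r)) := by ring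
      _ = (N:ℝ)⁻¹ * a^(1-r) := by rw [← e0]
  have e2 : (N:ℝ)^(-r) * ((P:ℝ)^(1-r)/(r-1)) ≤ (2^(r-1)/(r-1)) * ((N:ℝ)⁻¹ * a^(1-r)) := by
    have hP2 : a/(2*N) ≤ P := by
      have h1 : a ≤ N*((P:ℝ)+1) := by
        rw [div_lt_iff₀ hN0] at hPge
        linarith
      rw [div_le_iff₀ (by positivity)]
      nlinarith
    have hQ0 : (0:ℝ) < a/(2*N) := by positivity
    have h3 : (P:ℝ)^(1-r) ≤ (a/(2*N))^(1-r) :=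
      Real.rpow_le_rpow_of_nonpos hQ0 hP2 (by linarith)
    have h4 : (a/(2*N))^(1-r) = a^(1-r) * (2*N:ℝ)^(r-1) := by
      rw [Real.div_rpow ha.le (by positivity), div_eq_mul_inv, ← Real.rpow_neg (by positivity)]
      congr 2
      ring
    have h5 : (2*(N:ℝ))^(r-1) = 2^(r-1) * (N:ℝ)^(r-1) := Real.mul_rpow (by norm_num) hN0.le
    have h6 : (N:ℝ)^(-r) * (N:ℝ)^(r-1) = (N:ℝ)⁻¹ := by
      rw [← Real.rpow_add hN0, show -r + (r-1) = -1 by ring, Real.rpow_neg_one]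
    have hrpos : (0:ℝ) < r - 1 := by linarith
    have hNr : (0:ℝ) ≤ (N:ℝ)^(-r) := Real.rpow_nonneg hN0.le _
    calc (N:ℝ)^(-r) * ((P:ℝ)^(1-r)/(r-1)) ≤ (N:ℝ)^(-r) * ((a/(2*N))^(1-r)/(r-1)) := by
          apply mul_le_mul_of_nonneg_left _ hNr
          exact div_le_div_of_nonneg_right h3 hrpos.le
      _ = (2^(r-1)/(r-1)) * ((N:ℝ)⁻¹ * a^(1-r)) := by
          rw [h4, h5, ← h6]
          ring
  calc ∑ j ∈ range P, gterm N y r j + ∑' j, gterm N y r (j + P)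
      ≤ (P:ℝ)*a^(-r) + (N:ℝ)^(-r) * ((P:ℝ)^(1-r)/(r-1)) := add_le_add part1 part2
    _ ≤ (N:ℝ)⁻¹ * a^(1-r) + (2^(r-1)/(r-1)) * ((N:ℝ)⁻¹ * a^(1-r)) := add_le_add e1 e2
    _ = (1 + 2^(r-1)/(r-1)) * ((N:ℝ)⁻¹ * a^(1-r)) := by ring

lemma up_ii {r : ℝ} (hr : 1 < r) {N : ℕ} (hN : 1 ≤ N) {y : ℝ} (hy : (N:ℝ) ≤ |y|) :
    ∑' k, fterm N y r k ≤ (2*(1 + 2^(r-1)/(r-1))) * ((N:ℝ)⁻¹ * |y| ^ (1-r)) := by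
  have h1 := S_le_two_T1 hr hN y
  have h2 := T1_bound_ii hr hN hy
  linarith

lemma low_ii {r : ℝ} (hr : 1 < r) {N : ℕ} (hN : 1 ≤ N) {y : ℝ}
    (h1 : (N:ℝ) ≤ |y|) (h2 : |y| ≤ (N:ℝ)^2) :
    ((10:ℝ)^(-(r/2))/2) * ((N:ℝ)⁻¹ * |y| ^ (1-r)) ≤ ∑' k, fterm N y r k := by
  set a := |y| with ha_def
  have hN0 : (0:ℝ) < N := by exact_mod_cast hN
  have ha : (0:ℝ) < a := lt_of_lt_of_le hN0 h1
  set J : ℕ := Nat.floor (a / N) with hJ_def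
  have hJ1 : 1 ≤ J := by
    apply Nat.le_floor
    rw [Nat.cast_one, le_div_iff₀ hN0]
    linarith
  have hJ1R : (1:ℝ) ≤ J := by exact_mod_cast hJ1
  have hJle : (J:ℝ) ≤ a / N := Nat.floor_le (by positivity)
  have hJge : a / N < (J:ℝ) + 1 := Nat.lt_floor_add_one _
  have hNJ : (J:ℝ) * N ≤ a := (le_div_iff₀ hN0).mp hJle
  have hJN : (J:ℝ) ≤ N := by nlinarith
  have hy2 : y^2 = a^2 := (sq_abs y).symm
  have hbound : ∀ k ∈ Finset.Ico N (N+J),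
      (10:ℝ)^(-(r/2)) * a^(-r) ≤ fterm N y r k := by
    intro k hk
    have hk' := Finset.mem_Ico.mp hk
    have hkl : (N:ℝ) ≤ k := by exact_mod_cast hk'.1
    have hku : (k:ℝ) + 1 ≤ (N:ℝ) + J := by exact_mod_cast hk'.2
    have hd1 : ((N:ℝ)^2 + N) - (k:ℝ)^2 ≤ 3*a := by nlinarith
    have hd2 : -(3*a) ≤ ((N:ℝ)^2 + N) - (k:ℝ)^2 := by nlinarith
    have hdsq : (((N:ℝ)^2 + N) - (k:ℝ)^2)^2 ≤ (3*a)^2 := sq_le_sq' hd2 hd1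
    have hbase : (((N:ℝ)^2 + N) - (k:ℝ)^2)^2 + y^2 ≤ 10*a^2 := by
      rw [hy2]; nlinarith
    have h3 : (10*a^2) ^ (-(r/2)) ≤ fterm N y r k := by
      unfold fterm
      exact Real.rpow_le_rpow_of_nonpos (base_pos hN y) hbase (by linarith)
    have h4 : (10*a^2:ℝ) ^ (-(r/2)) = (10:ℝ)^(-(r/2)) * a^(-r) := by
      rw [Real.mul_rpow (by norm_num) (by positivity), sq_rpow ha.le]
      congr 2
      ring
    rw [← h4]
    exact h3
  have hcard : ((Finset.Ico N (N+J)).card : ℝ) = J := by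
    rw [Nat.card_Ico]; congr 1; omega
  have hsum1 : (J:ℝ) * ((10:ℝ)^(-(r/2)) * a^(-r)) ≤ ∑ k ∈ Finset.Ico N (N+J), fterm N y r k := by
    have := Finset.card_nsmul_le_sum (Finset.Ico N (N+J)) (fterm N y r)
      ((10:ℝ)^(-(r/2)) * a^(-r)) hbound
    rwa [nsmul_eq_mul, hcard] at this
  have hsum2 : ∑ k ∈ Finset.Ico N (N+J), fterm N y r k ≤ ∑' k, fterm N y r k :=
    Summable.sum_le_tsum _ (fun k _ => (fterm_pos hN y r).le) (fterm_summable hr hN y)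
  have hJ2 : a/(2*N) ≤ J := by
    rw [div_lt_iff₀ hN0] at hJge
    rw [div_le_iff₀ (by positivity)]
    nlinarith
  have e0 : a^(1-r) = a * a^(-r) := by
    rw [show (1:ℝ)-r = 1 + (-r) by ring, Real.rpow_add ha, Real.rpow_one]
  have hpos10 : (0:ℝ) ≤ (10:ℝ)^(-(r/2)) * a^(-r) := by positivity
  calc ((10:ℝ)^(-(r/2))/2) * ((N:ℝ)⁻¹ * a ^ (1-r))
      = (a/(2*N)) * ((10:ℝ)^(-(r/2)) * a^(-r)) := by
        rw [e0]; field_simp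
    _ ≤ (J:ℝ) * ((10:ℝ)^(-(r/2)) * a^(-r)) := mul_le_mul_of_nonneg_right hJ2 hpos10
    _ ≤ ∑ k ∈ Finset.Ico N (N+J), fterm N y r k := hsum1
    _ ≤ ∑' k, fterm N y r k := hsum2

lemma up_iii {r : ℝ} (hr : 1 < r) {N : ℕ} (hN : 2 ≤ N) {y : ℝ} (h2 : (N:ℝ)^2 ≤ |y|) :
    ∑' k, fterm N y r k ≤ (3 + 2^r*2^(2*r-1)/(2*r-1)) * |y|^(1/2-r) := by
  set a := |y| with ha_def
  have hN1 : 1 ≤ N := by omega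
  have hN2 : (2:ℝ) ≤ N := by exact_mod_cast hN
  have ha4 : (4:ℝ) ≤ a := by nlinarith
  have ha : (0:ℝ) < a := by linarith
  have hy0 : y ≠ 0 := abs_pos.mp ha
  set sq := Real.sqrt a with hsq_def
  have hsq0 : 0 < sq := Real.sqrt_pos.mpr ha
  have hsq2 : (2:ℝ) ≤ sq := by
    rw [hsq_def, show (2:ℝ) = Real.sqrt 4 by rw [show (4:ℝ) = 2^2 by norm_num, Real.sqrt_sq (by norm_num)]]
    exact Real.sqrt_le_sqrt ha4
  have hNsq : (N:ℝ) ≤ sq := by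
    rw [hsq_def]
    exact (Real.le_sqrt (by positivity) ha.le).mpr h2
  set Q : ℕ := max (Nat.floor sq) (2*N) with hQ_def
  have hQ1 : 1 ≤ Q := by
    have : 2*N ≤ Q := le_max_right _ _
    omega
  have hQcast : (Q:ℝ) = max ((Nat.floor sq : ℕ):ℝ) ((2*N:ℕ):ℝ) := by
    rw [hQ_def]; push_cast; rfl
  have hfl_le : ((Nat.floor sq : ℕ):ℝ) ≤ sq := Nat.floor_le hsq0.le
  have hfl_ge : sq - 1 ≤ ((Nat.floor sq : ℕ):ℝ) := by
    have := Nat.lt_floor_add_one sq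
    linarith
  have hQub : (Q:ℝ) ≤ 2*sq := by
    rw [hQcast]
    apply max_le
    · linarith
    · push_cast; linarith
  have hQlb : sq/2 ≤ (Q:ℝ) := by
    rw [hQcast]
    have : sq/2 ≤ sq - 1 := by linarith
    calc sq/2 ≤ ((Nat.floor sq : ℕ):ℝ) := by linarith
      _ ≤ _ := le_max_left _ _
  have hQ2N : 2*N ≤ Q := le_max_right _ _
  have hf := fterm_summable hr hN1 y
  rw [← Summable.sum_add_tsum_nat_add (Q+1) hf]
  have hsqrpow : sq * a^(-r) = a^(1/2-r) := by
    rw [hsq_def, Real.sqrt_eq_rpow, ← Real.rpow_add ha, show (1:ℝ)/2 + -r = 1/2 - r by ring]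
  have part1 : ∑ k ∈ range (Q+1), fterm N y r k ≤ 3 * a^(1/2-r) := by
    have hb : ∀ k ∈ range (Q+1), fterm N y r k ≤ a^(-r) := by
      intro k _
      unfold fterm
      exact gg_le_y (by linarith) hy0
    have := Finset.sum_le_card_nsmul (range (Q+1)) (fterm N y r) (a^(-r)) hb
    rw [card_range, nsmul_eq_mul] at this
    calc ∑ k ∈ range (Q+1), fterm N y r k ≤ ((Q+1:ℕ):ℝ) * a^(-r) := this
      _ ≤ (3*sq) * a^(-r) := by
          apply mul_le_mul_of_nonneg_right _ (Real.rpow_nonneg ha.le _)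
          push_cast; linarith
      _ = 3 * a^(1/2-r) := by rw [← hsqrpow]; ring
  have part2 : ∑' j, fterm N y r (j + (Q+1)) ≤ (2^r*2^(2*r-1)/(2*r-1)) * a^(1/2-r) := by
    have hb : ∀ j : ℕ, fterm N y r (j + (Q+1)) ≤ (2:ℝ)^r * (((Q:ℕ):ℝ)+1+j)^(-(2*r)) := by
      intro j
      have h := fterm_far (by linarith : (0:ℝ) < r) hN1 (by omega : 2*N+1 ≤ j + (Q+1)) y
      calc fterm N y r (j + (Q+1)) ≤ (2:ℝ)^r * (((j + (Q+1):ℕ)):ℝ)^(-(2*r)) := h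
        _ = (2:ℝ)^r * (((Q:ℕ):ℝ)+1+j)^(-(2*r)) := by push_cast; ring_nf
    have h2r : 1 < 2*r := by linarith
    calc ∑' j, fterm N y r (j + (Q+1))
        ≤ ∑' j : ℕ, (2:ℝ)^r * (((Q:ℕ):ℝ)+1+j)^(-(2*r)) :=
          Summable.tsum_le_tsum hb ((summable_nat_add_iff (Q+1)).2 hf)
            ((summable_shift (2*r) h2r Q).mul_left _)
      _ = (2:ℝ)^r * ∑' j : ℕ, (((Q:ℕ):ℝ)+1+j)^(-(2*r)) := tsum_mul_left
      _ ≤ (2:ℝ)^r * ((Q:ℝ)^(1-2*r)/(2*r-1)) :=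
          mul_le_mul_of_nonneg_left (tailBound h2r hQ1) (Real.rpow_nonneg (by norm_num) _)
      _ ≤ (2^r*2^(2*r-1)/(2*r-1)) * a^(1/2-r) := by
          have hQrpow : (Q:ℝ)^(1-2*r) ≤ (sq/2)^(1-2*r) :=
            Real.rpow_le_rpow_of_nonpos (by positivity) hQlb (by linarith)
          have e1 : (sq/2)^(1-2*r) = sq^(1-2*r) * 2^(2*r-1) := by
            rw [Real.div_rpow hsq0.le (by norm_num), div_eq_mul_inv,
              ← Real.rpow_neg (by norm_num : (0:ℝ) ≤ 2)]
            congr 2; ring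
          have e2 : sq^(1-2*r) = a^(1/2-r) := by
            rw [hsq_def, Real.sqrt_eq_rpow, ← Real.rpow_mul ha.le]
            congr 1; ring
          rw [e1, e2] at hQrpow
          have h2rp : (0:ℝ) < 2*r - 1 := by linarith
          have h2rnn : (0:ℝ) ≤ (2:ℝ)^r := Real.rpow_nonneg (by norm_num) _
          have harp : (0:ℝ) ≤ a^(1/2-r) := Real.rpow_nonneg ha.le _
          have h2e : (0:ℝ) ≤ (2:ℝ)^(2*r-1) := Real.rpow_nonneg (by norm_num) _
          calc (2:ℝ)^r * ((Q:ℝ)^(1-2*r)/(2*r-1))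
              ≤ (2:ℝ)^r * ((a^(1/2-r) * 2^(2*r-1))/(2*r-1)) := by
                apply mul_le_mul_of_nonneg_left _ h2rnn
                exact div_le_div_of_nonneg_right hQrpow h2rp.le
            _ = (2^r*2^(2*r-1)/(2*r-1)) * a^(1/2-r) := by ring
  calc ∑ k ∈ range (Q+1), fterm N y r k + ∑' j, fterm N y r (j + (Q+1))
      ≤ 3 * a^(1/2-r) + (2^r*2^(2*r-1)/(2*r-1)) * a^(1/2-r) := add_le_add part1 part2
    _ = (3 + 2^r*2^(2*r-1)/(2*r-1)) * a^(1/2-r) := by ring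

lemma low_iii {r : ℝ} (hr : 1 < r) {N : ℕ} (hN : 2 ≤ N) {y : ℝ} (h2 : (N:ℝ)^2 ≤ |y|) :
    (10:ℝ)^(-(r/2)) * |y|^(1/2-r) ≤ ∑' k, fterm N y r k := by
  set a := |y| with ha_def
  have hN1 : 1 ≤ N := by omega
  have hN2 : (2:ℝ) ≤ N := by exact_mod_cast hN
  have ha4 : (4:ℝ) ≤ a := by nlinarith
  have ha : (0:ℝ) < a := by linarith
  set sq := Real.sqrt a with hsq_def
  have hsq0 : 0 < sq := Real.sqrt_pos.mpr ha
  have hsqsq : sq^2 = a := Real.sq_sqrt ha.le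
  set Q : ℕ := Nat.floor sq with hQ_def
  have hQub : ((Q:ℕ):ℝ) ≤ sq := Nat.floor_le hsq0.le
  have hQlb : sq ≤ ((Q:ℕ):ℝ) + 1 := (Nat.lt_floor_add_one sq).le
  have hy2 : y^2 = a^2 := (sq_abs y).symm
  have hbound : ∀ k ∈ range (Q+1), (10:ℝ)^(-(r/2)) * a^(-r) ≤ fterm N y r k := by
    intro k hk
    have hk' : k ≤ Q := by
      have := Finset.mem_range.mp hk; omega
    have hkR : (k:ℝ) ≤ sq := le_trans (by exact_mod_cast hk') hQub
    have hk2 : (k:ℝ)^2 ≤ a := by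
      calc (k:ℝ)^2 ≤ sq^2 := pow_le_pow_left₀ (Nat.cast_nonneg k) hkR 2
        _ = a := hsqsq
    have hM : (N:ℝ)^2 + N ≤ 2*a := by nlinarith
    have hd1 : ((N:ℝ)^2 + N) - (k:ℝ)^2 ≤ 3*a := by nlinarith [sq_nonneg (k:ℝ)]
    have hd2 : -(3*a) ≤ ((N:ℝ)^2 + N) - (k:ℝ)^2 := by nlinarith [Nat.cast_nonneg (α := ℝ) N]
    have hdsq : (((N:ℝ)^2 + N) - (k:ℝ)^2)^2 ≤ (3*a)^2 := sq_le_sq' hd2 hd1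
    have hbase : (((N:ℝ)^2 + N) - (k:ℝ)^2)^2 + y^2 ≤ 10*a^2 := by
      rw [hy2]; nlinarith
    have h3 : (10*a^2) ^ (-(r/2)) ≤ fterm N y r k := by
      unfold fterm
      exact Real.rpow_le_rpow_of_nonpos (base_pos hN1 y) hbase (by linarith)
    have h4 : (10*a^2:ℝ) ^ (-(r/2)) = (10:ℝ)^(-(r/2)) * a^(-r) := by
      rw [Real.mul_rpow (by norm_num) (by positivity), sq_rpow ha.le]
      congr 2
      ring
    rw [← h4]
    exact h3
  have hsum1 : ((Q+1:ℕ):ℝ) * ((10:ℝ)^(-(r/2)) * a^(-r)) ≤ ∑ k ∈ range (Q+1), fterm N y r k := by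
    have := Finset.card_nsmul_le_sum (range (Q+1)) (fterm N y r)
      ((10:ℝ)^(-(r/2)) * a^(-r)) hbound
    rwa [card_range, nsmul_eq_mul] at this
  have hsum2 : ∑ k ∈ range (Q+1), fterm N y r k ≤ ∑' k, fterm N y r k :=
    Summable.sum_le_tsum _ (fun k _ => (fterm_pos hN1 y r).le) (fterm_summable hr hN1 y)
  have hsqrpow : sq * a^(-r) = a^(1/2-r) := by
    rw [hsq_def, Real.sqrt_eq_rpow, ← Real.rpow_add ha, show (1:ℝ)/2 + -r = 1/2 - r by ring]
  calc (10:ℝ)^(-(r/2)) * a^(1/2-r) = sq * ((10:ℝ)^(-(r/2)) * a^(-r)) := by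
        rw [← hsqrpow]; ring
    _ ≤ ((Q+1:ℕ):ℝ) * ((10:ℝ)^(-(r/2)) * a^(-r)) := by
        apply mul_le_mul_of_nonneg_right _ (by positivity)
        push_cast; linarith
    _ ≤ ∑ k ∈ range (Q+1), fterm N y r k := hsum1
    _ ≤ ∑' k, fterm N y r k := hsum2

lemma sandwich {r S X cp Cp : ℝ} (hr : 1 < r) (hX : 0 ≤ X) (hcp : 0 ≤ cp) (hCp : 0 ≤ Cp)
    (h1 : cp * X ≤ S) (h2 : S ≤ Cp * X) :
    cp^(1/r) * X^(1/r) ≤ S^(1/r) ∧ S^(1/r) ≤ Cp^(1/r) * X^(1/r) := by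
  have hS : 0 ≤ S := le_trans (mul_nonneg hcp hX) h1
  have h1r : (0:ℝ) ≤ 1/r := by positivity
  constructor
  · rw [← Real.mul_rpow hcp hX]
    exact Real.rpow_le_rpow (mul_nonneg hcp hX) h1 h1r
  · rw [← Real.mul_rpow hCp hX]
    exact Real.rpow_le_rpow hS h2 h1r

theorem stmt4 (r : ℝ) (hr : 1 < r) :
    ∃ c C : ℝ, 0 < c ∧ 0 < C ∧ ∀ N : ℕ, 2 ≤ N → ∀ y : ℝ,
      (|y| ≤ (N : ℝ) →
        c / N ≤ A (lam N y) r ∧ A (lam N y) r ≤ C / N) ∧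
      ((N : ℝ) ≤ |y| ∧ |y| ≤ (N : ℝ) ^ 2 →
        c * (N : ℝ) ^ (-(1 / r)) * |y| ^ (-1 + 1 / r) ≤ A (lam N y) r ∧
        A (lam N y) r ≤ C * (N : ℝ) ^ (-(1 / r)) * |y| ^ (-1 + 1 / r)) ∧
      ((N : ℝ) ^ 2 ≤ |y| →
        c * |y| ^ (-1 + 1 / (2 * r)) ≤ A (lam N y) r ∧
        A (lam N y) r ≤ C * |y| ^ (-1 + 1 / (2 * r))) := by
  have hr0 : (0:ℝ) < r := by linarith
  have hrne : r ≠ 0 := ne_of_gt hr0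
  set cp1 := (2:ℝ)^(-(r/2)) with hcp1_def
  set Cp1 := 2*(1+1/(r-1)) with hCp1_def
  set cp2 := (10:ℝ)^(-(r/2))/2 with hcp2_def
  set Cp2 := 2*(1+2^(r-1)/(r-1)) with hCp2_def
  set cp3 := (10:ℝ)^(-(r/2)) with hcp3_def
  set Cp3 := (3:ℝ) + 2^r*2^(2*r-1)/(2*r-1) with hCp3_def
  have hcp1 : 0 < cp1 := Real.rpow_pos_of_pos (by norm_num) _
  have hcp2 : 0 < cp2 := by
    have : (0:ℝ) < (10:ℝ)^(-(r/2)) := Real.rpow_pos_of_pos (by norm_num) _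
    rw [hcp2_def]; linarith
  have hcp3 : 0 < cp3 := Real.rpow_pos_of_pos (by norm_num) _
  have hCp1 : 0 < Cp1 := by
    have : (0:ℝ) < 1/(r-1) := div_pos one_pos (by linarith)
    rw [hCp1_def]; linarith
  have hCp2 : 0 < Cp2 := by
    have h1 : (0:ℝ) < 2^(r-1) := Real.rpow_pos_of_pos (by norm_num) _
    have h2 : (0:ℝ) < 2^(r-1)/(r-1) := by
      apply div_pos h1; linarith
    rw [hCp2_def]; linarith
  have hCp3 : 0 < Cp3 := by
    have h1 : (0:ℝ) < 2^r := Real.rpow_pos_of_pos (by norm_num) _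
    have h2 : (0:ℝ) < 2^(2*r-1) := Real.rpow_pos_of_pos (by norm_num) _
    have h3 : (0:ℝ) < 2^r*2^(2*r-1)/(2*r-1) := by
      apply div_pos (mul_pos h1 h2); linarith
    rw [hCp3_def]; linarith
  set c := min (cp1^(1/r)) (min (cp2^(1/r)) (cp3^(1/r))) with hc_def
  set C := max (Cp1^(1/r)) (max (Cp2^(1/r)) (Cp3^(1/r))) with hC_def
  have hc0 : 0 < c := by
    apply lt_min (Real.rpow_pos_of_pos hcp1 _)
    exact lt_min (Real.rpow_pos_of_pos hcp2 _) (Real.rpow_pos_of_pos hcp3 _)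
  have hC0 : 0 < C := lt_of_lt_of_le (Real.rpow_pos_of_pos hCp1 _) (le_max_left _ _)
  refine ⟨c, C, hc0, hC0, ?_⟩
  intro N hN y
  have hN1 : 1 ≤ N := by omega
  have hN0R : (0:ℝ) < N := by exact_mod_cast hN1
  have hAeq := A_eq N hN1 y r
  refine ⟨?_, ?_, ?_⟩
  · -- case (i)
    intro hy
    have h1 := low_i hr hN1 hy
    have h2 := up_i hr hN1 y
    have hX : (0:ℝ) ≤ (N:ℝ)^(-r) := Real.rpow_nonneg hN0R.le _
    obtain ⟨hl, hu⟩ := sandwich hr hX hcp1.le hCp1.le h1 h2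
    have eX : ((N:ℝ)^(-r))^(1/r) = ((N:ℝ))⁻¹ := by
      rw [← Real.rpow_mul hN0R.le, show -r*(1/r) = -1 by field_simp, Real.rpow_neg_one]
    rw [eX] at hl hu
    rw [hAeq]
    constructor
    · calc c / (N:ℝ) = c * (N:ℝ)⁻¹ := div_eq_mul_inv c _
        _ ≤ cp1^(1/r) * (N:ℝ)⁻¹ := by
            apply mul_le_mul_of_nonneg_right (min_le_left _ _) (by positivity)
        _ ≤ _ := hl
    · calc (∑' k, fterm N y r k)^(1/r) ≤ Cp1^(1/r) * (N:ℝ)⁻¹ := hu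
        _ ≤ C * (N:ℝ)⁻¹ := by
            apply mul_le_mul_of_nonneg_right (le_max_left _ _) (by positivity)
        _ = C / N := (div_eq_mul_inv C _).symm
  · -- case (ii)
    rintro ⟨hy1, hy2⟩
    have h1 := low_ii hr hN1 hy1 hy2
    have h2 := up_ii hr hN1 hy1
    have hay : (0:ℝ) ≤ |y| := abs_nonneg y
    have hX : (0:ℝ) ≤ (N:ℝ)⁻¹ * |y|^(1-r) := by positivity
    obtain ⟨hl, hu⟩ := sandwich hr hX hcp2.le hCp2.le h1 h2
    have eX : ((N:ℝ)⁻¹ * |y|^(1-r))^(1/r) = (N:ℝ)^(-(1/r)) * |y|^(-1+1/r) := by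
      rw [Real.mul_rpow (by positivity) (Real.rpow_nonneg hay _)]
      congr 1
      · rw [← Real.rpow_neg_one (N:ℝ), ← Real.rpow_mul hN0R.le,
          show (-1:ℝ)*(1/r) = -(1/r) by ring]
      · rw [← Real.rpow_mul hay, show (1-r)*(1/r) = -1+1/r by field_simp; ring]
    rw [eX] at hl hu
    rw [hAeq]
    constructor
    · calc c * (N:ℝ)^(-(1/r)) * |y|^(-1+1/r)
          = c * ((N:ℝ)^(-(1/r)) * |y|^(-1+1/r)) := by ring
        _ ≤ cp2^(1/r) * ((N:ℝ)^(-(1/r)) * |y|^(-1+1/r)) := by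
            apply mul_le_mul_of_nonneg_right _ (by positivity)
            exact le_trans (min_le_right _ _) (min_le_left _ _)
        _ = cp2^(1/r) * (N:ℝ)^(-(1/r)) * |y|^(-1+1/r) := by ring
        _ ≤ _ := by rw [mul_assoc]; exact hl
    · calc (∑' k, fterm N y r k)^(1/r)
          ≤ Cp2^(1/r) * ((N:ℝ)^(-(1/r)) * |y|^(-1+1/r)) := hu
        _ ≤ C * ((N:ℝ)^(-(1/r)) * |y|^(-1+1/r)) := by
            apply mul_le_mul_of_nonneg_right _ (by positivity)
            exact le_trans (le_max_left _ _) (le_max_right _ _)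
        _ = C * (N:ℝ)^(-(1/r)) * |y|^(-1+1/r) := by ring
  · -- case (iii)
    intro hy
    have h1 := low_iii hr hN hy
    have h2 := up_iii hr hN hy
    have hay : (0:ℝ) ≤ |y| := abs_nonneg y
    have hX : (0:ℝ) ≤ |y|^(1/2-r) := Real.rpow_nonneg hay _
    obtain ⟨hl, hu⟩ := sandwich hr hX hcp3.le hCp3.le h1 h2
    have eX : (|y|^(1/2-r))^(1/r) = |y|^(-1+1/(2*r)) := by
      rw [← Real.rpow_mul hay, show (1/2-r)*(1/r) = -1+1/(2*r) by field_simp; ring]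
    rw [eX] at hl hu
    rw [hAeq]
    constructor
    · calc c * |y|^(-1+1/(2*r)) ≤ cp3^(1/r) * |y|^(-1+1/(2*r)) := by
            apply mul_le_mul_of_nonneg_right _ (by positivity)
            exact le_trans (min_le_right _ _) (min_le_right _ _)
        _ ≤ _ := hl
    · calc (∑' k, fterm N y r k)^(1/r) ≤ Cp3^(1/r) * |y|^(-1+1/(2*r)) := hu
        _ ≤ C * |y|^(-1+1/(2*r)) := by
            apply mul_le_mul_of_nonneg_right _ (by positivity)
            exact le_trans (le_max_right _ _) (le_max_right _ _)
end

section
/- There exists a constant C > 0 such that for every integer N ≥ 2, ∫_{−∞}^{∞} A(N² + N + iy, 1)³ dy ≤ C/N. -/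
open MeasureTheory

open Finset Real

namespace Stmt6Aux

lemma cube_rt_cube (x : ℝ) (hx : 0 ≤ x) : ((x ^ ((3:ℝ)⁻¹)) ^ 3) = x := by
  rw [← Real.rpow_natCast (x ^ ((3:ℝ)⁻¹)) 3, ← Real.rpow_mul hx]
  norm_num

lemma sum_mthird (n : ℕ) :
    ∑ m ∈ range n, 1 / ((m:ℝ)+1) ^ ((2:ℝ)/3) ≤ 3 * (n:ℝ) ^ ((1:ℝ)/3) := by
  induction n with
  | zero => simp
  | succ n ih =>
    rw [Finset.sum_range_succ]
    have key : 1 / ((n:ℝ)+1) ^ ((2:ℝ)/3) ≤ 3 * (((n:ℝ)+1) ^ ((1:ℝ)/3) - (n:ℝ) ^ ((1:ℝ)/3)) := by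
      set a := (n:ℝ) ^ ((1:ℝ)/3) with ha
      set b := ((n:ℝ)+1) ^ ((1:ℝ)/3) with hb
      have ha0 : 0 ≤ a := Real.rpow_nonneg (by positivity) _
      have hb0 : 0 < b := Real.rpow_pos_of_pos (by positivity) _
      have hab : a ≤ b := Real.rpow_le_rpow (by positivity) (by linarith) (by norm_num)
      have ha3 : a ^ 3 = (n:ℝ) := by
        rw [ha, ← Real.rpow_natCast ((n:ℝ) ^ ((1:ℝ)/3)) 3, ← Real.rpow_mul (by positivity)]
        norm_num
      have hb3 : b ^ 3 = (n:ℝ) + 1 := by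
        rw [hb, ← Real.rpow_natCast (((n:ℝ)+1) ^ ((1:ℝ)/3)) 3, ← Real.rpow_mul (by positivity)]
        norm_num
      have hb2 : ((n:ℝ)+1) ^ ((2:ℝ)/3) = b ^ 2 := by
        rw [hb, ← Real.rpow_natCast (((n:ℝ)+1) ^ ((1:ℝ)/3)) 2, ← Real.rpow_mul (by positivity)]
        norm_num
      rw [hb2, div_le_iff₀ (by positivity)]
      nlinarith [sq_nonneg (b - a), sq_nonneg b, mul_nonneg ha0 hb0.le]
    have hcast : ((n+1:ℕ):ℝ) = (n:ℝ)+1 := by push_cast; ring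
    rw [hcast]
    linarith

lemma term_tel (k : ℕ) (hk : 1 ≤ k) :
    1 / ((k:ℝ)+1) ^ ((4:ℝ)/3) ≤ 3 * (1 / (k:ℝ) ^ ((1:ℝ)/3) - 1 / ((k:ℝ)+1) ^ ((1:ℝ)/3)) := by
  have hk0 : (0:ℝ) < (k:ℝ) := by exact_mod_cast hk
  set a := (k:ℝ) ^ ((1:ℝ)/3) with ha
  set b := ((k:ℝ)+1) ^ ((1:ℝ)/3) with hb
  have ha0 : 0 < a := Real.rpow_pos_of_pos hk0 _
  have hb0 : 0 < b := Real.rpow_pos_of_pos (by positivity) _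
  have hab : a ≤ b := Real.rpow_le_rpow hk0.le (by linarith) (by norm_num)
  have ha3 : a ^ 3 = (k:ℝ) := by
    rw [ha, ← Real.rpow_natCast ((k:ℝ) ^ ((1:ℝ)/3)) 3, ← Real.rpow_mul hk0.le]; norm_num
  have hb3 : b ^ 3 = (k:ℝ) + 1 := by
    rw [hb, ← Real.rpow_natCast (((k:ℝ)+1) ^ ((1:ℝ)/3)) 3, ← Real.rpow_mul (by positivity)]
    norm_num
  have hb4 : ((k:ℝ)+1) ^ ((4:ℝ)/3) = b ^ 4 := by
    rw [hb, ← Real.rpow_natCast (((k:ℝ)+1) ^ ((1:ℝ)/3)) 4, ← Real.rpow_mul (by positivity)]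
    norm_num
  rw [hb4, div_sub_div _ _ (ne_of_gt ha0) (ne_of_gt hb0), one_mul, mul_one,
    div_le_iff₀ (by positivity)]
  have e : 3 * ((b - a) / (a * b)) * b ^ 4 = (3 * (b-a) * b^4) / (a*b) := by ring
  rw [e, le_div_iff₀ (by positivity), one_mul]
  have h1 : (b-a)*(a^2+a*b+b^2) = 1 := by nlinarith
  have h2 : a^2+a*b+b^2 ≤ 3*b^2 := by nlinarith [sq_nonneg (b-a)]
  have h3 : 1 ≤ 3*(b-a)*b^2 := by nlinarith [mul_le_mul_of_nonneg_left h2 (sub_nonneg.2 hab)]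
  nlinarith [mul_le_mul_of_nonneg_left h3 (sq_nonneg b), mul_le_mul_of_nonneg_left hab hb0.le]

lemma tail_sum (a K : ℕ) (ha : 1 ≤ a) :
    ∑ k ∈ Finset.Ico a K, 1 / ((k:ℝ)+1) ^ ((4:ℝ)/3) ≤ 3 / (a:ℝ) ^ ((1:ℝ)/3) := by
  rcases le_or_gt a K with h | h
  · calc ∑ k ∈ Finset.Ico a K, 1 / ((k:ℝ)+1) ^ ((4:ℝ)/3)
        ≤ ∑ k ∈ Finset.Ico a K, 3 * (1 / (k:ℝ) ^ ((1:ℝ)/3) - 1 / ((k:ℝ)+1) ^ ((1:ℝ)/3)) := by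
          apply Finset.sum_le_sum
          intro k hk
          exact term_tel k (le_trans ha (Finset.mem_Ico.1 hk).1)
      _ = 3 * ∑ k ∈ Finset.Ico a K, ((fun j : ℕ => 1 / (j:ℝ) ^ ((1:ℝ)/3)) k
            - (fun j : ℕ => 1 / (j:ℝ) ^ ((1:ℝ)/3)) (k+1)) := by
          rw [Finset.mul_sum]; apply Finset.sum_congr rfl; intro k _; push_cast; ring_nf
      _ ≤ 3 / (a:ℝ) ^ ((1:ℝ)/3) := by
          rw [Finset.sum_Ico_eq_sum_range]
          have : ∀ k, ((fun j : ℕ => 1 / (j:ℝ) ^ ((1:ℝ)/3)) (a + k)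
              - (fun j : ℕ => 1 / (j:ℝ) ^ ((1:ℝ)/3)) (a + k + 1))
              = ((fun i : ℕ => 1 / ((a+i:ℕ):ℝ) ^ ((1:ℝ)/3)) k
                - (fun i : ℕ => 1 / ((a+i:ℕ):ℝ) ^ ((1:ℝ)/3)) (k+1)) := by
            intro k; simp [Nat.add_assoc]
          simp only [this]
          rw [Finset.sum_range_sub' (fun i => 1 / ((a+i:ℕ):ℝ) ^ ((1:ℝ)/3)) (K - a)]
          have h1 : (1:ℝ) / ((a+0:ℕ):ℝ) ^ ((1:ℝ)/3) = 1 / (a:ℝ) ^ ((1:ℝ)/3) := by norm_num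
          have h2 : (0:ℝ) ≤ 1 / ((a+(K-a):ℕ):ℝ) ^ ((1:ℝ)/3) := by positivity
          rw [h1]
          have h3 : (3:ℝ)/(a:ℝ)^((1:ℝ)/3) = 3 * (1/(a:ℝ)^((1:ℝ)/3)) := by ring
          rw [h3]
          linarith [h2]
  · rw [Finset.Ico_eq_empty (by omega)]
    simp
    positivity

lemma dbound1 (N k : ℕ) (h2 : 2 ≤ N) :
    (N:ℝ) * (|(k:ℝ) - (N:ℝ)| + 1) / 2 ≤ |(N:ℝ)^2 + (N:ℝ) - (k:ℝ)^2| := by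
  have hN : (2:ℝ) ≤ (N:ℝ) := by exact_mod_cast h2
  have hk0 : (0:ℝ) ≤ (k:ℝ) := Nat.cast_nonneg k
  rcases le_or_gt (k:ℝ) (N:ℝ) with h | h
  · rw [abs_of_nonpos (by linarith), abs_of_nonneg (by nlinarith)]
    nlinarith
  · have hk1 : (N:ℝ) + 1 ≤ (k:ℝ) := by
      have : N + 1 ≤ k := by exact_mod_cast Nat.succ_le_of_lt (by exact_mod_cast h)
      exact_mod_cast this
    rw [abs_of_nonneg (by linarith), abs_of_nonpos (by nlinarith)]
    nlinarith

lemma dbound3 (N k : ℕ) (h2 : 2 ≤ N) (hk : 2*N+1 ≤ k) :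
    ((k:ℝ) + 1)^2 / 8 ≤ |(N:ℝ)^2 + (N:ℝ) - (k:ℝ)^2| := by
  have hN : (2:ℝ) ≤ (N:ℝ) := by exact_mod_cast h2
  have hk' : 2*(N:ℝ) + 1 ≤ (k:ℝ) := by exact_mod_cast hk
  rw [abs_of_nonpos (by nlinarith)]
  nlinarith

lemma dpos (N k : ℕ) (h2 : 2 ≤ N) : (1:ℝ) ≤ |(N:ℝ)^2 + (N:ℝ) - (k:ℝ)^2| := by
  have hN : (2:ℝ) ≤ (N:ℝ) := by exact_mod_cast h2
  have h := dbound1 N k h2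
  have : (0:ℝ) ≤ |(k:ℝ) - (N:ℝ)| := abs_nonneg _
  nlinarith

lemma inv_rpow_le {d e : ℝ} (he : 0 < e) (hle : e ≤ d) {q : ℝ} (hq : 0 ≤ q) :
    1 / d ^ q ≤ 1 / e ^ q :=
  one_div_le_one_div_of_le (Real.rpow_pos_of_pos he q) (Real.rpow_le_rpow he.le hle hq)

lemma series_bound (N : ℕ) (h2 : 2 ≤ N) (s : Finset ℕ) :
    ∑ k ∈ s, 2 / |(N:ℝ)^2 + (N:ℝ) - (k:ℝ)^2| ^ ((2:ℝ)/3) ≤ 72 / (N:ℝ) ^ ((1:ℝ)/3) := by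
  have hN2 : (2:ℝ) ≤ (N:ℝ) := by exact_mod_cast h2
  have hN0 : (0:ℝ) < (N:ℝ) := by linarith
  set F : ℕ → ℝ := fun k => 2 / |(N:ℝ)^2 + (N:ℝ) - (k:ℝ)^2| ^ ((2:ℝ)/3) with hF
  have hFnn : ∀ k, 0 ≤ F k := fun k => by positivity
  obtain ⟨K, hK1, hK2⟩ : ∃ K, s ⊆ range K ∧ 2*N+1 ≤ K := by
    refine ⟨max (s.sup id + 1) (2*N+1), fun x hx => ?_, le_max_right _ _⟩
    exact Finset.mem_range.2 (lt_of_lt_of_le (Nat.lt_succ_of_le (Finset.le_sup (f := id) hx))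
      (le_max_left _ _))
  have hsub : ∑ k ∈ s, F k ≤ ∑ k ∈ range K, F k :=
    Finset.sum_le_sum_of_subset_of_nonneg hK1 (fun k _ _ => hFnn k)
  have hsplit : ∑ k ∈ range K, F k
      = ∑ k ∈ range (2*N+1), F k + ∑ k ∈ Finset.Ico (2*N+1) K, F k := by
    rw [Finset.range_eq_Ico, ← Finset.sum_Ico_consecutive _ (Nat.zero_le _) hK2,
      ← Finset.range_eq_Ico]
  set g : ℕ → ℝ := fun m => 1 / ((m:ℝ)+1) ^ ((2:ℝ)/3) with hg
  have hgnn : ∀ m, 0 ≤ g m := fun m => by positivity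
  have hterm : ∀ k : ℕ, F k ≤ (4 / (N:ℝ) ^ ((2:ℝ)/3)) * (1 / (|(k:ℝ) - (N:ℝ)| + 1) ^ ((2:ℝ)/3)) := by
    intro k
    have hm0 : (0:ℝ) < |(k:ℝ) - (N:ℝ)| + 1 := by positivity
    have he : (0:ℝ) < (N:ℝ) * (|(k:ℝ) - (N:ℝ)| + 1) / 2 := by positivity
    have h1 : F k ≤ 2 / ((N:ℝ) * (|(k:ℝ) - (N:ℝ)| + 1) / 2) ^ ((2:ℝ)/3) := by
      have hh := inv_rpow_le he (dbound1 N k h2) (by norm_num : (0:ℝ) ≤ (2:ℝ)/3)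
      calc F k = 2 * (1 / |(N:ℝ)^2 + (N:ℝ) - (k:ℝ)^2| ^ ((2:ℝ)/3)) := by rw [hF]; ring
        _ ≤ 2 * (1 / ((N:ℝ) * (|(k:ℝ) - (N:ℝ)| + 1) / 2) ^ ((2:ℝ)/3)) :=
            mul_le_mul_of_nonneg_left hh (by norm_num)
        _ = 2 / ((N:ℝ) * (|(k:ℝ) - (N:ℝ)| + 1) / 2) ^ ((2:ℝ)/3) := by ring
    refine h1.trans ?_
    rw [Real.div_rpow (by positivity) (by norm_num : (0:ℝ) ≤ 2),
      Real.mul_rpow hN0.le hm0.le, div_div_eq_mul_div]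
    have hX : (0:ℝ) < (N:ℝ) ^ ((2:ℝ)/3) * (|(k:ℝ) - (N:ℝ)| + 1) ^ ((2:ℝ)/3) := by
      positivity
    have hR : 4 / (N:ℝ) ^ ((2:ℝ)/3) * (1 / (|(k:ℝ) - (N:ℝ)| + 1) ^ ((2:ℝ)/3))
        = 4 / ((N:ℝ) ^ ((2:ℝ)/3) * (|(k:ℝ) - (N:ℝ)| + 1) ^ ((2:ℝ)/3)) := by
      rw [div_mul_div_comm, mul_one]
    rw [hR, div_le_div_iff₀ hX hX]
    have h23 : (2:ℝ) ^ ((2:ℝ)/3) ≤ 2 := by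
      calc (2:ℝ) ^ ((2:ℝ)/3) ≤ (2:ℝ) ^ (1:ℝ) :=
            Real.rpow_le_rpow_of_exponent_le (by norm_num) (by norm_num)
        _ = 2 := Real.rpow_one 2
    nlinarith [hX.le]
  have hreflect : ∑ k ∈ range (N+1), (1 / (|(k:ℝ) - (N:ℝ)| + 1) ^ ((2:ℝ)/3))
      = ∑ m ∈ range (N+1), g m := by
    have e : ∀ k ∈ range (N+1), (1 / (|(k:ℝ) - (N:ℝ)| + 1) ^ ((2:ℝ)/3)) = g (N+1-1-k) := by
      intro k hk
      have hkN : k ≤ N := Nat.lt_succ_iff.1 (Finset.mem_range.1 hk)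
      have : |(k:ℝ) - (N:ℝ)| = ((N - k : ℕ) : ℝ) := by
        rw [Nat.cast_sub hkN, abs_sub_comm, abs_of_nonneg (by
          have : (k:ℝ) ≤ (N:ℝ) := by exact_mod_cast hkN
          linarith)]
      rw [hg]
      simp only [Nat.add_sub_cancel]
      rw [this]
    rw [Finset.sum_congr rfl e, Finset.sum_range_reflect g (N+1)]
  have hmid : ∑ k ∈ Finset.Ico (N+1) (2*N+1), (1 / (|(k:ℝ) - (N:ℝ)| + 1) ^ ((2:ℝ)/3))
      ≤ ∑ m ∈ range (N+1), g m := by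
    rw [Finset.sum_Ico_eq_sum_range]
    have e2 : 2*N+1 - (N+1) = N := by omega
    rw [e2]
    have e : ∀ i ∈ range N, (1 / (|((N+1+i:ℕ):ℝ) - (N:ℝ)| + 1) ^ ((2:ℝ)/3)) = g (i+1) := by
      intro i _
      have : |((N+1+i:ℕ):ℝ) - (N:ℝ)| = (i:ℝ) + 1 := by
        push_cast
        rw [abs_of_nonneg (by linarith)]
        ring
      rw [hg, this]
      push_cast
      ring_nf
    rw [Finset.sum_congr rfl e]
    calc ∑ i ∈ range N, g (i+1) ≤ (∑ i ∈ range N, g (i+1)) + g 0 := by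
          linarith [hgnn 0]
      _ = ∑ m ∈ range (N+1), g m := (Finset.sum_range_succ' g N).symm
  have hnearsum : ∑ k ∈ range (2*N+1), (1 / (|(k:ℝ) - (N:ℝ)| + 1) ^ ((2:ℝ)/3))
      ≤ 2 * ∑ m ∈ range (N+1), g m := by
    have hsplit2 : range (2*N+1) = range (N+1) ∪ Finset.Ico (N+1) (2*N+1) := by
      rw [Finset.range_eq_Ico, Finset.range_eq_Ico]
      exact (Finset.Ico_union_Ico_eq_Ico (Nat.zero_le (N+1)) (by omega : N+1 ≤ 2*N+1)).symm
    rw [hsplit2, Finset.sum_union (by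
      rw [Finset.range_eq_Ico]
      exact Finset.Ico_disjoint_Ico_consecutive 0 (N+1) (2*N+1))]
    linarith [hreflect, hmid]
  have hnear : ∑ k ∈ range (2*N+1), F k ≤ 48 / (N:ℝ) ^ ((1:ℝ)/3) := by
    calc ∑ k ∈ range (2*N+1), F k
        ≤ ∑ k ∈ range (2*N+1), (4 / (N:ℝ) ^ ((2:ℝ)/3)) * (1 / (|(k:ℝ) - (N:ℝ)| + 1) ^ ((2:ℝ)/3)) :=
          Finset.sum_le_sum fun k _ => hterm k
      _ = (4 / (N:ℝ) ^ ((2:ℝ)/3)) * ∑ k ∈ range (2*N+1), (1 / (|(k:ℝ) - (N:ℝ)| + 1) ^ ((2:ℝ)/3)) :=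
          (Finset.mul_sum _ _ _).symm
      _ ≤ (4 / (N:ℝ) ^ ((2:ℝ)/3)) * (2 * (3 * ((N:ℝ)+1) ^ ((1:ℝ)/3))) := by
          apply mul_le_mul_of_nonneg_left _ (by positivity)
          refine le_trans (hnearsum) ?_
          have := sum_mthird (N+1)
          push_cast at this
          linarith
      _ ≤ 48 / (N:ℝ) ^ ((1:ℝ)/3) := by
          rw [div_mul_eq_mul_div, div_le_div_iff₀ (by positivity) (by positivity)]
          have key : ((N:ℝ)+1) ^ ((1:ℝ)/3) * (N:ℝ) ^ ((1:ℝ)/3) ≤ 2 * (N:ℝ) ^ ((2:ℝ)/3) := by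
            rw [← Real.mul_rpow (by positivity) (by positivity)]
            have h1 : ((N:ℝ)+1) * (N:ℝ) ≤ 2 * (N:ℝ)^2 := by nlinarith
            calc (((N:ℝ)+1) * (N:ℝ)) ^ ((1:ℝ)/3) ≤ (2 * (N:ℝ)^2) ^ ((1:ℝ)/3) :=
                  Real.rpow_le_rpow (by positivity) h1 (by norm_num)
              _ = 2 ^ ((1:ℝ)/3) * ((N:ℝ)^2) ^ ((1:ℝ)/3) :=
                  Real.mul_rpow (by norm_num) (by positivity)
              _ ≤ 2 * (N:ℝ) ^ ((2:ℝ)/3) := by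
                  have h2 : ((N:ℝ)^2) ^ ((1:ℝ)/3) = (N:ℝ) ^ ((2:ℝ)/3) := by
                    rw [← Real.rpow_natCast (N:ℝ) 2, ← Real.rpow_mul hN0.le]
                    norm_num
                  rw [h2]
                  have h3 : (2:ℝ) ^ ((1:ℝ)/3) ≤ 2 := by
                    calc (2:ℝ) ^ ((1:ℝ)/3) ≤ (2:ℝ) ^ (1:ℝ) :=
                          Real.rpow_le_rpow_of_exponent_le (by norm_num) (by norm_num)
                      _ = 2 := Real.rpow_one 2
                  have h4 : (0:ℝ) ≤ (N:ℝ) ^ ((2:ℝ)/3) := by positivity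
                  nlinarith
          nlinarith [Real.rpow_pos_of_pos hN0 ((1:ℝ)/3), Real.rpow_pos_of_pos hN0 ((2:ℝ)/3),
            key]
  have htail : ∑ k ∈ Finset.Ico (2*N+1) K, F k ≤ 24 / (N:ℝ) ^ ((1:ℝ)/3) := by
    have hterm3 : ∀ k ∈ Finset.Ico (2*N+1) K, F k ≤ 8 * (1 / ((k:ℝ)+1) ^ ((4:ℝ)/3)) := by
      intro k hk
      have hk2 : 2*N+1 ≤ k := (Finset.mem_Ico.1 hk).1
      have he : (0:ℝ) < ((k:ℝ)+1)^2/8 := by positivity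
      have hh := inv_rpow_le he (dbound3 N k h2 hk2) (by norm_num : (0:ℝ) ≤ (2:ℝ)/3)
      have hrw : (((k:ℝ)+1)^2/8) ^ ((2:ℝ)/3) = ((k:ℝ)+1) ^ ((4:ℝ)/3) / 4 := by
        rw [Real.div_rpow (by positivity) (by norm_num)]
        congr 1
        · rw [← Real.rpow_natCast ((k:ℝ)+1) 2, ← Real.rpow_mul (by positivity)]
          norm_num
        · rw [show (8:ℝ) = 2^(3:ℕ) by norm_num, ← Real.rpow_natCast (2:ℝ) 3,
            ← Real.rpow_mul (by norm_num)]
          norm_num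
      rw [hrw] at hh
      calc F k = 2 * (1 / |(N:ℝ)^2 + (N:ℝ) - (k:ℝ)^2| ^ ((2:ℝ)/3)) := by rw [hF]; ring
        _ ≤ 2 * (1 / (((k:ℝ)+1) ^ ((4:ℝ)/3) / 4)) := mul_le_mul_of_nonneg_left hh (by norm_num)
        _ = 8 * (1 / ((k:ℝ)+1) ^ ((4:ℝ)/3)) := by
            rw [one_div_div]
            ring
    calc ∑ k ∈ Finset.Ico (2*N+1) K, F k
        ≤ ∑ k ∈ Finset.Ico (2*N+1) K, 8 * (1 / ((k:ℝ)+1) ^ ((4:ℝ)/3)) :=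
          Finset.sum_le_sum hterm3
      _ = 8 * ∑ k ∈ Finset.Ico (2*N+1) K, 1 / ((k:ℝ)+1) ^ ((4:ℝ)/3) := (Finset.mul_sum _ _ _).symm
      _ ≤ 8 * (3 / ((2*N+1:ℕ):ℝ) ^ ((1:ℝ)/3)) := by
          apply mul_le_mul_of_nonneg_left _ (by norm_num)
          exact tail_sum (2*N+1) K (by omega)
      _ ≤ 24 / (N:ℝ) ^ ((1:ℝ)/3) := by
          have h1 : (N:ℝ) ≤ ((2*N+1:ℕ):ℝ) := by push_cast; linarith
          have h2 : (N:ℝ) ^ ((1:ℝ)/3) ≤ ((2*N+1:ℕ):ℝ) ^ ((1:ℝ)/3) :=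
            Real.rpow_le_rpow hN0.le h1 (by norm_num)
          have h3 : (0:ℝ) < (N:ℝ) ^ ((1:ℝ)/3) := Real.rpow_pos_of_pos hN0 _
          rw [show (8:ℝ) * (3 / ((2*N+1:ℕ):ℝ) ^ ((1:ℝ)/3))
            = 24 / ((2*N+1:ℕ):ℝ) ^ ((1:ℝ)/3) by ring]
          exact div_le_div_of_nonneg_left (by norm_num) h3 h2
  calc ∑ k ∈ s, F k ≤ ∑ k ∈ range K, F k := hsub
    _ = _ := hsplit
    _ ≤ 48 / (N:ℝ) ^ ((1:ℝ)/3) + 24 / (N:ℝ) ^ ((1:ℝ)/3) := add_le_add hnear htail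
    _ = 72 / (N:ℝ) ^ ((1:ℝ)/3) := by ring

lemma eq_g (a : ℝ) (ha : a ≠ 0) (y : ℝ) :
    |a|⁻¹ * (a^2 + y^2)⁻¹ = |a|⁻¹ * ((a^2)⁻¹ * (1 + (y / |a|)^2)⁻¹) := by
  have h : a^2 * (1 + (y / |a|)^2) = a^2 + y^2 := by
    have h2 : |a| ≠ 0 := abs_ne_zero.2 ha
    field_simp [sq_abs]
    rw [sq_abs]
  rw [← h, mul_inv]

lemma perk (a : ℝ) (ha : a ≠ 0) :
    ∫⁻ y : ℝ, ENNReal.ofReal ((Real.sqrt (a^2 + y^2))⁻¹ ^ 3)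
      ≤ ENNReal.ofReal (π / a^2) := by
  have ha2 : (0:ℝ) < a^2 := by positivity
  have haa : (0:ℝ) < |a| := abs_pos.2 ha
  set g : ℝ → ℝ := fun y => |a|⁻¹ * (a^2 + y^2)⁻¹ with hg
  have hgint : Integrable g := by
    have h1 : Integrable (fun y : ℝ => (1 + (y / |a|)^2)⁻¹) :=
      integrable_inv_one_add_sq.comp_div (ne_of_gt haa)
    exact (((h1.const_mul ((a^2)⁻¹)).const_mul (|a|⁻¹)).congr
      (Filter.Eventually.of_forall fun y => (eq_g a ha y).symm))
  have hgnn : 0 ≤ᵐ[volume] g := Filter.Eventually.of_forall fun y => by positivity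
  have hptwise : ∀ y : ℝ, (Real.sqrt (a^2 + y^2))⁻¹ ^ 3 ≤ g y := by
    intro y
    have hs : Real.sqrt (a^2 + y^2) ^ 2 = a^2 + y^2 := Real.sq_sqrt (by positivity)
    have hsge : |a| ≤ Real.sqrt (a^2 + y^2) := by
      rw [← Real.sqrt_sq_eq_abs]
      exact Real.sqrt_le_sqrt (by nlinarith)
    have hspos : 0 < Real.sqrt (a^2 + y^2) := lt_of_lt_of_le haa hsge
    rw [hg]
    have key : (Real.sqrt (a^2 + y^2))⁻¹ ^ 3
        = (Real.sqrt (a^2 + y^2))⁻¹ * (a^2 + y^2)⁻¹ := by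
      rw [show (3:ℕ) = 2 + 1 from rfl, pow_succ, inv_pow, hs, mul_comm]
    rw [key]
    apply mul_le_mul_of_nonneg_right _ (by positivity)
    exact inv_anti₀ haa hsge
  calc ∫⁻ y : ℝ, ENNReal.ofReal ((Real.sqrt (a^2 + y^2))⁻¹ ^ 3)
      ≤ ∫⁻ y : ℝ, ENNReal.ofReal (g y) :=
        lintegral_mono fun y => ENNReal.ofReal_le_ofReal (hptwise y)
    _ = ENNReal.ofReal (∫ y : ℝ, g y) :=
        (ofReal_integral_eq_lintegral_ofReal hgint hgnn).symm
    _ ≤ ENNReal.ofReal (π / a^2) := by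
        apply ENNReal.ofReal_le_ofReal
        have : ∫ y : ℝ, g y = |a|⁻¹ * ((a^2)⁻¹ * ∫ y : ℝ, (1 + (y / |a|)^2)⁻¹) := by
          simp_rw [hg, eq_g a ha]
          rw [integral_const_mul, integral_const_mul]
        rw [this, MeasureTheory.Measure.integral_comp_div (fun x : ℝ => (1 + x^2)⁻¹) |a|,
          integral_univ_inv_one_add_sq, smul_eq_mul, abs_abs]
        apply le_of_eq
        field_simp

lemma fin_mink (f : ℕ → ℝ → ENNReal) (hf : ∀ k, Measurable (f k)) (n : ℕ) :
    (∫⁻ y, (∑ k ∈ range n, f k y) ^ (3:ℝ)) ^ ((3:ℝ)⁻¹)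
      ≤ ∑ k ∈ range n, (∫⁻ y, (f k y) ^ (3:ℝ)) ^ ((3:ℝ)⁻¹) := by
  induction n with
  | zero =>
    simp [ENNReal.zero_rpow_of_pos]
  | succ n ih =>
    simp only [Finset.sum_range_succ]
    have h1 : AEMeasurable (fun y => ∑ k ∈ range n, f k y) (volume : Measure ℝ) :=
      (Finset.measurable_sum (range n) (fun k _ => hf k)).aemeasurable
    have h2 := ENNReal.lintegral_Lp_add_le (μ := volume) h1 (hf n).aemeasurable
      (by norm_num : (1:ℝ) ≤ 3)
    rw [one_div] at h2
    calc (∫⁻ y, (∑ k ∈ range n, f k y + f n y) ^ (3:ℝ)) ^ ((3:ℝ)⁻¹)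
        ≤ (∫⁻ y, (∑ k ∈ range n, f k y) ^ (3:ℝ)) ^ ((3:ℝ)⁻¹)
          + (∫⁻ y, (f n y) ^ (3:ℝ)) ^ ((3:ℝ)⁻¹) := h2
      _ ≤ _ := add_le_add ih le_rfl

lemma mink_tsum (f : ℕ → ℝ → ENNReal) (hf : ∀ k, Measurable (f k)) :
    (∫⁻ y, (∑' k, f k y) ^ (3:ℝ)) ^ ((3:ℝ)⁻¹)
      ≤ ∑' k, (∫⁻ y, (f k y) ^ (3:ℝ)) ^ ((3:ℝ)⁻¹) := by
  have hmono : Monotone (fun n => fun y => (∑ k ∈ range n, f k y) ^ (3:ℝ)) := by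
    intro m n hmn
    intro y
    exact ENNReal.rpow_le_rpow (Finset.sum_le_sum_of_subset (Finset.range_subset_range.2 hmn))
      (by norm_num)
  have hlim : ∫⁻ y, (∑' k, f k y) ^ (3:ℝ) = ⨆ n, ∫⁻ y, (∑ k ∈ range n, f k y) ^ (3:ℝ) := by
    have hmeas : ∀ n, Measurable (fun y => (∑ k ∈ range n, f k y) ^ (3:ℝ)) := fun n =>
      ENNReal.continuous_rpow_const.measurable.comp
        (Finset.measurable_sum (range n) fun k _ => hf k)
    rw [← lintegral_iSup hmeas hmono]
    congr 1
    ext y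
    rw [ENNReal.tsum_eq_iSup_nat]
    have := (ENNReal.orderIsoRpow 3 (by norm_num)).map_iSup
      (fun n => ∑ k ∈ range n, f k y)
    simpa only [ENNReal.orderIsoRpow_apply] using this
  rw [hlim]
  have hsup : (⨆ n, ∫⁻ y, (∑ k ∈ range n, f k y) ^ (3:ℝ)) ^ ((3:ℝ)⁻¹)
      = ⨆ n, (∫⁻ y, (∑ k ∈ range n, f k y) ^ (3:ℝ)) ^ ((3:ℝ)⁻¹) := by
    have := (ENNReal.orderIsoRpow (3:ℝ)⁻¹ (by norm_num)).map_iSup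
      (fun n => ∫⁻ y, (∑ k ∈ range n, f k y) ^ (3:ℝ))
    simpa only [ENNReal.orderIsoRpow_apply] using this
  rw [hsup]
  apply iSup_le
  intro n
  exact le_trans (fin_mink f hf n) (ENNReal.sum_le_tsum _)

end Stmt6Aux

open Stmt6Aux in
theorem stmt6 :
    ∃ C : ℝ, 0 < C ∧ ∀ N : ℕ, 2 ≤ N →
      (∫ y : ℝ, A (lam N y) 1 ^ 3) ≤ C / N := by
  refine ⟨373248, by norm_num, fun N h2 => ?_⟩
  have hN2 : (2:ℝ) ≤ (N:ℝ) := by exact_mod_cast h2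
  have hN0 : (0:ℝ) < (N:ℝ) := by linarith
  have hCN : (0:ℝ) < 373248 / (N:ℝ) := by positivity
  -- notation
  set a : ℕ → ℝ := fun k => (N:ℝ)^2 + (N:ℝ) - (k:ℝ)^2 with haa
  have habs : ∀ (k : ℕ) (y : ℝ),
      ‖lam N y - (k:ℂ)^2‖ = Real.sqrt ((a k)^2 + y^2) := by
    intro k y
    have e : lam N y - (k:ℂ)^2 = ((((N:ℝ)^2 + (N:ℝ) - (k:ℝ)^2):ℝ):ℂ) + (y:ℂ)*Complex.I := by
      simp only [lam]
      push_cast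
      ring
    rw [e, Complex.norm_add_mul_I]
  have hane : ∀ k, a k ≠ 0 := by
    intro k
    have := dpos N k h2
    intro h
    rw [haa] at h
    simp only [h, abs_zero] at this
    norm_num at this
  have hA : ∀ y, A (lam N y) 1 = ∑' k : ℕ, 1 / ‖lam N y - (k:ℂ)^2‖ := by
    intro y
    simp [A, Real.rpow_one]
  have hAnn : ∀ y, 0 ≤ A (lam N y) 1 ^ 3 := by
    intro y
    have : 0 ≤ A (lam N y) 1 := by
      rw [hA]
      exact tsum_nonneg fun k => by positivity
    positivity
  set G : ℕ → ℝ → ENNReal :=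
    fun k y => ENNReal.ofReal (1 / ‖lam N y - (k:ℂ)^2‖) with hG
  have hGmeas : ∀ k, Measurable (G k) := by
    intro k
    apply ENNReal.measurable_ofReal.comp
    have hlamc : Continuous fun y : ℝ => lam N y := by
      have e : (fun y : ℝ => lam N y)
          = fun y : ℝ => ((((N:ℝ)^2 + (N:ℝ) : ℝ)):ℂ) + (y:ℂ)*Complex.I := rfl
      rw [e]
      fun_prop
    have hc : Continuous fun y : ℝ => ‖lam N y - (k:ℂ)^2‖ :=
      continuous_norm.comp (hlamc.sub continuous_const)
    simpa only [one_div, Pi.inv_def] using hc.measurable.inv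
  -- the key lintegral bound
  have hlin : ∫⁻ y : ℝ, ENNReal.ofReal (A (lam N y) 1 ^ 3)
      ≤ ENNReal.ofReal (373248 / (N:ℝ)) := by
    have step1 : ∀ y, ENNReal.ofReal (A (lam N y) 1 ^ 3) ≤ (∑' k, G k y) ^ (3:ℝ) := by
      intro y
      rw [hA y]
      have h0 : ∀ k : ℕ, 0 ≤ 1 / ‖lam N y - (k:ℂ)^2‖ := fun k => by positivity
      have hofS : ENNReal.ofReal (∑' k : ℕ, 1 / ‖lam N y - (k:ℂ)^2‖)
          ≤ ∑' k, G k y := by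
        by_cases hsum : Summable (fun k : ℕ => 1 / ‖lam N y - (k:ℂ)^2‖)
        · rw [ENNReal.ofReal_tsum_of_nonneg h0 hsum]
        · rw [tsum_eq_zero_of_not_summable hsum, ENNReal.ofReal_zero]
          exact zero_le
      calc ENNReal.ofReal ((∑' k : ℕ, 1 / ‖lam N y - (k:ℂ)^2‖) ^ 3)
          = (ENNReal.ofReal (∑' k : ℕ, 1 / ‖lam N y - (k:ℂ)^2‖)) ^ (3:ℕ) :=
            ENNReal.ofReal_pow (tsum_nonneg h0) 3
        _ = (ENNReal.ofReal (∑' k : ℕ, 1 / ‖lam N y - (k:ℂ)^2‖)) ^ ((3:ℕ):ℝ) :=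
            (ENNReal.rpow_natCast _ 3).symm
        _ ≤ (∑' k, G k y) ^ (3:ℝ) := by
            rw [show ((3:ℕ):ℝ) = (3:ℝ) by norm_num]
            exact ENNReal.rpow_le_rpow hofS (by norm_num)
    have hperk : ∀ k : ℕ, (∫⁻ y, (G k y) ^ (3:ℝ)) ^ ((3:ℝ)⁻¹)
        ≤ ENNReal.ofReal (2 / |a k| ^ ((2:ℝ)/3)) := by
      intro k
      have hGcube : ∀ y, (G k y) ^ (3:ℝ)
          = ENNReal.ofReal ((Real.sqrt ((a k)^2 + y^2))⁻¹ ^ 3) := by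
        intro y
        rw [hG]
        rw [ENNReal.ofReal_rpow_of_nonneg (by positivity) (by norm_num)]
        rw [habs k y, one_div]
        congr 1
        rw [← Real.rpow_natCast ((Real.sqrt ((a k)^2 + y^2))⁻¹) 3]
        norm_num
      have h1 : ∫⁻ y, (G k y) ^ (3:ℝ) ≤ ENNReal.ofReal (π / (a k)^2) := by
        calc ∫⁻ y, (G k y) ^ (3:ℝ)
            = ∫⁻ y, ENNReal.ofReal ((Real.sqrt ((a k)^2 + y^2))⁻¹ ^ 3) := by
              congr 1; ext y; exact hGcube y
          _ ≤ ENNReal.ofReal (π / (a k)^2) := perk (a k) (hane k)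
      calc (∫⁻ y, (G k y) ^ (3:ℝ)) ^ ((3:ℝ)⁻¹)
          ≤ (ENNReal.ofReal (π / (a k)^2)) ^ ((3:ℝ)⁻¹) :=
            ENNReal.rpow_le_rpow h1 (by norm_num)
        _ = ENNReal.ofReal ((π / (a k)^2) ^ ((3:ℝ)⁻¹)) :=
            ENNReal.ofReal_rpow_of_nonneg (by positivity) (by norm_num)
        _ ≤ ENNReal.ofReal (2 / |a k| ^ ((2:ℝ)/3)) := by
            apply ENNReal.ofReal_le_ofReal
            have hd1 : (1:ℝ) ≤ |a k| := dpos N k h2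
            have hd0 : (0:ℝ) < |a k| := by linarith
            have hsq : (a k)^2 = |a k|^2 := (sq_abs (a k)).symm
            rw [hsq, Real.div_rpow Real.pi_pos.le (by positivity)]
            have hnum : π ^ ((3:ℝ)⁻¹) ≤ 2 := by
              calc π ^ ((3:ℝ)⁻¹) ≤ (8:ℝ) ^ ((3:ℝ)⁻¹) :=
                    Real.rpow_le_rpow Real.pi_pos.le
                      (by linarith [Real.pi_le_four]) (by norm_num)
                _ = 2 := by
                    rw [show (8:ℝ) = 2^(3:ℕ) by norm_num, ← Real.rpow_natCast (2:ℝ) 3,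
                      ← Real.rpow_mul (by norm_num)]
                    norm_num
            have hden : (|a k|^2) ^ ((3:ℝ)⁻¹) = |a k| ^ ((2:ℝ)/3) := by
              rw [← Real.rpow_natCast |a k| 2, ← Real.rpow_mul hd0.le]
              norm_num
            rw [hden]
            gcongr
    calc ∫⁻ y : ℝ, ENNReal.ofReal (A (lam N y) 1 ^ 3)
        ≤ ∫⁻ y, (∑' k, G k y) ^ (3:ℝ) := lintegral_mono step1
      _ ≤ (ENNReal.ofReal (72 / (N:ℝ) ^ ((1:ℝ)/3))) ^ (3:ℝ) := by
          have hmink := mink_tsum G hGmeas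
          have hsum_bound : ∑' k, (∫⁻ y, (G k y) ^ (3:ℝ)) ^ ((3:ℝ)⁻¹)
              ≤ ENNReal.ofReal (72 / (N:ℝ) ^ ((1:ℝ)/3)) := by
            calc ∑' k, (∫⁻ y, (G k y) ^ (3:ℝ)) ^ ((3:ℝ)⁻¹)
                ≤ ∑' k, ENNReal.ofReal (2 / |a k| ^ ((2:ℝ)/3)) := ENNReal.tsum_le_tsum hperk
              _ ≤ ENNReal.ofReal (72 / (N:ℝ) ^ ((1:ℝ)/3)) := by
                  rw [ENNReal.tsum_eq_iSup_sum]
                  apply iSup_le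
                  intro s
                  rw [← ENNReal.ofReal_sum_of_nonneg (fun k _ => by positivity)]
                  exact ENNReal.ofReal_le_ofReal (by simpa [haa] using series_bound N h2 s)
          have hx : ∫⁻ y, (∑' k, G k y) ^ (3:ℝ)
              = ((∫⁻ y, (∑' k, G k y) ^ (3:ℝ)) ^ ((3:ℝ)⁻¹)) ^ (3:ℝ) := by
            rw [← ENNReal.rpow_mul]
            norm_num
          rw [hx]
          exact ENNReal.rpow_le_rpow (le_trans hmink hsum_bound) (by norm_num)
      _ = ENNReal.ofReal (373248 / (N:ℝ)) := by
          rw [ENNReal.ofReal_rpow_of_nonneg (by positivity) (by norm_num)]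
          congr 1
          have e3 : ((N:ℝ) ^ ((1:ℝ)/3)) ^ (3:ℕ) = (N:ℝ) := by
            rw [show ((1:ℝ)/3) = ((3:ℝ))⁻¹ by norm_num]
            exact cube_rt_cube _ hN0.le
          have e4 : (72 / (N:ℝ) ^ ((1:ℝ)/3)) ^ (3:ℝ)
              = ((72 / (N:ℝ) ^ ((1:ℝ)/3)) ^ (3:ℕ) : ℝ) := by
            rw [← Real.rpow_natCast (72 / (N:ℝ) ^ ((1:ℝ)/3)) 3]
            norm_num
          rw [e4, div_pow, e3]
          norm_num
  by_cases hint : Integrable (fun y : ℝ => A (lam N y) 1 ^ 3) volume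
  · rw [MeasureTheory.integral_eq_lintegral_of_nonneg_ae
      (Filter.Eventually.of_forall hAnn) hint.aestronglyMeasurable]
    exact ENNReal.toReal_le_of_le_ofReal hCN.le hlin
  · rw [MeasureTheory.integral_undef hint]
    exact hCN.le
end

section
/- For each integer N ≥ 0 let A_N = ∑_{k=0}^{N} ∑_{m=N+1}^{∞} 1/(m² − k²). Then A_N = π²/6 − (1/4) · ∑_{n=1}^{N} 1/n² for every N ≥ 0. In particular, the sequence (A_N) is strictly decreasing, A_N ≤ π²/6 for all N, and A_N → π²/8 as N → ∞. -/
open Filter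

/-- `A_N = ∑_{k=0}^{N} ∑_{m=N+1}^∞ 1/(m² − k²)`, where the inner sum is written with
`m = N + 1 + j`, `j : ℕ`. -/
noncomputable def ANseq (N : ℕ) : ℝ :=
  ∑ k ∈ Finset.range (N + 1),
    ∑' j : ℕ, 1 / (((N : ℝ) + 1 + j) ^ 2 - (k : ℝ) ^ 2)


/-- Summability of the inner series. -/
lemma AN_summable_inner (N k : ℕ) (hk : k ≤ N) :
    Summable (fun j : ℕ => 1 / (((N : ℝ) + 1 + j) ^ 2 - (k : ℝ) ^ 2)) := by
  have hbase : Summable (fun j : ℕ => 1 / ((j : ℝ) + 1) ^ 2) := by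
    have := (summable_nat_add_iff 1).2 hasSum_zeta_two.summable
    simpa [Nat.cast_add] using this
  refine hbase.of_nonneg_of_le (fun j => ?_) (fun j => ?_)
  · have hkN : (k : ℝ) ≤ N := by exact_mod_cast hk
    have hj : (0:ℝ) ≤ j := j.cast_nonneg
    have : (0:ℝ) < ((N : ℝ) + 1 + j) ^ 2 - (k : ℝ) ^ 2 := by
      nlinarith [Nat.cast_nonneg (α := ℝ) k]
    positivity
  · have hkN : (k : ℝ) ≤ N := by exact_mod_cast hk
    have hj : (0:ℝ) ≤ j := j.cast_nonneg
    have h1 : ((j:ℝ)+1)^2 ≤ ((N : ℝ) + 1 + j) ^ 2 - (k : ℝ) ^ 2 := by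
      nlinarith [Nat.cast_nonneg (α := ℝ) k]
    have h2 : (0:ℝ) < ((j:ℝ)+1)^2 := by positivity
    exact one_div_le_one_div_of_le h2 h1

lemma hasSum_telescope_real (u : ℕ → ℝ) (hmono : ∀ j, u (j + 1) ≤ u j)
    (h0 : ∀ j, 0 ≤ u j) (hlim : Tendsto u atTop (nhds 0)) :
    HasSum (fun j => u j - u (j + 1)) (u 0) := by
  have hsum : Summable (fun j => u j - u (j + 1)) := by
    refine summable_of_sum_range_le (c := u 0) (fun j => sub_nonneg.2 (hmono j))
      (fun n => ?_)
    rw [Finset.sum_range_sub']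
    linarith [h0 n]
  have h1 := hsum.hasSum.tendsto_sum_nat
  have h2 : Tendsto (fun n => ∑ j ∈ Finset.range n, (u j - u (j + 1))) atTop
      (nhds (u 0)) := by
    simp_rw [Finset.sum_range_sub']
    simpa using tendsto_const_nhds.sub hlim
  have := hsum.hasSum
  rwa [tendsto_nhds_unique h1 h2] at this

/-- single telescoping sum : ∑' j, (1/(j+1+i) - 1/(j+2+i)) = 1/(1+i) -/
lemma hasSum_tele_shift (i : ℕ) :
    HasSum (fun j : ℕ => 1 / ((j : ℝ) + 1 + i) - 1 / ((j : ℝ) + 2 + i))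
      (1 / (1 + (i : ℝ))) := by
  have h := hasSum_telescope_real (fun j => 1 / ((j : ℝ) + 1 + i))
    (fun j => by
      have : ((j:ℝ) + 1 + i) ≤ (((j+1 : ℕ):ℝ) + 1 + i) := by push_cast; linarith
      exact one_div_le_one_div_of_le (by positivity) this)
    (fun j => by positivity)
    (by
      have h1 : Tendsto (fun j : ℕ => ((j : ℝ) + 1 + i)) atTop atTop := by
        have := tendsto_natCast_atTop_atTop (R := ℝ)
        exact tendsto_atTop_add_const_right _ _ (tendsto_atTop_add_const_right _ _ this)
      exact h1.inv_tendsto_atTop.congr (fun j => by simp [one_div]))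
  convert h using 2 with j
  · push_cast; ring_nf
  · norm_num [add_comm]
/-- RS: the tail sum for k = n. -/
lemma AN_RS (n : ℕ) (hn : 1 ≤ n) :
    ∑' j : ℕ, 1 / (((n : ℝ) + 1 + j) ^ 2 - (n : ℝ) ^ 2)
      = (1 / (2 * n)) * ∑ i ∈ Finset.range (2 * n), 1 / ((i : ℝ) + 1) := by
  have hn' : (1:ℝ) ≤ n := by exact_mod_cast hn
  have key : ∀ j : ℕ, 1 / (((n : ℝ) + 1 + j) ^ 2 - (n : ℝ) ^ 2)
      = ∑ i ∈ Finset.range (2 * n),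
          (1 / (2 * (n:ℝ))) * (1 / ((j : ℝ) + 1 + i) - 1 / ((j : ℝ) + 2 + i)) := by
    intro j
    rw [← Finset.mul_sum]
    have htel : ∑ i ∈ Finset.range (2 * n),
        ((1 : ℝ) / ((j : ℝ) + 1 + i) - 1 / ((j : ℝ) + 2 + i))
        = 1 / ((j:ℝ) + 1) - 1 / ((j:ℝ) + 1 + 2 * n) := by
      calc ∑ i ∈ Finset.range (2 * n),
            ((1 : ℝ) / ((j : ℝ) + 1 + i) - 1 / ((j : ℝ) + 2 + i))
          = ∑ i ∈ Finset.range (2 * n),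
            ((1 : ℝ) / ((j : ℝ) + 1 + i) - 1 / ((j : ℝ) + 1 + ((i+1 : ℕ):ℝ))) := by
            refine Finset.sum_congr rfl (fun i _ => by push_cast; ring_nf)
        _ = 1 / ((j:ℝ) + 1 + ((0:ℕ):ℝ)) - 1 / ((j:ℝ) + 1 + ((2*n : ℕ):ℝ)) :=
            Finset.sum_range_sub' (fun i : ℕ => (1:ℝ) / ((j : ℝ) + 1 + i)) (2 * n)
        _ = 1 / ((j:ℝ) + 1) - 1 / ((j:ℝ) + 1 + 2 * n) := by push_cast; ring_nf
    rw [htel]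
    have h1 : ((j:ℝ) + 1) > 0 := by positivity
    have h2 : ((j:ℝ) + 1 + 2 * n) > 0 := by positivity
    have h3 : ((n : ℝ) + 1 + j) ^ 2 - (n : ℝ) ^ 2 = ((j:ℝ)+1) * ((j:ℝ)+1+2*n) := by ring
    rw [h3]
    field_simp
    ring
  calc ∑' j : ℕ, 1 / (((n : ℝ) + 1 + j) ^ 2 - (n : ℝ) ^ 2)
      = ∑' j : ℕ, ∑ i ∈ Finset.range (2 * n),
          (1 / (2 * (n:ℝ))) * (1 / ((j : ℝ) + 1 + i) - 1 / ((j : ℝ) + 2 + i)) := by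
        exact tsum_congr key
    _ = ∑ i ∈ Finset.range (2 * n), ∑' j : ℕ,
          (1 / (2 * (n:ℝ))) * (1 / ((j : ℝ) + 1 + i) - 1 / ((j : ℝ) + 2 + i)) := by
        refine Summable.tsum_finsetSum (fun i _ => ?_)
        exact ((hasSum_tele_shift i).summable).mul_left _
    _ = ∑ i ∈ Finset.range (2 * n), (1 / (2 * (n:ℝ))) * (1 / (1 + (i:ℝ))) := by
        refine Finset.sum_congr rfl (fun i _ => ?_)
        rw [tsum_mul_left, (hasSum_tele_shift i).tsum_eq]
    _ = (1 / (2 * n)) * ∑ i ∈ Finset.range (2 * n), 1 / ((i : ℝ) + 1) := by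
        rw [Finset.mul_sum]
        exact Finset.sum_congr rfl (fun i _ => by rw [add_comm (1:ℝ) i])

/-- LS: the finite sum ∑_{k<n} 1/(n²-k²). -/
lemma AN_LS (n : ℕ) (hn : 1 ≤ n) :
    ∑ k ∈ Finset.range n, 1 / ((n : ℝ) ^ 2 - (k : ℝ) ^ 2)
      = (1 / (2 * n)) * (∑ i ∈ Finset.range (2 * n), 1 / ((i : ℝ) + 1))
        + 1 / (4 * (n : ℝ) ^ 2) := by
  have hn' : (1:ℝ) ≤ n := by exact_mod_cast hn
  -- split each term into partial fractions
  have key : ∀ k ∈ Finset.range n, 1 / ((n : ℝ) ^ 2 - (k : ℝ) ^ 2)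
      = (1 / (2 * (n:ℝ))) * (1 / ((n:ℝ) - k) + 1 / ((n:ℝ) + k)) := by
    intro k hk
    have hk' : (k:ℝ) < n := by exact_mod_cast Finset.mem_range.1 hk
    have h1 : (0:ℝ) < (n:ℝ) - k := by linarith
    have h2 : (0:ℝ) < (n:ℝ) + k := by positivity
    have h3 : (n:ℝ)^2 - (k:ℝ)^2 = ((n:ℝ)-k)*((n:ℝ)+k) := by ring
    rw [h3]
    field_simp
    ring
  rw [Finset.sum_congr rfl key, ← Finset.mul_sum, Finset.sum_add_distrib]
  -- first sum: ∑_{k<n} 1/(n-k) = H n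
  have hA : ∑ k ∈ Finset.range n, (1:ℝ) / ((n:ℝ) - k)
      = ∑ i ∈ Finset.range n, 1 / ((i : ℝ) + 1) := by
    rw [← Finset.sum_range_reflect (fun i => (1:ℝ) / ((i : ℝ) + 1)) n]
    refine Finset.sum_congr rfl (fun k hk => ?_)
    have hk' := Finset.mem_range.1 hk
    have : ((n - 1 - k : ℕ) : ℝ) = (n:ℝ) - 1 - k := by
      have : k ≤ n - 1 := by omega
      push_cast [Nat.cast_sub (by omega : 1 ≤ n), Nat.cast_sub this]
      ring
    rw [this]; ring_nf
  -- second sum: ∑_{k<n} 1/(n+k) = ∑_{k<n} 1/(n+k+1) + 1/n - 1/(2n)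
  have hB : ∑ k ∈ Finset.range n, (1:ℝ) / ((n:ℝ) + k)
      = ∑ k ∈ Finset.range n, 1 / ((n:ℝ) + k + 1) + 1 / n - 1 / (2 * n) := by
    have := Finset.sum_range_sub' (fun k : ℕ => (1:ℝ) / ((n:ℝ) + k)) n
    simp only [Nat.cast_zero, add_zero] at this
    have hsplit : ∑ k ∈ Finset.range n,
        ((1:ℝ) / ((n:ℝ) + k) - 1 / ((n:ℝ) + (k+1:ℕ))) = 1 / n - 1 / ((n:ℝ) + n) := by
      rw [Finset.sum_sub_distrib] at this ⊢
      convert this using 2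
    rw [Finset.sum_sub_distrib] at hsplit
    have : ∑ k ∈ Finset.range n, (1:ℝ) / ((n:ℝ) + (k+1:ℕ))
        = ∑ k ∈ Finset.range n, 1 / ((n:ℝ) + k + 1) := by
      refine Finset.sum_congr rfl (fun k _ => ?_); push_cast; ring_nf
    rw [this] at hsplit
    have h2n : (n:ℝ) + n = 2 * n := by ring
    rw [h2n] at hsplit
    linarith
  -- H(2n) = ∑_{i<n} 1/(i+1) + ∑_{k<n} 1/(n+k+1)
  have hH : ∑ i ∈ Finset.range (2 * n), (1:ℝ) / ((i : ℝ) + 1)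
      = ∑ i ∈ Finset.range n, 1 / ((i : ℝ) + 1)
        + ∑ k ∈ Finset.range n, 1 / ((n:ℝ) + k + 1) := by
    rw [two_mul, Finset.sum_range_add]
    congr 1
    refine Finset.sum_congr rfl (fun k _ => ?_); push_cast; ring_nf
  rw [hA, hB, hH]
  have hnne : (n:ℝ) ≠ 0 := by positivity
  field_simp
  ring
lemma AN_step (N : ℕ) : ANseq (N + 1) = ANseq N - 1 / (4 * ((N : ℝ) + 1) ^ 2) := by
  have hshift : ∀ k : ℕ, k ≤ N →
      ∑' j : ℕ, 1 / ((((N+1 : ℕ) : ℝ) + 1 + j) ^ 2 - (k : ℝ) ^ 2)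
        = ∑' j : ℕ, 1 / (((N : ℝ) + 1 + j) ^ 2 - (k : ℝ) ^ 2)
          - 1 / (((N : ℝ) + 1) ^ 2 - (k : ℝ) ^ 2) := by
    intro k hk
    have h := Summable.tsum_eq_zero_add (AN_summable_inner N k hk)
    have h2 : ∑' j : ℕ, 1 / (((N : ℝ) + 1 + ((j + 1 : ℕ) : ℝ)) ^ 2 - (k : ℝ) ^ 2)
        = ∑' j : ℕ, 1 / ((((N+1 : ℕ) : ℝ) + 1 + j) ^ 2 - (k : ℝ) ^ 2) := by
      refine tsum_congr (fun j => ?_); push_cast; ring_nf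
    rw [h2] at h
    simp only [Nat.cast_zero, add_zero] at h
    linarith
  have hsplit : ANseq (N + 1)
      = ∑ k ∈ Finset.range (N + 1),
          ∑' j : ℕ, 1 / ((((N+1 : ℕ) : ℝ) + 1 + j) ^ 2 - (k : ℝ) ^ 2)
        + ∑' j : ℕ, 1 / ((((N+1 : ℕ) : ℝ) + 1 + j) ^ 2 - (((N+1 : ℕ) : ℝ)) ^ 2) := by
    rw [ANseq, Finset.sum_range_succ]
  rw [hsplit, Finset.sum_congr rfl (fun k hk => hshift k (Nat.lt_succ_iff.1 (Finset.mem_range.1 hk))),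
    Finset.sum_sub_distrib]
  have hRS := AN_RS (N + 1) (Nat.le_add_left 1 N)
  have hLS := AN_LS (N + 1) (Nat.le_add_left 1 N)
  have hcast : ((N + 1 : ℕ) : ℝ) = (N : ℝ) + 1 := by push_cast; ring
  have hLS' : ∑ k ∈ Finset.range (N + 1), 1 / (((N : ℝ) + 1) ^ 2 - (k : ℝ) ^ 2)
      = (1 / (2 * ((N:ℝ)+1))) * (∑ i ∈ Finset.range (2 * (N+1)), 1 / ((i : ℝ) + 1))
        + 1 / (4 * ((N : ℝ)+1) ^ 2) := by
    rw [← hcast]; exact hLS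
  rw [hLS', hRS, hcast, ANseq]
  ring

lemma AN_base : ANseq 0 = Real.pi ^ 2 / 6 := by
  have h : HasSum (fun n : ℕ => (1:ℝ) / ((n:ℝ) + 1) ^ 2) (Real.pi ^ 2 / 6) := by
    have := (hasSum_nat_add_iff (f := fun n : ℕ => (1:ℝ) / (n:ℝ) ^ 2) 1).2
      (by simpa using hasSum_zeta_two)
    simpa [Nat.cast_add] using this
  rw [ANseq]
  simp only [show (0:ℕ)+1 = 1 from rfl, Finset.range_one, Finset.sum_singleton,
    Nat.cast_zero]
  rw [← h.tsum_eq]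
  apply tsum_congr
  intro j
  ring_nf

lemma AN_formula (N : ℕ) : ANseq N =
    Real.pi ^ 2 / 6 - (1 / 4) * ∑ n ∈ Finset.Icc 1 N, (1 : ℝ) / (n : ℝ) ^ 2 := by
  induction N with
  | zero => simp [AN_base]
  | succ N ih =>
      rw [AN_step, ih, Finset.sum_Icc_succ_top (by omega)]
      have hne : ((N:ℝ)+1) ≠ 0 := by positivity
      push_cast
      field_simp
      ring

theorem stmt7 :
    (∀ N : ℕ, ANseq N =
      Real.pi ^ 2 / 6 - (1 / 4) * ∑ n ∈ Finset.Icc 1 N, (1 : ℝ) / (n : ℝ) ^ 2) ∧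
    StrictAnti ANseq ∧
    (∀ N : ℕ, ANseq N ≤ Real.pi ^ 2 / 6) ∧
    Tendsto ANseq atTop (nhds (Real.pi ^ 2 / 8)) := by
  refine ⟨AN_formula, ?_, ?_, ?_⟩
  · refine strictAnti_nat_of_succ_lt (fun n => ?_)
    rw [AN_step]
    have : (0:ℝ) < 1 / (4 * ((n : ℝ) + 1) ^ 2) := by positivity
    linarith
  · intro N
    rw [AN_formula]
    have : (0:ℝ) ≤ ∑ n ∈ Finset.Icc 1 N, (1 : ℝ) / (n : ℝ) ^ 2 :=
      Finset.sum_nonneg (fun n _ => by positivity)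
    linarith
  · have hIcc : ∀ N : ℕ, ∑ n ∈ Finset.Icc 1 N, (1 : ℝ) / (n : ℝ) ^ 2
        = ∑ n ∈ Finset.range (N + 1), (1 : ℝ) / (n : ℝ) ^ 2 := by
      intro N
      rw [← Finset.Ico_add_one_right_eq_Icc, Finset.sum_Ico_eq_sum_range,
        Finset.sum_range_succ']
      simp [add_comm]
    have hS : Tendsto (fun N : ℕ => ∑ n ∈ Finset.Icc 1 N, (1:ℝ)/(n:ℝ)^2) atTop
        (nhds (Real.pi ^ 2 / 6)) := by
      simp_rw [hIcc]
      exact hasSum_zeta_two.tendsto_sum_nat.comp (tendsto_add_atTop_nat 1)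
    have hT : Tendsto (fun N : ℕ => Real.pi ^ 2 / 6
          - (1/4) * ∑ n ∈ Finset.Icc 1 N, (1:ℝ)/(n:ℝ)^2) atTop
        (nhds (Real.pi ^ 2 / 6 - (1/4) * (Real.pi ^ 2 / 6))) :=
      tendsto_const_nhds.sub (hS.const_mul _)
    have hfun : ANseq = fun N : ℕ => Real.pi ^ 2 / 6
        - (1/4) * ∑ n ∈ Finset.Icc 1 N, (1:ℝ)/(n:ℝ)^2 := funext AN_formula
    have heq : Real.pi ^ 2 / 6 - (1/4) * (Real.pi ^ 2 / 6) = Real.pi ^ 2 / 8 := by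
      ring
    rw [hfun, ← heq]
    exact hT
end

section
/- For all integers H, N with 0 < H < N, the sum σ(N, H) = ∑ 1/(m² − k²), taken over all pairs of integers (k, m) with 0 ≤ k ≤ N, m ≥ N + 1, and m − k ≤ H, satisfies σ(N, H) ≤ H/N. -/
theorem stmt8 (H N : ℕ) (hH : 0 < H) (hHN : H < N) :
    ∑ k ∈ Finset.range (N + 1), ∑ m ∈ Finset.Icc (N + 1) (k + H),
        (1 : ℝ) / ((m : ℝ) ^ 2 - (k : ℝ) ^ 2) ≤ (H : ℝ) / N := by
  have hN0 : (0:ℝ) < N := by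
    have : 0 < N := lt_trans hH hHN
    exact_mod_cast this
  have step1 : ∀ k ∈ Finset.range (N + 1),
      ∑ m ∈ Finset.Icc (N + 1) (k + H), (1 : ℝ) / ((m : ℝ) ^ 2 - (k : ℝ) ^ 2)
      = ∑ d ∈ Finset.Icc (N + 1 - k) H,
          (1 : ℝ) / (((k + d : ℕ) : ℝ) ^ 2 - (k : ℝ) ^ 2) := by
    intro k hk
    have hk' : k ≤ N + 1 := by
      simp only [Finset.mem_range] at hk; omega
    have : Finset.Icc (N + 1) (k + H)
        = (Finset.Icc (N + 1 - k) H).map (addLeftEmbedding k) := by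
      rw [Finset.map_add_left_Icc]
      congr 1
      omega
    rw [this, Finset.sum_map]
    rfl
  rw [Finset.sum_congr rfl step1]
  rw [Finset.sum_comm' (t' := Finset.Icc 1 H) (s' := fun d => Finset.Icc (N + 1 - d) N)
    (by intro x y; simp only [Finset.mem_range, Finset.mem_Icc, Nat.lt_succ_iff]; omega)]
  have step2 : ∀ d ∈ Finset.Icc 1 H,
      ∑ k ∈ Finset.Icc (N + 1 - d) N,
        (1 : ℝ) / (((k + d : ℕ) : ℝ) ^ 2 - (k : ℝ) ^ 2) ≤ 1 / N := by
    intro d hd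
    simp only [Finset.mem_Icc] at hd
    have hcard : (Finset.Icc (N + 1 - d) N).card = d := by
      rw [Nat.card_Icc]; omega
    calc ∑ k ∈ Finset.Icc (N + 1 - d) N,
          (1 : ℝ) / (((k + d : ℕ) : ℝ) ^ 2 - (k : ℝ) ^ 2)
        ≤ ∑ k ∈ Finset.Icc (N + 1 - d) N, (1 : ℝ) / ((d : ℝ) * N) := by
          apply Finset.sum_le_sum
          intro k hk
          simp only [Finset.mem_Icc] at hk
          have hkd : N + 1 ≤ k + d := by omega
          have hkd' : ((N : ℝ) + 1) ≤ (k : ℝ) + d := by exact_mod_cast hkd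
          have hd1 : (1:ℝ) ≤ d := by exact_mod_cast hd.1
          have heq : (((k + d : ℕ) : ℝ)) ^ 2 - (k : ℝ) ^ 2
              = (d : ℝ) * (2 * k + d) := by push_cast; ring
          rw [heq]
          apply one_div_le_one_div_of_le
          · positivity
          · have hk0 : (0:ℝ) ≤ k := by positivity
            nlinarith
      _ = (d : ℝ) * (1 / ((d : ℝ) * N)) := by
          rw [Finset.sum_const, hcard, nsmul_eq_mul]
      _ ≤ 1 / N := by
          have hd0 : (0:ℝ) < d := by exact_mod_cast hd.1
          rw [one_div, mul_inv, ← mul_assoc, mul_inv_cancel₀ hd0.ne', one_mul, one_div]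
  calc ∑ d ∈ Finset.Icc 1 H, ∑ k ∈ Finset.Icc (N + 1 - d) N,
        (1 : ℝ) / (((k + d : ℕ) : ℝ) ^ 2 - (k : ℝ) ^ 2)
      ≤ ∑ d ∈ Finset.Icc 1 H, (1 : ℝ) / N := Finset.sum_le_sum step2
    _ = (H : ℝ) / N := by
        rw [Finset.sum_const, Nat.card_Icc, nsmul_eq_mul]
        push_cast
        ring
end
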